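/- arXiv:1909.10032 — 5 statements merged into one kernel-verified Lean document; each statement's English description precedes it below -/
import Mathlib

section
/- Let V : ℕ × ℤ → ℂ be a function defined for pairs (u,v) with u ≥ 3, satisfying: (i) V(u,v) = 2i·V(u-1,v) + (2i)^(u-1) for u ≥ 4 and v even; (ii) V(u,v) = 2i·V(u-1,v) − (2i)^(u-1) for u ≥ 4 and v odd; (iii) V(u,v) = V(u,v-2) − (2i)^(u+1) for v even; (iv) V(u,v) = V(u,v-2) + (2i)^(u+1) for v odd; (v) V(3,-1) = 4 and V(3,0) = -12. Then V(u,v) = (-1)^v · (2i)^(u-1) · (u + 2v) for all u ≥ 3 and v ∈ ℤ. -/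
open Complex

/-- The recurrences for the values `V_{u,v}` of the Jones polynomials of the links
`L_{u,v}` at `t^{1/2} = -i` determine `V(u,v) = (-1)^v (2i)^(u-1) (u+2v)` for all `u ≥ 3`. -/
theorem stmt2 (V : ℕ × ℤ → ℂ)
    (h1 : ∀ (u : ℕ) (v : ℤ), 4 ≤ u → Even v →
      V (u, v) = 2 * I * V (u - 1, v) + (2 * I) ^ (u - 1))
    (h2 : ∀ (u : ℕ) (v : ℤ), 4 ≤ u → Odd v →
      V (u, v) = 2 * I * V (u - 1, v) - (2 * I) ^ (u - 1))
    (h3 : ∀ (u : ℕ) (v : ℤ), 3 ≤ u → Even v →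
      V (u, v) = V (u, v - 2) - (2 * I) ^ (u + 1))
    (h4 : ∀ (u : ℕ) (v : ℤ), 3 ≤ u → Odd v →
      V (u, v) = V (u, v - 2) + (2 * I) ^ (u + 1))
    (h5 : V (3, -1) = 4) (h6 : V (3, 0) = -12) :
    ∀ (u : ℕ) (v : ℤ), 3 ≤ u →
      V (u, v) = (-1 : ℂ) ^ v * (2 * I) ^ (u - 1) * ((u : ℂ) + 2 * (v : ℂ)) := by
  have hI4 : (2 * I : ℂ) ^ 4 = 16 := by norm_num [mul_pow, Complex.I_pow_four]
  have hI2 : (2 * I : ℂ) ^ 2 = -4 := by norm_num [mul_pow, Complex.I_sq]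
  have key3 : ∀ v : ℤ, V (3, v) = (-1:ℂ)^v * (2*I)^2 * (3 + 2*v) := by
    have main : ∀ n : ℤ, (V (3, n) = (-1:ℂ)^n * (2*I)^2 * (3 + 2*n)) ∧
        (V (3, n+1) = (-1:ℂ)^(n+1) * (2*I)^2 * (3 + 2*(n+1))) := by
      intro n
      induction n using Int.induction_on with
      | zero =>
        constructor
        · rw [h6]; norm_num [hI2]
        · have h := h4 3 1 (by norm_num) ⟨0, by ring⟩
          norm_num at h
          rw [show ((0:ℤ)+1) = 1 by ring, h, h5, hI4]
          norm_num [hI2]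
      | succ n ih =>
        obtain ⟨ih1, ih2⟩ := ih
        constructor
        · exact_mod_cast ih2
        · have e22 : ((n:ℤ) + 1 + 1 - 2) = (n:ℤ) := by ring
          rcases Int.even_or_odd (n:ℤ) with he | ho
          · have he2 : Even ((n:ℤ) + 1 + 1) := by
              rcases he with ⟨k, hk⟩; exact ⟨k+1, by omega⟩
            have h := h3 3 ((n:ℤ)+1+1) (by norm_num) he2
            rw [e22] at h
            rw [h, ih1, he.neg_one_zpow, he2.neg_one_zpow, hI2, hI4]
            push_cast; ring
          · have ho2 : Odd ((n:ℤ) + 1 + 1) := by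
              rcases ho with ⟨k, hk⟩; exact ⟨k+1, by omega⟩
            have h := h4 3 ((n:ℤ)+1+1) (by norm_num) ho2
            rw [e22] at h
            rw [h, ih1, ho.neg_one_zpow, ho2.neg_one_zpow, hI2, hI4]
            push_cast; ring
      | pred n ih =>
        obtain ⟨ih1, ih2⟩ := ih
        rw [show (-(n:ℤ) - 1 + 1) = -(n:ℤ) by ring]
        constructor
        · have e22 : (-(n:ℤ) + 1 - 2) = -(n:ℤ) - 1 := by ring
          rcases Int.even_or_odd (-(n:ℤ) + 1) with he | ho
          · have he2 : Even (-(n:ℤ) - 1) := by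
              rcases he with ⟨k, hk⟩; exact ⟨k-1, by omega⟩
            have h := h3 3 (-(n:ℤ)+1) (by norm_num) he
            rw [e22] at h
            have h' : V (3, -(n:ℤ) - 1) = V (3, -(n:ℤ)+1) + (2*I)^4 := by
              rw [h]; ring
            rw [h', ih2, he.neg_one_zpow, he2.neg_one_zpow, hI2, hI4]
            push_cast; ring
          · have ho2 : Odd (-(n:ℤ) - 1) := by
              rcases ho with ⟨k, hk⟩; exact ⟨k-1, by omega⟩
            have h := h4 3 (-(n:ℤ)+1) (by norm_num) ho
            rw [e22] at h
            have h' : V (3, -(n:ℤ) - 1) = V (3, -(n:ℤ)+1) - (2*I)^4 := by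
              rw [h]; ring
            rw [h', ih2, ho.neg_one_zpow, ho2.neg_one_zpow, hI2, hI4]
            push_cast; ring
        · push_cast at ih1 ⊢; linear_combination ih1
    intro v
    exact (main v).1
  have main : ∀ u : ℕ, 3 ≤ u → ∀ v : ℤ,
      V (u, v) = (-1 : ℂ) ^ v * (2 * I) ^ (u - 1) * ((u : ℂ) + 2 * (v : ℂ)) := by
    intro u hu
    induction u, hu using Nat.le_induction with
    | base => intro v; rw [key3 v]; norm_num
    | succ u hu ih =>
      intro v
      have hp : (2*I:ℂ)^u = (2*I)^(u-1) * (2*I) := by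
        rw [← pow_succ, Nat.sub_add_cancel (by omega)]
      rcases Int.even_or_odd v with he | ho
      · have h := h1 (u+1) v (by omega) he
        simp only [Nat.add_sub_cancel] at h ⊢
        rw [h, ih v, he.neg_one_zpow, hp]
        push_cast; ring
      · have h := h2 (u+1) v (by omega) ho
        simp only [Nat.add_sub_cancel] at h ⊢
        rw [h, ih v, ho.neg_one_zpow, hp]
        push_cast; ring
  exact fun u v hu => main u hu v
end

section
/- Let m ≥ 1 and let G be the group presented by generators g_1, …, g_m subject to the relations [g_i, g_{i+1}] = 1 for i = 1, …, m−1. Then for each i, the centralizer of g_i in G equals the subgroup generated by {g_{i-1}, g_i, g_{i+1}} ∩ {g_1,…,g_m} (i.e., by g_{i-1}, g_i, g_{i+1}, omitting indices out of range). -/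
/-- The commutation relations `[g_i, g_{i+1}] = 1` (as elements of the free group on `Fin m`)
presenting the right-angled Artin group on the path graph with `m` vertices. -/
def pathRels (m : ℕ) : Set (FreeGroup (Fin m)) :=
  {r | ∃ i j : Fin m, (i : ℕ) + 1 = (j : ℕ) ∧
    r = FreeGroup.of i * FreeGroup.of j * (FreeGroup.of i)⁻¹ * (FreeGroup.of j)⁻¹}

/-- The group `⟨g_1, …, g_m ∣ [g_i, g_{i+1}] = 1⟩`. -/
abbrev PathGroup (m : ℕ) := PresentedGroup (pathRels m)

/-- The generator `g_i` of `PathGroup m`. -/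
def pathGen (m : ℕ) (i : Fin m) : PathGroup m := PresentedGroup.of i

namespace PathAux

/-- Adjacent generators commute. -/
theorem pathGen_comm (m : ℕ) {i j : Fin m} (h : (i : ℕ) + 1 = (j : ℕ)) :
    Commute (pathGen m i) (pathGen m j) := by
  have hrel : (FreeGroup.of i * FreeGroup.of j * (FreeGroup.of i)⁻¹ * (FreeGroup.of j)⁻¹ :
      FreeGroup (Fin m)) ∈ Subgroup.normalClosure (pathRels m) :=
    Subgroup.subset_normalClosure ⟨i, j, h, rfl⟩
  rw [← QuotientGroup.eq_one_iff] at hrel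
  change ((PresentedGroup.mk (pathRels m))
      (FreeGroup.of i * FreeGroup.of j * (FreeGroup.of i)⁻¹ * (FreeGroup.of j)⁻¹) = 1) at hrel
  simp only [map_mul, map_inv] at hrel
  have h2 := mul_inv_eq_one.mp hrel
  have h3 := mul_inv_eq_iff_eq_mul.mp h2
  exact h3

/-- lifting relations to a group where the images of adjacent generators commute. -/
theorem lift_rels {m : ℕ} {G : Type*} [Group G] {f : Fin m → G}
    (hf : ∀ i j : Fin m, (i : ℕ) + 1 = (j : ℕ) → Commute (f i) (f j)) :
    ∀ r ∈ pathRels m, FreeGroup.lift f r = 1 := by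
  rintro r ⟨i, j, hij, rfl⟩
  simp only [map_mul, map_inv, FreeGroup.lift_apply_of]
  rw [(hf i j hij).eq]
  group

@[simp] theorem toGroup_pathGen {m : ℕ} {G : Type*} [Group G] {f : Fin m → G}
    (h : ∀ r ∈ pathRels m, FreeGroup.lift f r = 1) (i : Fin m) :
    PresentedGroup.toGroup h (pathGen m i) = f i :=
  PresentedGroup.toGroup.of h

/-- The exponent-sum homomorphism at index `j`. -/
def expHom (m : ℕ) (j : Fin m) : PathGroup m →* Multiplicative ℤ :=
  PresentedGroup.toGroup (f := fun k => Multiplicative.ofAdd (if k = j then (1:ℤ) else 0))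
    (lift_rels (fun _ _ _ => Commute.all _ _))

@[simp] theorem expHom_pathGen (m : ℕ) (j k : Fin m) :
    expHom m j (pathGen m k) = Multiplicative.ofAdd (if k = j then (1:ℤ) else 0) :=
  PresentedGroup.toGroup.of _

theorem expHom_conj (m : ℕ) (j : Fin m) (g : PathGroup m) (x : PathGroup m) :
    expHom m j (g⁻¹ * x * g) = expHom m j x := by
  simp only [map_mul, map_inv]
  rw [mul_comm (((expHom m j) g)⁻¹) ((expHom m j) x), mul_assoc]
  simp

end PathAux


namespace AmalgAux

open Monoid Monoid.PushoutI Subgroup Function List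

variable {ι : Type*} {G : ι → Type*} [∀ i, Group (G i)] {H : Type*} [Group H]
  {φ : ∀ i, H →* G i}

/-- Product of a list of letters in the pushout. -/
def wprod (φ : ∀ i, H →* G i) (l : List (Σ i, G i)) : PushoutI φ :=
  (l.map fun a => of (φ := φ) a.1 a.2).prod

@[simp] theorem wprod_nil : wprod φ [] = 1 := rfl

@[simp] theorem wprod_cons (a : Σ i, G i) (l : List (Σ i, G i)) :
    wprod φ (a :: l) = of a.1 a.2 * wprod φ l := by
  simp [wprod]

theorem wprod_cons' (i : ι) (g : G i) (l : List (Σ i, G i)) :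
    wprod φ (⟨i, g⟩ :: l) = of i g * wprod φ l := by
  simp [wprod]

theorem wprod_append (l₁ l₂ : List (Σ i, G i)) :
    wprod φ (l₁ ++ l₂) = wprod φ l₁ * wprod φ l₂ := by
  simp [wprod]

/-- Inverse of a list of letters. -/
def revinv (l : List (Σ i, G i)) : List (Σ i, G i) :=
  (l.reverse).map fun a => ⟨a.1, a.2⁻¹⟩

@[simp] theorem revinv_nil : revinv ([] : List (Σ i, G i)) = [] := rfl

theorem revinv_cons (a : Σ i, G i) (l : List (Σ i, G i)) :
    revinv (a :: l) = revinv l ++ [⟨a.1, a.2⁻¹⟩] := by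
  simp [revinv]

theorem wprod_revinv (l : List (Σ i, G i)) :
    wprod φ (revinv l) = (wprod φ l)⁻¹ := by
  induction l with
  | nil => simp
  | cons a l ih =>
    rw [revinv_cons, wprod_append, wprod_cons, ih, wprod_cons]
    simp [mul_assoc]

theorem mem_revinv {a : Σ i, G i} {l : List (Σ i, G i)} :
    a ∈ revinv l ↔ ∃ b ∈ l, a = ⟨b.1, b.2⁻¹⟩ := by
  simp only [revinv, List.mem_map, List.mem_reverse]
  aesop

theorem chain'_revinv {l : List (Σ i, G i)}
    (h : l.Chain' fun a b => a.1 ≠ b.1) :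
    (revinv l).Chain' fun a b => a.1 ≠ b.1 := by
  rw [revinv, List.Chain', List.isChain_map, List.isChain_reverse]
  exact List.IsChain.imp (fun a b hab => Ne.symm hab) h

theorem head?_revinv_fst {l : List (Σ i, G i)} :
    ((revinv l).getLast?).map Sigma.fst = (l.head?).map Sigma.fst := by
  rw [revinv, List.getLast?_map, List.getLast?_reverse]
  cases l.head? <;> rfl

theorem ofCoprodI_wordProd (W : CoprodI.Word G) :
    ofCoprodI (φ := φ) W.prod = wprod φ W.toList := by
  rw [CoprodI.Word.prod, map_list_prod, wprod, List.map_map]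
  rfl

theorem one_mem_range (i : ι) : (1 : G i) ∈ (φ i).range := ⟨1, map_one _⟩

/-- The sandwich word `(revinv t) ++ ⟨i, g⟩ :: t`. -/
def sandwichWord (i : ι) (g : G i) (hg : g ≠ 1) (t : List (Σ i, G i))
    (hne : ∀ l ∈ t, l.2 ≠ 1) (hch : t.Chain' fun a b => a.1 ≠ b.1)
    (hhd : ∀ a ∈ t.head?, a.1 ≠ i) : CoprodI.Word G where
  toList := revinv t ++ ⟨i, g⟩ :: t
  ne_one := by
    intro l hl
    rcases List.mem_append.1 hl with h | h
    · rcases mem_revinv.1 h with ⟨b, hb, rfl⟩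
      simpa using hne b hb
    · rcases List.mem_cons.1 h with rfl | h
      · exact hg
      · exact hne l h
  chain_ne := by
    rw [List.isChain_append]
    refine ⟨chain'_revinv hch, ?_, ?_⟩
    · rw [List.isChain_cons]
      exact ⟨fun a ha => (hhd a ha).symm, hch⟩
    · intro x hx y hy
      simp only [List.head?_cons, Option.mem_def, Option.some.injEq] at hy
      subst hy
      rw [Option.mem_def] at hx
      have h2 : ((revinv t).getLast?).map Sigma.fst = some x.1 := by rw [hx]; rfl
      rw [head?_revinv_fst] at h2
      match ht : t.head? with
      | none => rw [ht] at h2; exact absurd h2 (by simp)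
      | some a =>
        rw [ht] at h2
        have : a.1 = x.1 := by simpa using h2
        exact this ▸ hhd a (by rw [ht]; rfl)

@[simp] theorem sandwichWord_toList (i : ι) (g : G i) (hg : g ≠ 1) (t : List (Σ i, G i))
    (hne : ∀ l ∈ t, l.2 ≠ 1) (hch : t.Chain' fun a b => a.1 ≠ b.1)
    (hhd : ∀ a ∈ t.head?, a.1 ≠ i) :
    (sandwichWord i g hg t hne hch hhd).toList = revinv t ++ ⟨i, g⟩ :: t := rfl

theorem normalWord_reduced (hφ : ∀ i, Injective (φ i)) (d : NormalWord.Transversal φ)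
    (w : NormalWord d) : Reduced φ w.toWord := by
  intro g hg hgr
  have hset := w.normalized g.1 g.2 hg
  have hne := w.toWord.ne_one g hg
  have hinj := (d.compl g.1).1
  have h1 : ((⟨⟨g.2, hgr⟩, ⟨1, d.one_mem g.1⟩⟩ : ((φ g.1).range : Set (G g.1)) × (d.set g.1)) =
      ⟨⟨1, one_mem_range g.1⟩, ⟨g.2, hset⟩⟩) := by
    apply hinj
    simp
  have := congrArg (fun p => (p.2 : G g.1)) h1
  simp at this
  exact hne this.symm

/-- Key induction: a reduced word commuting with a base element lies in `M`. -/
theorem wprod_mem_of_commute_base (hφ : ∀ i, Injective (φ i)) (c : H)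
    (M : Subgroup (PushoutI φ))
    (hstep : ∀ (i) (g : G i), g⁻¹ * φ i c * g ∈ (φ i).range →
      g⁻¹ * φ i c * g = φ i c ∧ of (φ := φ) i g ∈ M) :
    ∀ (n : ℕ) (Wl : List (Σ i, G i)), Wl.length = n →
      Wl.Chain' (fun a b => a.1 ≠ b.1) →
      (∀ l ∈ Wl, l.2 ∉ (φ l.1).range) →
      wprod φ Wl * base φ c = base φ c * wprod φ Wl →
      wprod φ Wl ∈ M := by
  intro n
  induction n with
  | zero =>
    intro Wl hlen _ _ _
    rw [List.length_eq_zero_iff] at hlen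
    subst hlen
    simpa using one_mem M
  | succ n ih =>
    rintro (_ | ⟨⟨i, g⟩, t⟩) hlen hch hred hcomm
    · simp at hlen
    have hne : ∀ l ∈ t, l.2 ≠ 1 := fun l hl h1 =>
      hred l (List.mem_cons_of_mem _ hl) (h1 ▸ one_mem_range l.1)
    have hcht : t.Chain' (fun a b => a.1 ≠ b.1) := hch.tail
    have hhd : ∀ a ∈ t.head?, a.1 ≠ i := by
      intro a ha
      have := List.isChain_cons.1 hch
      exact (this.1 a ha).symm
    have key : g⁻¹ * φ i c * g ∈ (φ i).range := by
      by_contra hno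
      have hg'1 : g⁻¹ * φ i c * g ≠ 1 := fun h => hno (h ▸ one_mem_range i)
      set W := sandwichWord i (g⁻¹ * φ i c * g) hg'1 t hne hcht hhd with hW
      have hredW : Reduced φ W := by
        intro l hl
        rw [hW, sandwichWord_toList] at hl
        rcases List.mem_append.1 hl with h | h
        · rcases mem_revinv.1 h with ⟨b, hb, rfl⟩
          simp only [inv_mem_iff]
          exact hred b (List.mem_cons_of_mem _ hb)
        · rcases List.mem_cons.1 h with rfl | h
          · exact hno
          · exact hred l (List.mem_cons_of_mem _ h)
      have hofg : of (φ := φ) i (g⁻¹ * φ i c * g) =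
          (of i g)⁻¹ * base φ c * of i g := by
        rw [map_mul, map_mul, map_inv, of_apply_eq_base]
      have h2 : of (φ := φ) i g * wprod φ t * base φ c =
          base φ c * (of i g * wprod φ t) := by
        rw [← wprod_cons ⟨i, g⟩ t]; exact hcomm
      have hprod : ofCoprodI W.prod = base φ c := by
        have h1 : ofCoprodI W.prod =
            (wprod φ t)⁻¹ * ((of i g)⁻¹ * base φ c * of i g) * wprod φ t := by
          rw [ofCoprodI_wordProd, hW, sandwichWord_toList, wprod_append, wprod_cons,
            wprod_revinv, hofg]
          group
        rw [h1]
        calc (wprod φ t)⁻¹ * ((of (φ := φ) i g)⁻¹ * base φ c * of i g) * wprod φ t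
            = (of i g * wprod φ t)⁻¹ * (base φ c * (of i g * wprod φ t)) := by group
          _ = (of i g * wprod φ t)⁻¹ * (of i g * wprod φ t * base φ c) := by rw [h2]
          _ = base φ c := by group
      have := hredW.eq_empty_of_mem_range hφ (hprod ▸ ⟨c, rfl⟩)
      have h0 := congrArg (fun w : CoprodI.Word G => w.toList) this
      rw [hW] at h0
      simp [CoprodI.Word.empty] at h0
    obtain ⟨heq, hof⟩ := hstep i g key
    have hφcg : φ i c * g = g * φ i c := by
      calc φ i c * g = g * (g⁻¹ * φ i c * g) := by group
      _ = g * φ i c := by rw [heq]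
    have hcg : base φ c * of (φ := φ) i g = of i g * base φ c := by
      rw [← of_apply_eq_base φ i, ← map_mul, hφcg, map_mul]
    have hcy : wprod φ t * base φ c = base φ c * wprod φ t := by
      have h1 : of (φ := φ) i g * (wprod φ t * base φ c) =
          of i g * (base φ c * wprod φ t) := by
        calc of (φ := φ) i g * (wprod φ t * base φ c)
            = (of i g * wprod φ t) * base φ c := by group
          _ = wprod φ (⟨i, g⟩ :: t) * base φ c := by rw [wprod_cons]
          _ = base φ c * wprod φ (⟨i, g⟩ :: t) := hcomm
          _ = base φ c * (of i g * wprod φ t) := by rw [wprod_cons]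
          _ = (base φ c * of i g) * wprod φ t := by group
          _ = (of i g * base φ c) * wprod φ t := by rw [hcg]
          _ = of i g * (base φ c * wprod φ t) := by group
      exact mul_left_cancel h1
    have hyM : wprod φ t ∈ M := by
      refine ih t ?_ hcht (fun l hl => hred l (List.mem_cons_of_mem _ hl)) hcy
      simpa using Nat.succ_injective hlen
    rw [wprod_cons]
    exact M.mul_mem hof hyM

/-- The centralizer of a suitable base element. -/
theorem mem_of_commute_base (hφ : ∀ i, Injective (φ i)) (c : H)
    (hc : ∀ h : H, c * h = h * c) (M : Subgroup (PushoutI φ))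
    (hbase : ∀ h : H, base φ h ∈ M)
    (hstep : ∀ (i) (g : G i), g⁻¹ * φ i c * g ∈ (φ i).range →
      g⁻¹ * φ i c * g = φ i c ∧ of (φ := φ) i g ∈ M)
    (x : PushoutI φ) (hx : x * base φ c = base φ c * x) : x ∈ M := by
  classical
  obtain ⟨d⟩ := NormalWord.transversal_nonempty φ hφ
  set w : NormalWord d := x • NormalWord.empty with hw
  have hxw : w.prod = x := by
    rw [hw, NormalWord.prod_smul, NormalWord.prod_empty, mul_one]
  have hsplit : x = base φ w.head * wprod φ w.toList := by
    conv_lhs => rw [← hxw]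
    rw [NormalWord.prod, ofCoprodI_wordProd]
  have hredw : ∀ l ∈ w.toList, l.2 ∉ (φ l.1).range :=
    fun l hl => normalWord_reduced hφ d w l hl
  have hbc : base φ w.head * base φ c = base φ c * base φ w.head := by
    rw [← map_mul, ← map_mul, hc]
  have hcy : wprod φ w.toList * base φ c = base φ c * wprod φ w.toList := by
    have h1 : base φ w.head * (wprod φ w.toList * base φ c) =
        base φ w.head * (base φ c * wprod φ w.toList) := by
      calc base φ w.head * (wprod φ w.toList * base φ c)
          = (base φ w.head * wprod φ w.toList) * base φ c := by group
        _ = base φ c * (base φ w.head * wprod φ w.toList) := by rw [← hsplit]; exact hx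
        _ = (base φ c * base φ w.head) * wprod φ w.toList := by group
        _ = (base φ w.head * base φ c) * wprod φ w.toList := by rw [hbc]
        _ = base φ w.head * (base φ c * wprod φ w.toList) := by group
    exact mul_left_cancel h1
  have hyM := wprod_mem_of_commute_base hφ c M hstep w.toList.length w.toList rfl
    w.toWord.chain_ne hredw hcy
  rw [hsplit]
  exact M.mul_mem (hbase _) hyM

@[simp] theorem revinv_length (l : List (Σ i, G i)) : (revinv l).length = l.length := by
  simp [revinv]

/-- Uniqueness of the one-letter reduced word:
if a reduced word multiplies to `of B c` with `c` not in the base, it is the word `[⟨B, c⟩]`. -/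
theorem eq_single_of_wprod_eq_of (hφ : ∀ i, Injective (φ i)) (B : ι) (c : G B)
    (hc : c ∉ (φ B).range) :
    ∀ (Wl : List (Σ i, G i)), Wl.Chain' (fun a b => a.1 ≠ b.1) →
      (∀ l ∈ Wl, l.2 ∉ (φ l.1).range) →
      wprod φ Wl = of B c → Wl = [⟨B, c⟩] := by
  have hc1 : c ≠ 1 := fun h => hc (h ▸ one_mem_range B)
  rintro (_ | ⟨⟨j, g⟩, t⟩) hch hred heq
  · exfalso
    apply hc1
    apply of_injective hφ B
    rw [map_one, ← heq]; rfl
  have hnet : ∀ l ∈ t, l.2 ≠ 1 := fun l hl h1 =>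
    hred l (List.mem_cons_of_mem _ hl) (h1 ▸ one_mem_range l.1)
  have hcht : t.Chain' (fun a b => a.1 ≠ b.1) := hch.tail
  have hhdt : ∀ a ∈ t.head?, a.1 ≠ j := fun a ha => ((List.isChain_cons.1 hch).1 a ha).symm
  have hgne : g ≠ 1 := fun h1 =>
    hred ⟨j, g⟩ List.mem_cons_self (h1 ▸ one_mem_range j)
  by_cases hj : j = B
  · subst hj
    by_cases h1 : c⁻¹ * g = 1
    · -- g = c ; must show t = []
      have hgc : g = c := by
        have := h1
        rw [inv_mul_eq_one] at this
        exact this.symm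
      subst hgc
      have ht : wprod φ t = 1 := by
        have h2 : of (φ := φ) j g * wprod φ t = of j g * 1 := by
          rw [mul_one, ← wprod_cons' j g t, heq]
        exact mul_left_cancel h2
      rcases t with _ | ⟨a, t'⟩
      · rfl
      · exfalso
        have hW : Reduced φ (⟨a :: t', hnet, hcht⟩ : CoprodI.Word G) :=
          fun l hl => hred l (List.mem_cons_of_mem _ hl)
        have := hW.eq_empty_of_mem_range hφ (by
          rw [ofCoprodI_wordProd]
          exact (show wprod φ (a :: t') ∈ (base φ).range from ht ▸ one_mem _))
        have h0 := congrArg (fun w : CoprodI.Word G => w.toList) this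
        simp [CoprodI.Word.empty] at h0
    · by_cases h2 : c⁻¹ * g ∈ (φ j).range
      · -- wprod t ∈ base range
        obtain ⟨h', hh'⟩ := h2
        have ht : wprod φ t = of (φ := φ) j (g⁻¹ * c) := by
          have h3 : of (φ := φ) j g * wprod φ t = of j g * of j (g⁻¹ * c) := by
            rw [← map_mul, ← wprod_cons' j g t, heq]
            congr 1
            group
          exact mul_left_cancel h3
        have hrange : wprod φ t ∈ (base φ).range := by
          rw [ht]
          have h4 : (g⁻¹ * c : G j) = (φ j) h'⁻¹ := by rw [map_inv, hh']; group
          rw [h4, of_apply_eq_base]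
          exact ⟨h'⁻¹, rfl⟩
        rcases t with _ | ⟨a, t'⟩
        · exfalso
          apply h1
          have : g = c := by
            apply of_injective hφ j
            rw [← heq, wprod_cons]
            simp
          rw [this]
          group
        · exfalso
          have hW : Reduced φ (⟨a :: t', hnet, hcht⟩ : CoprodI.Word G) :=
            fun l hl => hred l (List.mem_cons_of_mem _ hl)
          have := hW.eq_empty_of_mem_range hφ (by rw [ofCoprodI_wordProd]; exact hrange)
          have h0 := congrArg (fun w : CoprodI.Word G => w.toList) this
          simp [CoprodI.Word.empty] at h0
      · -- word ⟨B, c⁻¹ * g⟩ :: t is reduced with product 1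
        exfalso
        have hW : Reduced φ (⟨⟨j, c⁻¹ * g⟩ :: t,
            fun l hl => by
              rcases List.mem_cons.1 hl with rfl | hl
              · exact h1
              · exact hnet l hl,
            List.isChain_cons.2 ⟨fun a ha => (hhdt a ha).symm, hcht⟩⟩ : CoprodI.Word G) := by
          intro l hl
          rcases List.mem_cons.1 hl with rfl | hl
          · exact h2
          · exact hred l (List.mem_cons_of_mem _ hl)
        have := hW.eq_empty_of_mem_range hφ (by
          rw [ofCoprodI_wordProd]
          have h3 : wprod φ (⟨j, c⁻¹ * g⟩ :: t) = 1 := by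
            rw [wprod_cons' j (c⁻¹ * g) t]
            have : of (φ := φ) j (c⁻¹ * g) = (of j c)⁻¹ * of j g := by
              rw [map_mul, map_inv]
            rw [this, mul_assoc, ← wprod_cons' j g t, heq]
            group
          rw [h3]
          exact one_mem _)
        have h0 := congrArg (fun w : CoprodI.Word G => w.toList) this
        simp [CoprodI.Word.empty] at h0
  · -- first letter not in B : word ⟨B, c⁻¹⟩ :: Wl is reduced with product 1
    exfalso
    have hcinv1 : (c⁻¹ : G B) ≠ 1 := fun h => hc1 (by rwa [inv_eq_one] at h)
    have hW : Reduced φ (⟨⟨B, c⁻¹⟩ :: ⟨j, g⟩ :: t,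
        fun l hl => by
          rcases List.mem_cons.1 hl with rfl | hl
          · exact hcinv1
          · rcases List.mem_cons.1 hl with rfl | hl
            · exact hgne
            · exact hnet l hl,
        List.isChain_cons.2 ⟨fun a ha => by
            simp only [List.head?_cons, Option.mem_def, Option.some.injEq] at ha
            subst ha
            exact fun h => hj h.symm,
          hch⟩⟩ : CoprodI.Word G) := by
      intro l hl
      rcases List.mem_cons.1 hl with rfl | hl
      · simpa using hc
      · exact hred l hl
    have := hW.eq_empty_of_mem_range hφ (by
      rw [ofCoprodI_wordProd]
      have h3 : wprod φ (⟨B, c⁻¹⟩ :: ⟨j, g⟩ :: t) = 1 := by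
        rw [wprod_cons' B c⁻¹ (⟨j, g⟩ :: t), heq, map_inv]
        group
      rw [h3]
      exact one_mem _)
    have h0 := congrArg (fun w : CoprodI.Word G => w.toList) this
    simp [CoprodI.Word.empty] at h0

/-- The centralizer of an element of a factor which is not conjugate into the base. -/
theorem mem_range_of_commute_of (hφ : ∀ i, Injective (φ i)) (B : ι) (c : G B)
    (hc : ∀ b : G B, b⁻¹ * c * b ∉ (φ B).range)
    (x : PushoutI φ) (hx : x * of B c = of B c * x) : x ∈ (of (φ := φ) B).range := by
  classical
  obtain ⟨d⟩ := NormalWord.transversal_nonempty φ hφ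
  set w : NormalWord d := x • NormalWord.empty with hw
  have hxw : w.prod = x := by
    rw [hw, NormalWord.prod_smul, NormalWord.prod_empty, mul_one]
  have hsplit : x = base φ w.head * wprod φ w.toList := by
    conv_lhs => rw [← hxw]
    rw [NormalWord.prod, ofCoprodI_wordProd]
  have hredw : ∀ l ∈ w.toList, l.2 ∉ (φ l.1).range :=
    fun l hl => normalWord_reduced hφ d w l hl
  have hbase_of : base φ w.head = of (φ := φ) B (φ B w.head) := (of_apply_eq_base φ B _).symm
  set c₂ : G B := (φ B w.head)⁻¹ * c * φ B w.head with hc₂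
  have hc₂conj : ∀ b : G B, b⁻¹ * c₂ * b ∉ (φ B).range := by
    intro b hb
    apply hc (φ B w.head * b)
    have heq2 : (φ B w.head * b)⁻¹ * c * (φ B w.head * b) = b⁻¹ * c₂ * b := by
      rw [hc₂]; group
    rwa [heq2]
  have hKEq : (wprod φ w.toList)⁻¹ * of (φ := φ) B c₂ * wprod φ w.toList = of B c := by
    have h1 : of (φ := φ) B c₂ = (base φ w.head)⁻¹ * of B c * base φ w.head := by
      rw [hc₂, map_mul, map_mul, map_inv, hbase_of]
    rw [h1]
    calc (wprod φ w.toList)⁻¹ * ((base φ w.head)⁻¹ * of (φ := φ) B c * base φ w.head) *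
          wprod φ w.toList
        = (base φ w.head * wprod φ w.toList)⁻¹ * (of B c * (base φ w.head * wprod φ w.toList)) :=
          by group
      _ = x⁻¹ * (of B c * x) := by rw [← hsplit]
      _ = x⁻¹ * (x * of B c) := by rw [← hx]
      _ = of B c := by group
  rcases hWl : w.toList with _ | ⟨⟨j, g1⟩, t⟩
  · -- empty word
    rw [hsplit, hWl]
    simp only [wprod_nil, mul_one]
    exact ⟨φ B w.head, hbase_of.symm⟩
  have hchw : w.toWord.toList.Chain' (fun a b => a.1 ≠ b.1) := w.toWord.chain_ne
  rw [hWl] at hredw hchw hKEq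
  have hnet : ∀ l ∈ t, l.2 ≠ 1 := fun l hl h1 =>
    hredw l (List.mem_cons_of_mem _ hl) (h1 ▸ one_mem_range l.1)
  have hcht : t.Chain' (fun a b => a.1 ≠ b.1) := hchw.tail
  by_cases hj : j = B
  · subst hj
    set c₃ : G j := g1⁻¹ * c₂ * g1 with hc₃
    have hc₃r : c₃ ∉ (φ j).range := hc₂conj g1
    have hc₃1 : c₃ ≠ 1 := fun h => hc₃r (h ▸ one_mem_range j)
    have hhdt : ∀ a ∈ t.head?, a.1 ≠ j := fun a ha => ((List.isChain_cons.1 hchw).1 a ha).symm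
    set W := sandwichWord j c₃ hc₃1 t hnet hcht hhdt with hWdef
    have hWred : ∀ l ∈ W.toList, l.2 ∉ (φ l.1).range := by
      intro l hl
      rw [hWdef, sandwichWord_toList] at hl
      rcases List.mem_append.1 hl with h | h
      · rcases mem_revinv.1 h with ⟨b, hb, rfl⟩
        simp only [inv_mem_iff]
        exact hredw b (List.mem_cons_of_mem _ hb)
      · rcases List.mem_cons.1 h with rfl | h
        · exact hc₃r
        · exact hredw l (List.mem_cons_of_mem _ h)
    have hWprod : wprod φ W.toList = of (φ := φ) j c := by
      rw [hWdef, sandwichWord_toList, wprod_append, wprod_cons, wprod_revinv]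
      have h2 : of (φ := φ) j c₃ = (of j g1)⁻¹ * of j c₂ * of j g1 := by
        rw [hc₃, map_mul, map_mul, map_inv]
      rw [h2, ← hKEq, wprod_cons]
      group
    have hsingle := eq_single_of_wprod_eq_of hφ j c (by simpa using hc 1) W.toList
      W.chain_ne hWred hWprod
    rw [hWdef, sandwichWord_toList] at hsingle
    have hlen := congrArg List.length hsingle
    simp only [List.length_append, revinv_length, List.length_cons, List.length_nil] at hlen
    have ht0 : t = [] := List.length_eq_zero_iff.mp (by omega)
    subst ht0
    rw [hsplit, hWl, wprod_cons]
    simp only [wprod_nil, mul_one]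
    exact ⟨φ j w.head * g1, by rw [map_mul, hbase_of]⟩
  · -- first letter not in the factor of c : contradiction
    exfalso
    have hc₂r : c₂ ∉ (φ B).range := by simpa using hc₂conj 1
    have hc₂1 : c₂ ≠ 1 := fun h => hc₂r (h ▸ one_mem_range B)
    have hhdw : ∀ a ∈ (⟨j, g1⟩ :: t : List (Σ i, G i)).head?, a.1 ≠ B := by
      intro a ha
      simp only [List.head?_cons, Option.mem_def, Option.some.injEq] at ha
      subst ha
      exact hj
    have hnew : ∀ l ∈ (⟨j, g1⟩ :: t : List (Σ i, G i)), l.2 ≠ 1 := fun l hl h1 =>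
      hredw l hl (h1 ▸ one_mem_range l.1)
    set W := sandwichWord B c₂ hc₂1 (⟨j, g1⟩ :: t) hnew hchw hhdw with hWdef
    have hWred : ∀ l ∈ W.toList, l.2 ∉ (φ l.1).range := by
      intro l hl
      rw [hWdef, sandwichWord_toList] at hl
      rcases List.mem_append.1 hl with h | h
      · rcases mem_revinv.1 h with ⟨b, hb, rfl⟩
        simp only [inv_mem_iff]
        exact hredw b hb
      · rcases List.mem_cons.1 h with rfl | h
        · exact hc₂r
        · exact hredw l h
    have hWprod : wprod φ W.toList = of (φ := φ) B c := by
      rw [hWdef, sandwichWord_toList, wprod_append, wprod_cons, wprod_revinv, ← hKEq]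
      group
    have hsingle := eq_single_of_wprod_eq_of hφ B c (by simpa using hc 1) W.toList
      W.chain_ne hWred hWprod
    rw [hWdef, sandwichWord_toList] at hsingle
    have hlen := congrArg List.length hsingle
    simp only [List.length_append, revinv_length, List.length_cons, List.length_nil] at hlen
    omega

end AmalgAux

namespace PathSplit

open Monoid Monoid.PushoutI PathAux

variable (m v : ℕ) (hv : v + 2 ≤ m)

/-- The two factors of the splitting of the path at vertex `v`. -/
abbrev Fac : Bool → Type := fun b => match b with
  | true => PathGroup (v + 1)
  | false => PathGroup (m - v)

instance : ∀ b, Group (Fac m v b) := fun b => match b with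
  | true => inferInstanceAs (Group (PathGroup (v + 1)))
  | false => inferInstanceAs (Group (PathGroup (m - v)))

/-- The maps from `ℤ` to the two factors, sending the generator to `g_v` resp. `g_0`. -/
def φS : ∀ b, Multiplicative ℤ →* Fac m v b := fun b => match b with
  | true => zpowersHom (PathGroup (v + 1)) (pathGen (v + 1) ⟨v, by omega⟩)
  | false => zpowersHom (PathGroup (m - v)) (pathGen (m - v) ⟨0, by omega⟩)

theorem expHom_gen_zpow (k : ℕ) (j : Fin k) (n : ℤ) :
    expHom k j (pathGen k j ^ n) = Multiplicative.ofAdd n := by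
  rw [map_zpow, expHom_pathGen, if_pos rfl, ← ofAdd_zsmul, smul_eq_mul, mul_one]

theorem pathGen_zpow_injective (k : ℕ) (j : Fin k) :
    Function.Injective (zpowersHom (PathGroup k) (pathGen k j)) := by
  intro a b h
  have h1 := congrArg (expHom k j) h
  rw [zpowersHom_apply, zpowersHom_apply, expHom_gen_zpow, expHom_gen_zpow] at h1
  exact Multiplicative.toAdd.injective (Multiplicative.ofAdd.injective h1)

theorem φS_injective : ∀ b, Function.Injective (φS m v hv b) := by
  intro b
  cases b
  · exact pathGen_zpow_injective (m - v) _
  · exact pathGen_zpow_injective (v + 1) _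

theorem φS_true_one : φS m v hv true (Multiplicative.ofAdd 1) = pathGen (v+1) ⟨v, by omega⟩ := by
  show zpowersHom _ _ _ = _
  rw [zpowersHom_apply]
  simp

theorem φS_false_one : φS m v hv false (Multiplicative.ofAdd 1) =
    pathGen (m - v) ⟨0, by omega⟩ := by
  show zpowersHom _ _ _ = _
  rw [zpowersHom_apply]
  simp

/-- The bridging identity in the pushout. -/
theorem bridge : of (φ := φS m v hv) true (pathGen (v+1) ⟨v, by omega⟩) =
    of (φ := φS m v hv) false (pathGen (m - v) ⟨0, by omega⟩) := by
  rw [← φS_true_one m v hv, ← φS_false_one m v hv, of_apply_eq_base, of_apply_eq_base]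

/-- The map `PathGroup m →* PushoutI`. -/
noncomputable def toPush : PathGroup m →* PushoutI (φS m v hv) :=
  PresentedGroup.toGroup (f := fun j : Fin m =>
    if h : (j : ℕ) ≤ v then of (φ := φS m v hv) true (pathGen (v+1) ⟨j, by omega⟩)
    else of (φ := φS m v hv) false (pathGen (m - v) ⟨(j : ℕ) - v, by omega⟩))
    (lift_rels (by
      intro i j hij
      by_cases hi : (i : ℕ) ≤ v <;> by_cases hj : (j : ℕ) ≤ v
      · rw [dif_pos hi, dif_pos hj]
        exact (pathGen_comm (v+1) (by simp; omega)).map (of true)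
      · -- i = v, j = v + 1
        rw [dif_pos hi, dif_neg hj]
        have hiv : (i : ℕ) = v := by omega
        have h1 : (⟨(i : ℕ), by omega⟩ : Fin (v+1)) = ⟨v, by omega⟩ := by
          simp [hiv]
        rw [h1, bridge m v hv]
        refine (pathGen_comm (m - v) ?_).map (of false)
        simp
        omega
      · omega
      · rw [dif_neg hi, dif_neg hj]
        refine (pathGen_comm (m - v) ?_).map (of false)
        simp
        omega))

theorem toPush_gen (j : Fin m) : toPush m v hv (pathGen m j) =
    if h : (j : ℕ) ≤ v then of (φ := φS m v hv) true (pathGen (v+1) ⟨j, by omega⟩)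
    else of (φ := φS m v hv) false (pathGen (m - v) ⟨(j : ℕ) - v, by omega⟩) :=
  toGroup_pathGen _ j

/-- Embedding of the left factor. -/
noncomputable def fromA : PathGroup (v + 1) →* PathGroup m :=
  PresentedGroup.toGroup (f := fun j : Fin (v+1) => pathGen m ⟨j, by omega⟩)
    (lift_rels (by
      intro i j hij
      refine pathGen_comm m ?_
      simpa using hij))

/-- Embedding of the right factor. -/
noncomputable def fromB : PathGroup (m - v) →* PathGroup m :=
  PresentedGroup.toGroup (f := fun j : Fin (m - v) => pathGen m ⟨v + j, by omega⟩)
    (lift_rels (by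
      intro i j hij
      refine pathGen_comm m ?_
      simp
      omega))

theorem fromA_gen (j : Fin (v+1)) : fromA m v hv (pathGen (v+1) j) = pathGen m ⟨j, by omega⟩ :=
  toGroup_pathGen _ j

theorem fromB_gen (j : Fin (m - v)) : fromB m v hv (pathGen (m - v) j) =
    pathGen m ⟨v + j, by omega⟩ :=
  toGroup_pathGen _ j

/-- The map `PushoutI →* PathGroup m`. -/
noncomputable def fromPush : PushoutI (φS m v hv) →* PathGroup m :=
  PushoutI.lift
    (fun b => match b with
      | true => fromA m v hv
      | false => fromB m v hv)
    (zpowersHom (PathGroup m) (pathGen m ⟨v, by omega⟩))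
    (by
      intro b
      cases b
      · refine MonoidHom.ext_mint ?_
        show fromB m v hv (φS m v hv false (Multiplicative.ofAdd 1)) = _
        rw [φS_false_one, fromB_gen]
        rw [zpowersHom_apply]
        simp
      · refine MonoidHom.ext_mint ?_
        show fromA m v hv (φS m v hv true (Multiplicative.ofAdd 1)) = _
        rw [φS_true_one, fromA_gen]
        rw [zpowersHom_apply]
        simp)

theorem fromPush_of_true (g : PathGroup (v+1)) :
    fromPush m v hv (of (φ := φS m v hv) true g) = fromA m v hv g := by
  simp only [fromPush, lift_of]

theorem fromPush_of_false (g : PathGroup (m - v)) :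
    fromPush m v hv (of (φ := φS m v hv) false g) = fromB m v hv g := by
  simp only [fromPush, lift_of]

theorem fromPush_toPush : (fromPush m v hv).comp (toPush m v hv) = MonoidHom.id _ := by
  refine PresentedGroup.ext fun j => ?_
  show fromPush m v hv (toPush m v hv (pathGen m j)) = pathGen m j
  rw [toPush_gen]
  by_cases h : (j : ℕ) ≤ v
  · rw [dif_pos h, fromPush_of_true, fromA_gen]
  · rw [dif_neg h, fromPush_of_false, fromB_gen]
    refine congrArg (pathGen m) (Fin.ext ?_)
    show v + ((j : ℕ) - v) = (j : ℕ)
    omega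

theorem toPush_fromPush : (toPush m v hv).comp (fromPush m v hv) = MonoidHom.id _ := by
  refine PushoutI.hom_ext_nonempty fun b => ?_
  cases b
  · refine PresentedGroup.ext fun j => ?_
    show toPush m v hv (fromPush m v hv (of (φ := φS m v hv) false (pathGen (m-v) j))) =
      of (φ := φS m v hv) false (pathGen (m - v) j)
    rw [fromPush_of_false, fromB_gen, toPush_gen]
    by_cases h : v + (j : ℕ) ≤ v
    · rw [dif_pos h]
      have hj0 : (j : ℕ) = 0 := by omega
      have h1 : (⟨v + (j:ℕ), by omega⟩ : Fin (v+1)) = ⟨v, by omega⟩ := by simp [hj0]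
      have h2 : (⟨0, by omega⟩ : Fin (m - v)) = j := by
        apply Fin.ext
        simp [hj0]
      rw [h1, bridge m v hv, h2]
    · rw [dif_neg h]
      refine congrArg _ (congrArg (pathGen (m - v)) (Fin.ext ?_))
      show (v + (j : ℕ)) - v = (j : ℕ)
      omega
  · refine PresentedGroup.ext fun j => ?_
    show toPush m v hv (fromPush m v hv (of (φ := φS m v hv) true (pathGen (v+1) j))) =
      of (φ := φS m v hv) true (pathGen (v+1) j)
    rw [fromPush_of_true, fromA_gen, toPush_gen]
    have hj : ((⟨(j : ℕ), by omega⟩ : Fin m) : ℕ) ≤ v := by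
      show (j : ℕ) ≤ v
      have := j.isLt
      omega
    rw [dif_pos hj]

/-- The splitting isomorphism. -/
noncomputable def equivPush : PathGroup m ≃* PushoutI (φS m v hv) :=
  MonoidHom.toMulEquiv (toPush m v hv) (fromPush m v hv)
    (fromPush_toPush m v hv) (toPush_fromPush m v hv)

end PathSplit

namespace PathMain

open Monoid Monoid.PushoutI PathAux PathSplit Subgroup

theorem lastVertex (k : ℕ) (hk : 2 ≤ k) :
    Subgroup.centralizer {pathGen k ⟨k-1, by omega⟩} =
      Subgroup.closure {pathGen k ⟨k-2, by omega⟩, pathGen k ⟨k-1, by omega⟩} := by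
  have hv : (k-2) + 2 ≤ k := by omega
  set v := k - 2 with hvdef
  apply le_antisymm
  · intro x hx
    rw [Subgroup.mem_centralizer_singleton_iff] at hx
    set c : PathGroup (k - v) := pathGen (k - v) ⟨k - 1 - v, by omega⟩ with hcdef
    have hgen : toPush k v hv (pathGen k ⟨k-1, by omega⟩) =
        of (φ := φS k v hv) false c := by
      rw [toPush_gen, dif_neg (by show ¬ (k-1 ≤ v); omega)]
    have hcomm : (toPush k v hv x) * of (φ := φS k v hv) false c =
        of (φ := φS k v hv) false c * (toPush k v hv x) := by
      rw [← hgen, ← map_mul, ← map_mul, hx]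
    have hc : ∀ b : PathGroup (k - v), b⁻¹ * c * b ∉ (φS k v hv false).range := by
      rintro b ⟨h, hh⟩
      have h1 := congrArg (expHom (k - v) ⟨k - 1 - v, by omega⟩) hh
      rw [expHom_conj] at h1
      have h2 : φS k v hv false h = pathGen (k-v) ⟨0, by omega⟩ ^ h.toAdd := by
        rw [show φS k v hv false = zpowersHom _ _ from rfl, zpowersHom_apply]
      rw [h2, map_zpow, expHom_pathGen,
        if_neg (by simp only [Fin.mk.injEq]; omega), hcdef, expHom_pathGen, if_pos rfl] at h1
      rw [ofAdd_zero, one_zpow] at h1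
      have := congrArg Multiplicative.toAdd h1
      simp at this
    have hrange := AmalgAux.mem_range_of_commute_of (φS_injective k v hv) false c hc _ hcomm
    obtain ⟨b, hb⟩ := hrange
    have hxid : fromPush k v hv (toPush k v hv x) = x := by
      have h3 := DFunLike.congr_fun (fromPush_toPush k v hv) x
      simpa using h3
    have hxb : fromB k v hv b = x := by rw [← hxid, ← hb, fromPush_of_false]
    have hle : (fromB k v hv).range ≤
        Subgroup.closure {pathGen k ⟨k-2, by omega⟩, pathGen k ⟨k-1, by omega⟩} := by
      rw [MonoidHom.range_eq_map, ← PresentedGroup.closure_range_of (pathRels (k - v)),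
        MonoidHom.map_closure]
      refine (Subgroup.closure_le _).mpr ?_
      rintro y ⟨_, ⟨j, rfl⟩, rfl⟩
      have hg : fromB k v hv (PresentedGroup.of j) = pathGen k ⟨v + (j:ℕ), by omega⟩ :=
        fromB_gen k v hv j
      rw [hg]
      have hj := j.isLt
      apply Subgroup.subset_closure
      simp only [Set.mem_insert_iff, Set.mem_singleton_iff]
      rcases (by omega : (j:ℕ) = 0 ∨ (j:ℕ) = 1) with h0 | h0
      · left
        exact congrArg (pathGen k) (Fin.ext (by show v + (j:ℕ) = k - 2; omega))
      · right
        exact congrArg (pathGen k) (Fin.ext (by show v + (j:ℕ) = k - 1; omega))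
    exact hle ⟨b, hxb⟩
  · refine (Subgroup.closure_le _).mpr ?_
    rintro y (rfl | rfl)
    · rw [SetLike.mem_coe, Subgroup.mem_centralizer_singleton_iff]
      exact (pathGen_comm k (by show (k-2) + 1 = k-1; omega)).eq
    · rw [SetLike.mem_coe, Subgroup.mem_centralizer_singleton_iff]

/-- The reversal homomorphism `g_j ↦ g_{k-1-j}`. -/
noncomputable def revHom (k : ℕ) : PathGroup k →* PathGroup k :=
  PresentedGroup.toGroup (f := fun j : Fin k => pathGen k ⟨k - 1 - (j : ℕ), by omega⟩)
    (lift_rels (by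
      intro i j hij
      have hi := i.isLt
      have hj := j.isLt
      exact (pathGen_comm k (by show (k - 1 - (j:ℕ)) + 1 = k - 1 - (i:ℕ); omega)).symm))

theorem revHom_gen (k : ℕ) (j : Fin k) :
    revHom k (pathGen k j) = pathGen k ⟨k - 1 - (j : ℕ), by omega⟩ :=
  toGroup_pathGen _ j

theorem revHom_revHom (k : ℕ) : (revHom k).comp (revHom k) = MonoidHom.id _ := by
  refine PresentedGroup.ext fun j => ?_
  show revHom k (revHom k (pathGen k j)) = pathGen k j
  rw [revHom_gen, revHom_gen]
  refine congrArg (pathGen k) (Fin.ext ?_)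
  show k - 1 - (k - 1 - (j:ℕ)) = (j:ℕ)
  have := j.isLt
  omega

/-- The reversal isomorphism. -/
noncomputable def revEquiv (k : ℕ) : PathGroup k ≃* PathGroup k :=
  MonoidHom.toMulEquiv (revHom k) (revHom k) (revHom_revHom k) (revHom_revHom k)

theorem revEquiv_gen (k : ℕ) (j : Fin k) :
    revEquiv k (pathGen k j) = pathGen k ⟨k - 1 - (j : ℕ), by omega⟩ :=
  revHom_gen k j

/-- Transport of a singleton centralizer along a `MulEquiv`. -/
theorem centralizer_map {G G' : Type*} [Group G] [Group G'] (e : G ≃* G') (g : G) :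
    Subgroup.centralizer {e g} = Subgroup.map e.toMonoidHom (Subgroup.centralizer {g}) := by
  ext x
  rw [Subgroup.mem_map_equiv, Subgroup.mem_centralizer_singleton_iff,
    Subgroup.mem_centralizer_singleton_iff]
  constructor
  · intro h
    apply e.injective
    simp only [map_mul, MulEquiv.toMonoidHom_eq_coe, MonoidHom.coe_coe] at *
    rw [e.apply_symm_apply, h]
  · intro h
    have := congrArg e h
    simp only [map_mul, MulEquiv.toMonoidHom_eq_coe, MonoidHom.coe_coe] at this
    rw [e.apply_symm_apply] at this
    exact this

theorem firstVertex (k : ℕ) (hk : 2 ≤ k) :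
    Subgroup.centralizer {pathGen k ⟨0, by omega⟩} =
      Subgroup.closure {pathGen k ⟨0, by omega⟩, pathGen k ⟨1, by omega⟩} := by
  have h0 : revEquiv k (pathGen k ⟨k-1, by omega⟩) = pathGen k ⟨0, by omega⟩ := by
    rw [revEquiv_gen]
    exact congrArg (pathGen k) (Fin.ext (by show k - 1 - (k-1) = 0; omega))
  rw [← h0, centralizer_map, lastVertex k hk, MonoidHom.map_closure]
  congr 1
  simp only [MulEquiv.toMonoidHom_eq_coe, MonoidHom.coe_coe]
  rw [Set.image_insert_eq, Set.image_singleton]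
  have h1 : revEquiv k (pathGen k ⟨k-2, by omega⟩) = pathGen k ⟨1, by omega⟩ := by
    rw [revEquiv_gen]
    exact congrArg (pathGen k) (Fin.ext (by show k - 1 - (k-2) = 1; omega))
  rw [h1, h0]
  exact Set.pair_comm _ _

theorem toPush_injective (m v : ℕ) (hv : v + 2 ≤ m) :
    Function.Injective (toPush m v hv) := by
  intro a b hab
  have ha := DFunLike.congr_fun (fromPush_toPush m v hv) a
  have hb := DFunLike.congr_fun (fromPush_toPush m v hv) b
  simp only [MonoidHom.comp_apply, MonoidHom.id_apply] at ha hb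
  rw [← ha, ← hb, hab]

theorem interior (m i : ℕ) (h1 : 1 ≤ i) (h2 : i + 2 ≤ m) :
    Subgroup.centralizer {pathGen m ⟨i, by omega⟩} =
      Subgroup.closure {pathGen m ⟨i-1, by omega⟩, pathGen m ⟨i, by omega⟩,
        pathGen m ⟨i+1, by omega⟩} := by
  have hv : i + 2 ≤ m := h2
  set N := Subgroup.closure {pathGen m ⟨i-1, by omega⟩, pathGen m ⟨i, by omega⟩,
    pathGen m ⟨i+1, by omega⟩} with hN
  have hφt : ∀ h : Multiplicative ℤ,
      φS m i hv true h = pathGen (i+1) ⟨i, by omega⟩ ^ h.toAdd := fun h => by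
    rw [show φS m i hv true = zpowersHom _ _ from rfl, zpowersHom_apply]
  have hφf : ∀ h : Multiplicative ℤ,
      φS m i hv false h = pathGen (m-i) ⟨0, by omega⟩ ^ h.toAdd := fun h => by
    rw [show φS m i hv false = zpowersHom _ _ from rfl, zpowersHom_apply]
  have hgi : toPush m i hv (pathGen m ⟨i, by omega⟩) =
      of (φ := φS m i hv) true (pathGen (i+1) ⟨i, by omega⟩) := by
    rw [toPush_gen, dif_pos (le_refl i : ((⟨i, by omega⟩ : Fin m) : ℕ) ≤ i)]
  have hgim : toPush m i hv (pathGen m ⟨i-1, by omega⟩) =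
      of (φ := φS m i hv) true (pathGen (i+1) ⟨i-1, by omega⟩) := by
    rw [toPush_gen, dif_pos (show ((⟨i-1, by omega⟩ : Fin m) : ℕ) ≤ i by show i-1 ≤ i; omega)]
  have hgip : toPush m i hv (pathGen m ⟨i+1, by omega⟩) =
      of (φ := φS m i hv) false (pathGen (m-i) ⟨1, by omega⟩) := by
    rw [toPush_gen, dif_neg (show ¬ ((⟨i+1, by omega⟩ : Fin m) : ℕ) ≤ i by show ¬ i+1 ≤ i; omega)]
    exact congrArg _ (congrArg (pathGen (m-i)) (Fin.ext (by show (i+1) - i = 1; omega)))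
  have hbg : base (φS m i hv) (Multiplicative.ofAdd 1) =
      toPush m i hv (pathGen m ⟨i, by omega⟩) := by
    rw [hgi, ← φS_true_one m i hv, of_apply_eq_base]
  have hbase_of_false : base (φS m i hv) (Multiplicative.ofAdd 1) =
      of (φ := φS m i hv) false (pathGen (m-i) ⟨0, by omega⟩) := by
    rw [← φS_false_one m i hv, of_apply_eq_base]
  apply le_antisymm
  · intro x hx
    rw [Subgroup.mem_centralizer_singleton_iff] at hx
    set M := Subgroup.map (toPush m i hv) N with hM
    have hxM : toPush m i hv x ∈ M := by
      refine AmalgAux.mem_of_commute_base (φS_injective m i hv) (Multiplicative.ofAdd 1)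
        (fun h => mul_comm _ h) M ?_ ?_ _ ?_
      · -- hbase
        intro h
        refine ⟨pathGen m ⟨i, by omega⟩ ^ h.toAdd, ?_, ?_⟩
        · exact Subgroup.zpow_mem _ (Subgroup.subset_closure (by simp)) _
        · rw [map_zpow, hgi, ← map_zpow, ← hφt h, of_apply_eq_base]
      · -- hstep
        intro b g hg
        cases b
        · -- false factor : PathGroup (m - i), c ↦ gen 0
          obtain ⟨h, hh⟩ := hg
          have hexp := congrArg (expHom (m-i) ⟨0, by omega⟩) hh
          rw [hφf h, expHom_gen_zpow, φS_false_one m i hv, expHom_conj, expHom_pathGen,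
            if_pos rfl] at hexp
          have hz : h.toAdd = 1 := Multiplicative.ofAdd.injective hexp
          have heq : g⁻¹ * φS m i hv false (Multiplicative.ofAdd 1) * g =
              φS m i hv false (Multiplicative.ofAdd 1) := by
            rw [← hh, hφf h, hz, φS_false_one m i hv, zpow_one]
          refine ⟨heq, ?_⟩
          have heq' : g⁻¹ * pathGen (m-i) ⟨0, by omega⟩ * g = pathGen (m-i) ⟨0, by omega⟩ := by
            rw [← φS_false_one m i hv]; exact heq
          have h3 : pathGen (m-i) ⟨0, by omega⟩ * g =
              g * (g⁻¹ * pathGen (m-i) ⟨0, by omega⟩ * g) := by group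
          rw [heq'] at h3
          have hgmem : g ∈ Subgroup.centralizer {pathGen (m-i) ⟨0, by omega⟩} :=
            Subgroup.mem_centralizer_singleton_iff.mpr h3.symm
          rw [firstVertex (m-i) (by omega)] at hgmem
          have himg := Subgroup.mem_map_of_mem (of (φ := φS m i hv) false) hgmem
          rw [MonoidHom.map_closure] at himg
          refine (Subgroup.closure_le M).mpr ?_ himg
          rintro y ⟨z, (rfl | rfl), rfl⟩
          · rw [← hbase_of_false, hbg]
            exact ⟨pathGen m ⟨i, by omega⟩, Subgroup.subset_closure (by simp), rfl⟩
          · rw [← hgip]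
            exact ⟨pathGen m ⟨i+1, by omega⟩, Subgroup.subset_closure (by simp), rfl⟩
        · -- true factor : PathGroup (i+1), c ↦ gen i (last vertex)
          obtain ⟨h, hh⟩ := hg
          have hexp := congrArg (expHom (i+1) ⟨i, by omega⟩) hh
          rw [hφt h, expHom_gen_zpow, φS_true_one m i hv, expHom_conj, expHom_pathGen,
            if_pos rfl] at hexp
          have hz : h.toAdd = 1 := Multiplicative.ofAdd.injective hexp
          have heq : g⁻¹ * φS m i hv true (Multiplicative.ofAdd 1) * g =
              φS m i hv true (Multiplicative.ofAdd 1) := by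
            rw [← hh, hφt h, hz, φS_true_one m i hv, zpow_one]
          refine ⟨heq, ?_⟩
          have heq' : g⁻¹ * pathGen (i+1) ⟨i, by omega⟩ * g = pathGen (i+1) ⟨i, by omega⟩ := by
            rw [← φS_true_one m i hv]; exact heq
          have h3 : pathGen (i+1) ⟨i, by omega⟩ * g =
              g * (g⁻¹ * pathGen (i+1) ⟨i, by omega⟩ * g) := by group
          rw [heq'] at h3
          have hgmem : g ∈ Subgroup.centralizer {pathGen (i+1) ⟨i, by omega⟩} :=
            Subgroup.mem_centralizer_singleton_iff.mpr h3.symm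
          have hconv : pathGen (i+1) (⟨(i+1)-1, by omega⟩ : Fin (i+1)) =
              pathGen (i+1) ⟨i, by omega⟩ :=
            congrArg (pathGen (i+1)) (Fin.ext (by show (i+1)-1 = i; omega))
          rw [← hconv] at hgmem
          rw [lastVertex (i+1) (by omega)] at hgmem
          have himg := Subgroup.mem_map_of_mem (of (φ := φS m i hv) true) hgmem
          rw [MonoidHom.map_closure] at himg
          refine (Subgroup.closure_le M).mpr ?_ himg
          rintro y ⟨z, (rfl | rfl), rfl⟩
          · rw [show pathGen (i+1) (⟨(i+1)-2, by omega⟩ : Fin (i+1)) = pathGen (i+1) ⟨i-1, by omega⟩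
              from congrArg (pathGen (i+1)) (Fin.ext (by show (i+1)-2 = i-1; omega)), ← hgim]
            exact ⟨pathGen m ⟨i-1, by omega⟩, Subgroup.subset_closure (by simp), rfl⟩
          · rw [show pathGen (i+1) (⟨(i+1)-1, by omega⟩ : Fin (i+1)) = pathGen (i+1) ⟨i, by omega⟩
              from hconv, ← hgi]
            exact ⟨pathGen m ⟨i, by omega⟩, Subgroup.subset_closure (by simp), rfl⟩
      · -- commuting hypothesis
        rw [hbg, ← map_mul, ← map_mul, hx]
    obtain ⟨y, hyN, hyx⟩ := hxM
    rwa [← toPush_injective m i hv hyx]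
  · refine (Subgroup.closure_le _).mpr ?_
    rintro y (rfl | rfl | rfl)
    · rw [SetLike.mem_coe, Subgroup.mem_centralizer_singleton_iff]
      exact (pathGen_comm m (by show (i-1) + 1 = i; omega)).eq
    · rw [SetLike.mem_coe, Subgroup.mem_centralizer_singleton_iff]
    · rw [SetLike.mem_coe, Subgroup.mem_centralizer_singleton_iff]
      exact (pathGen_comm m (by show i + 1 = i+1; omega)).symm.eq

end PathMain

open PathMain in
/-- In `G = ⟨g_1,…,g_m ∣ [g_i,g_{i+1}]=1⟩`, the centralizer of `g_i` is the subgroup generated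
by the generators `g_j` with `|i - j| ≤ 1`. -/
theorem stmt3 (m : ℕ) (hm : 1 ≤ m) (i : Fin m) :
    Subgroup.centralizer {pathGen m i} =
      Subgroup.closure {x | ∃ j : Fin m,
        ((j : ℕ) ≤ (i : ℕ) + 1 ∧ (i : ℕ) ≤ (j : ℕ) + 1) ∧ x = pathGen m j} := by
  by_cases hm1 : m = 1
  · subst hm1
    have hcent : Subgroup.centralizer {pathGen 1 i} = ⊤ := by
      rw [Subgroup.eq_top_iff']
      intro x
      refine PresentedGroup.generated_by _ _ (fun j => ?_) x
      rw [Subgroup.mem_centralizer_singleton_iff]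
      have hji : j = i := Subsingleton.elim j i
      subst hji
      rfl
    have hS : {x | ∃ j : Fin 1, ((j : ℕ) ≤ (i : ℕ) + 1 ∧ (i : ℕ) ≤ (j : ℕ) + 1) ∧
        x = pathGen 1 j} = Set.range (PresentedGroup.of (rels := pathRels 1)) := by
      ext x
      simp only [Set.mem_setOf_eq, Set.mem_range]
      constructor
      · rintro ⟨j, _, rfl⟩; exact ⟨j, rfl⟩
      · rintro ⟨j, rfl⟩
        have := j.isLt
        have := i.isLt
        exact ⟨j, ⟨by omega, by omega⟩, rfl⟩
    rw [hcent, hS, PresentedGroup.closure_range_of]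
  · have hm2 : 2 ≤ m := by omega
    have hilt := i.isLt
    by_cases hi0 : (i : ℕ) = 0
    · have hS : {x | ∃ j : Fin m, ((j : ℕ) ≤ (i : ℕ) + 1 ∧ (i : ℕ) ≤ (j : ℕ) + 1) ∧
          x = pathGen m j} = {pathGen m ⟨0, by omega⟩, pathGen m ⟨1, by omega⟩} := by
        ext x
        simp only [Set.mem_setOf_eq, Set.mem_insert_iff, Set.mem_singleton_iff]
        constructor
        · rintro ⟨j, ⟨hj1, hj2⟩, rfl⟩
          rcases (by omega : (j : ℕ) = 0 ∨ (j : ℕ) = 1) with h | h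
          · exact Or.inl (congrArg (pathGen m) (Fin.ext (by show (j:ℕ) = 0; omega)))
          · exact Or.inr (congrArg (pathGen m) (Fin.ext (by show (j:ℕ) = 1; omega)))
        · rintro (rfl | rfl)
          · exact ⟨⟨0, by omega⟩, ⟨by show (0:ℕ) ≤ (i:ℕ)+1; omega,
              by show (i:ℕ) ≤ 0+1; omega⟩, rfl⟩
          · exact ⟨⟨1, by omega⟩, ⟨by show (1:ℕ) ≤ (i:ℕ)+1; omega,
              by show (i:ℕ) ≤ 1+1; omega⟩, rfl⟩
      rw [hS, show pathGen m i = pathGen m ⟨0, by omega⟩ from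
        congrArg (pathGen m) (Fin.ext hi0)]
      exact firstVertex m hm2
    · by_cases him : (i : ℕ) = m - 1
      · have hS : {x | ∃ j : Fin m, ((j : ℕ) ≤ (i : ℕ) + 1 ∧ (i : ℕ) ≤ (j : ℕ) + 1) ∧
            x = pathGen m j} = {pathGen m ⟨m-2, by omega⟩, pathGen m ⟨m-1, by omega⟩} := by
          ext x
          simp only [Set.mem_setOf_eq, Set.mem_insert_iff, Set.mem_singleton_iff]
          constructor
          · rintro ⟨j, ⟨hj1, hj2⟩, rfl⟩
            have := j.isLt
            rcases (by omega : (j : ℕ) = m - 2 ∨ (j : ℕ) = m - 1) with h | h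
            · exact Or.inl (congrArg (pathGen m) (Fin.ext (by show (j:ℕ) = m-2; omega)))
            · exact Or.inr (congrArg (pathGen m) (Fin.ext (by show (j:ℕ) = m-1; omega)))
          · rintro (rfl | rfl)
            · exact ⟨⟨m-2, by omega⟩, ⟨by show m-2 ≤ (i:ℕ)+1; omega,
                by show (i:ℕ) ≤ (m-2)+1; omega⟩, rfl⟩
            · exact ⟨⟨m-1, by omega⟩, ⟨by show m-1 ≤ (i:ℕ)+1; omega,
                by show (i:ℕ) ≤ (m-1)+1; omega⟩, rfl⟩
        rw [hS, show pathGen m i = pathGen m ⟨m-1, by omega⟩ from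
          congrArg (pathGen m) (Fin.ext him)]
        exact lastVertex m hm2
      · have h1 : 1 ≤ (i : ℕ) := by omega
        have h2 : (i : ℕ) + 2 ≤ m := by omega
        have hS : {x | ∃ j : Fin m, ((j : ℕ) ≤ (i : ℕ) + 1 ∧ (i : ℕ) ≤ (j : ℕ) + 1) ∧
            x = pathGen m j} = {pathGen m ⟨(i:ℕ)-1, by omega⟩, pathGen m ⟨(i:ℕ), by omega⟩,
              pathGen m ⟨(i:ℕ)+1, by omega⟩} := by
          ext x
          simp only [Set.mem_setOf_eq, Set.mem_insert_iff, Set.mem_singleton_iff]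
          constructor
          · rintro ⟨j, ⟨hj1, hj2⟩, rfl⟩
            rcases (by omega : (j : ℕ) = (i:ℕ) - 1 ∨ (j : ℕ) = (i:ℕ) ∨ (j : ℕ) = (i:ℕ) + 1)
              with h | h | h
            · exact Or.inl (congrArg (pathGen m) (Fin.ext (by show (j:ℕ) = (i:ℕ)-1; omega)))
            · exact Or.inr (Or.inl (congrArg (pathGen m) (Fin.ext (by show (j:ℕ) = (i:ℕ); omega))))
            · exact Or.inr (Or.inr (congrArg (pathGen m)
                (Fin.ext (by show (j:ℕ) = (i:ℕ)+1; omega))))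
          · rintro (rfl | rfl | rfl)
            · exact ⟨⟨(i:ℕ)-1, by omega⟩, ⟨by show (i:ℕ)-1 ≤ (i:ℕ)+1; omega,
                by show (i:ℕ) ≤ ((i:ℕ)-1)+1; omega⟩, rfl⟩
            · exact ⟨⟨(i:ℕ), by omega⟩, ⟨by show (i:ℕ) ≤ (i:ℕ)+1; omega,
                by show (i:ℕ) ≤ (i:ℕ)+1; omega⟩, rfl⟩
            · exact ⟨⟨(i:ℕ)+1, by omega⟩, ⟨by show (i:ℕ)+1 ≤ (i:ℕ)+1; omega,
                by show (i:ℕ) ≤ ((i:ℕ)+1)+1; omega⟩, rfl⟩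
        rw [hS, show pathGen m i = pathGen m ⟨(i:ℕ), by omega⟩ from
          congrArg (pathGen m) (Fin.ext rfl)]
        exact interior m (i:ℕ) h1 h2
end

section
/- Let m ≥ 4 and let G be the group presented by generators g_1, …, g_m with relations [g_i, g_{i+1}] = 1 for i = 1, …, m−1. Then the centralizer of the element g_1·g_m in G is the cyclic subgroup generated by g_1·g_m. -/
namespace PathBasics

variable {n : ℕ} {K : Type*} [Group K]

/-- Build a hom out of `PathGroup n` from images of generators that commute along edges. -/
def pathHom (f : Fin n → K) (hf : ∀ i j : Fin n, (i : ℕ) + 1 = (j : ℕ) → Commute (f i) (f j)) :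
    PathGroup n →* K :=
  PresentedGroup.toGroup (f := f) (by
    rintro r ⟨i, j, hij, rfl⟩
    have h := hf i j hij
    simp only [map_mul, map_inv, FreeGroup.lift_apply_of]
    rw [h.eq]
    group)

@[simp] lemma pathHom_gen (f : Fin n → K) (hf) (i : Fin n) :
    pathHom f hf (pathGen n i) = f i := by
  simp [pathHom, pathGen, PresentedGroup.toGroup.of]

lemma pathHom_ext {φ ψ : PathGroup n →* K} (h : ∀ i, φ (pathGen n i) = ψ (pathGen n i)) :
    φ = ψ := PresentedGroup.ext h

lemma pathGen_comm {i j : Fin n} (hij : (i : ℕ) + 1 = (j : ℕ)) :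
    Commute (pathGen n i) (pathGen n j) := by
  have hr : (FreeGroup.of i * FreeGroup.of j * (FreeGroup.of i)⁻¹ * (FreeGroup.of j)⁻¹ :
      FreeGroup (Fin n)) ∈ pathRels n := ⟨i, j, hij, rfl⟩
  have h1 : PresentedGroup.mk (pathRels n)
      (FreeGroup.of i * FreeGroup.of j * (FreeGroup.of i)⁻¹ * (FreeGroup.of j)⁻¹) = 1 := by
    exact (QuotientGroup.eq_one_iff (N := Subgroup.normalClosure (pathRels n))
      (FreeGroup.of i * FreeGroup.of j * (FreeGroup.of i)⁻¹ * (FreeGroup.of j)⁻¹)).2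
      (Subgroup.subset_normalClosure hr)
  have : pathGen n i * pathGen n j * (pathGen n i)⁻¹ * (pathGen n j)⁻¹ = 1 := by
    simpa [pathGen, PresentedGroup.of, map_mul] using h1
  unfold Commute SemiconjBy
  calc pathGen n i * pathGen n j
      = (pathGen n i * pathGen n j * (pathGen n i)⁻¹ * (pathGen n j)⁻¹) *
        (pathGen n j * pathGen n i) := by group
    _ = pathGen n j * pathGen n i := by rw [this]; group


/-- Shift embedding `PathGroup n →* PathGroup (n+1)`, `g_j ↦ g_{j+1}`. -/
def shif (n : ℕ) : PathGroup n →* PathGroup (n + 1) :=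
  pathHom (fun j => pathGen (n+1) j.succ)
    (fun i j hij => pathGen_comm (by simp [Fin.val_succ, hij]))

@[simp] lemma shif_gen (j : Fin n) : shif n (pathGen n j) = pathGen (n+1) j.succ := by
  simp [shif]

/-- Inclusion `PathGroup n →* PathGroup (n+1)`, `g_j ↦ g_j`. -/
def incl (n : ℕ) : PathGroup n →* PathGroup (n + 1) :=
  pathHom (fun j => pathGen (n+1) j.castSucc)
    (fun i j hij => pathGen_comm (by simp [Fin.coe_castSucc, hij]))

@[simp] lemma incl_gen (j : Fin n) : incl n (pathGen n j) = pathGen (n+1) j.castSucc := by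
  simp [incl]

/-- The character killing all generators except `g_j`, which goes to `1 : ℤ`. -/
def chi (n : ℕ) (j : Fin n) : PathGroup n →* Multiplicative ℤ :=
  pathHom (fun i => if i = j then Multiplicative.ofAdd 1 else 1)
    (fun _ _ _ => Commute.all _ _)

@[simp] lemma chi_gen (j i : Fin n) :
    chi n j (pathGen n i) = if i = j then Multiplicative.ofAdd 1 else 1 := by
  simp [chi]

lemma chi_shif (n : ℕ) : (chi (n+1) 0).comp (shif n) = 1 := by
  apply pathHom_ext
  intro i
  simp [Fin.succ_ne_zero]

lemma chi_incl (n : ℕ) : (chi (n+1) (Fin.last n)).comp (incl n) = 1 := by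
  apply pathHom_ext
  intro i
  simp [Fin.ext_iff]
  omega

lemma ofAdd_one_ne_one : (Multiplicative.ofAdd (1 : ℤ)) ≠ 1 := by
  intro h
  have : (1 : ℤ) = 0 := by simpa using h
  omega

lemma gen_zero_not_mem_shif_range (n : ℕ) : pathGen (n+1) 0 ∉ (shif n).range := by
  rintro ⟨y, hy⟩
  have h1 : chi (n+1) 0 (pathGen (n+1) 0) = Multiplicative.ofAdd 1 := by simp
  have h2 : chi (n+1) 0 (shif n y) = 1 := by
    have h3 := congrFun (congrArg DFunLike.coe (chi_shif n)) y
    simpa using h3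
  rw [hy] at h2
  rw [h2] at h1
  exact ofAdd_one_ne_one h1.symm

lemma gen_last_not_mem_incl_range (n : ℕ) : pathGen (n+1) (Fin.last n) ∉ (incl n).range := by
  rintro ⟨y, hy⟩
  have h1 : chi (n+1) (Fin.last n) (pathGen (n+1) (Fin.last n)) = Multiplicative.ofAdd 1 := by simp
  have h2 : chi (n+1) (Fin.last n) (incl n y) = 1 := by
    have h3 := congrFun (congrArg DFunLike.coe (chi_incl n)) y
    simpa using h3
  rw [hy] at h2
  rw [h2] at h1
  exact ofAdd_one_ne_one h1.symm

/-- Retraction killing the first generator: `g_0 ↦ 1`, `g_{j+1} ↦ g_j`. -/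
def projS (n : ℕ) : PathGroup (n+1) →* PathGroup n :=
  pathHom (fun i => if h : (i : ℕ) = 0 then 1 else pathGen n ⟨(i : ℕ) - 1, by omega⟩)
    (by
      intro i j hij
      by_cases hi : (i : ℕ) = 0
      · simp [hi]
      · have hj : (j : ℕ) ≠ 0 := by omega
        simp only [hi, hj, dif_neg, not_false_iff]
        exact pathGen_comm (by simp; omega))

lemma projS_shif (n : ℕ) : (projS n).comp (shif n) = MonoidHom.id _ := by
  apply pathHom_ext
  intro i
  simp [projS, Fin.val_succ]

lemma shif_injective (n : ℕ) : Function.Injective (shif n) := by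
  intro x y hxy
  have hx := congrFun (congrArg DFunLike.coe (projS_shif n)) x
  have hy := congrFun (congrArg DFunLike.coe (projS_shif n)) y
  simp only [MonoidHom.coe_comp, Function.comp_apply, MonoidHom.id_apply] at hx hy
  rw [← hx, ← hy, hxy]

/-- Retraction killing the last generator. -/
def projC (n : ℕ) : PathGroup (n+1) →* PathGroup n :=
  pathHom (fun i => if h : (i : ℕ) < n then pathGen n ⟨i, h⟩ else 1)
    (by
      intro i j hij
      by_cases hj : (j : ℕ) < n
      · have hi : (i : ℕ) < n := by omega
        simp only [hi, hj, dif_pos]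
        exact pathGen_comm (by simp [hij])
      · simp [hj])

lemma projC_incl (n : ℕ) : (projC n).comp (incl n) = MonoidHom.id _ := by
  apply pathHom_ext
  intro i
  simp [projC, Fin.is_lt]

lemma incl_injective (n : ℕ) : Function.Injective (incl n) := by
  intro x y hxy
  have hx := congrFun (congrArg DFunLike.coe (projC_incl n)) x
  have hy := congrFun (congrArg DFunLike.coe (projC_incl n)) y
  simp only [MonoidHom.coe_comp, Function.comp_apply, MonoidHom.id_apply] at hx hy
  rw [← hx, ← hy, hxy]

/-- Every element of `PathGroup 1` is a power of the generator. -/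
lemma pathGroup_one_cyclic (x : PathGroup 1) : x ∈ Subgroup.zpowers (pathGen 1 0) := by
  apply PresentedGroup.generated_by
  intro j
  have : j = 0 := Subsingleton.elim _ _
  rw [this]
  exact Subgroup.mem_zpowers _

/-- In `PathGroup n` with `n ≥ 2`, `g_0^q = g_{n-1}^r` forces `q = 0`. -/
lemma powers_eq_zero {n : ℕ} (hn : 2 ≤ n) {q r : ℤ}
    (h : (pathGen n ⟨0, by omega⟩) ^ q = (pathGen n ⟨n-1, by omega⟩) ^ r) : q = 0 ∧ r = 0 := by
  have h0 : (⟨0, by omega⟩ : Fin n) ≠ ⟨n-1, by omega⟩ := by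
    simp only [ne_eq, Fin.mk.injEq]
    omega
  constructor
  · have h2 := congrArg (chi n ⟨0, by omega⟩) h
    simp only [map_zpow, chi_gen, if_pos rfl, if_neg (Ne.symm h0), one_zpow] at h2
    have : q • (1 : ℤ) = 0 := by
      simpa [← ofAdd_zsmul] using h2
    simpa using this
  · have h2 := congrArg (chi n ⟨n-1, by omega⟩) h
    simp only [map_zpow, chi_gen, if_pos rfl, if_neg h0, one_zpow] at h2
    have : r • (1 : ℤ) = 0 := by
      simpa [← ofAdd_zsmul] using h2.symm
    simpa using this

end PathBasics

namespace PathSplit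
open PathBasics Monoid Monoid.PushoutI

/-- The two inclusions of `PathGroup n` into `PathGroup (n+1)` (as first or last `n` vertices). -/
def raagφ (n : ℕ) : ∀ _ : Bool, PathGroup n →* PathGroup (n+1) :=
  fun b => cond b (shif n) (incl n)

lemma raagφ_true (n : ℕ) : raagφ n true = shif n := rfl
lemma raagφ_false (n : ℕ) : raagφ n false = incl n := rfl

lemma raagφ_inj (n : ℕ) : ∀ i, Function.Injective (raagφ n i) := by
  intro i
  cases i
  · exact incl_injective n
  · exact shif_injective n

/-- The amalgamated product `PathGroup (n+1) *_{PathGroup n} PathGroup (n+1)`. -/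
abbrev Amal (n : ℕ) := Monoid.PushoutI (raagφ n)

lemma of_true_succ (n : ℕ) (j : Fin (n+1)) :
    PushoutI.of (φ := raagφ (n+1)) true (pathGen (n+2) j.succ) =
      PushoutI.of (φ := raagφ (n+1)) false (pathGen (n+2) j.castSucc) := by
  have h1 : pathGen (n+2) j.succ = raagφ (n+1) true (pathGen (n+1) j) := by
    rw [raagφ_true, shif_gen]
  have h2 : pathGen (n+2) j.castSucc = raagφ (n+1) false (pathGen (n+1) j) := by
    rw [raagφ_false, incl_gen]
  rw [h1, h2, PushoutI.of_apply_eq_base, PushoutI.of_apply_eq_base]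

/-- The splitting homomorphism `PathGroup (n+3) →* Amal (n+1)`. -/
def E (n : ℕ) : PathGroup (n+3) →* Amal (n+1) :=
  pathHom (fun i => if h : (i : ℕ) < n + 2 then PushoutI.of true (pathGen (n+2) ⟨i, h⟩)
      else PushoutI.of false (pathGen (n+2) ⟨(i : ℕ) - 1, by omega⟩))
    (by
      intro i j hij
      by_cases hj : (j : ℕ) < n + 2
      · have hi : (i : ℕ) < n + 2 := by omega
        simp only [dif_pos hi, dif_pos hj]
        exact (pathGen_comm (by simp [hij])).map _
      · have hi1 : (i : ℕ) < n + 2 := by omega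
        simp only [dif_pos hi1, dif_neg hj]
        have hb : (⟨(i : ℕ), hi1⟩ : Fin (n+2)) = (⟨n, by omega⟩ : Fin (n+1)).succ := by
          have : (i : ℕ) = n + 1 := by omega
          simp [Fin.ext_iff, this]
        rw [hb, of_true_succ]
        refine (pathGen_comm ?_).map (PushoutI.of (φ := raagφ (n+1)) false)
        have hj2 : (j : ℕ) = n + 2 := by omega
        simp only [Fin.coe_castSucc]
        omega)

lemma E_gen_lt (n : ℕ) (i : Fin (n+3)) (h : (i : ℕ) < n + 2) :
    E n (pathGen (n+3) i) = PushoutI.of true (pathGen (n+2) ⟨i, h⟩) := by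
  rw [E, pathHom_gen, dif_pos h]

lemma E_gen_last (n : ℕ) (i : Fin (n+3)) (h : ¬ (i : ℕ) < n + 2) :
    E n (pathGen (n+3) i) = PushoutI.of false (pathGen (n+2) ⟨(i : ℕ) - 1, by omega⟩) := by
  rw [E, pathHom_gen, dif_neg h]

/-- The inverse homomorphism. -/
def Einv (n : ℕ) : Amal (n+1) →* PathGroup (n+3) :=
  PushoutI.lift (fun b => cond b (incl (n+2)) (shif (n+2)))
    ((incl (n+2)).comp (shif (n+1))) (by
      intro i
      cases i
      · apply pathHom_ext
        intro j
        show shif (n+2) (incl (n+1) (pathGen (n+1) j)) =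
          incl (n+2) (shif (n+1) (pathGen (n+1) j))
        rw [incl_gen, shif_gen, shif_gen, incl_gen]
        have he : (j.castSucc).succ = (j.succ).castSucc := by
          apply Fin.ext
          simp
        rw [he]
      · rfl)

lemma Einv_of_true (n : ℕ) (y : PathGroup (n+2)) :
    Einv n (PushoutI.of true y) = incl (n+2) y := by
  rw [Einv, PushoutI.lift_of]
  rfl

lemma Einv_of_false (n : ℕ) (y : PathGroup (n+2)) :
    Einv n (PushoutI.of false y) = shif (n+2) y := by
  rw [Einv, PushoutI.lift_of]
  rfl

lemma Einv_E (n : ℕ) (x : PathGroup (n+3)) : Einv n (E n x) = x := by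
  have hcomp : (Einv n).comp (E n) = MonoidHom.id _ := by
    apply pathHom_ext
    intro i
    show Einv n (E n (pathGen (n+3) i)) = pathGen (n+3) i
    by_cases h : (i : ℕ) < n + 2
    · rw [E_gen_lt n i h, Einv_of_true, incl_gen]
      have he : ((⟨(i : ℕ), h⟩ : Fin (n+2))).castSucc = i := by
        apply Fin.ext
        simp
      rw [he]
    · rw [E_gen_last n i h, Einv_of_false, shif_gen]
      have he : ((⟨(i : ℕ) - 1, by omega⟩ : Fin (n+2))).succ = i := by
        apply Fin.ext
        simp only [Fin.val_succ]
        omega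
      rw [he]
  have := congrFun (congrArg DFunLike.coe hcomp) x
  simpa using this

lemma E_inj (n : ℕ) : Function.Injective (E n) := by
  intro x y h
  rw [← Einv_E n x, ← Einv_E n y, h]

lemma E_shif (n : ℕ) (y : PathGroup (n+2)) :
    E n (shif (n+2) y) = PushoutI.of false y := by
  have hcomp : (E n).comp (shif (n+2)) = PushoutI.of (φ := raagφ (n+1)) false := by
    apply pathHom_ext
    intro j
    show E n (shif (n+2) (pathGen (n+2) j)) = PushoutI.of false (pathGen (n+2) j)
    rw [shif_gen]
    by_cases h : (j : ℕ) + 1 < n + 2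
    · rw [E_gen_lt n j.succ (by simpa using h)]
      have hb : (⟨(j.succ : ℕ), by simpa using h⟩ : Fin (n+2)) =
          (⟨(j : ℕ), by omega⟩ : Fin (n+1)).succ := by
        simp [Fin.ext_iff]
      rw [hb, of_true_succ]
      have he : ((⟨(j : ℕ), by omega⟩ : Fin (n+1))).castSucc = j := by
        apply Fin.ext
        simp
      rw [he]
    · rw [E_gen_last n j.succ (by simpa using h)]
      have he : (⟨((j.succ : Fin (n+3)) : ℕ) - 1, by omega⟩ : Fin (n+2)) = j := by
        apply Fin.ext
        simp only [Fin.val_succ]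
        omega
      rw [he]
  have := congrFun (congrArg DFunLike.coe hcomp) y
  simpa using this

lemma mem_shif_range_iff (n : ℕ) (u : PathGroup (n+3)) :
    u ∈ (shif (n+2)).range ↔ E n u ∈ (PushoutI.of (φ := raagφ (n+1)) false).range := by
  constructor
  · rintro ⟨y, rfl⟩
    exact ⟨y, (E_shif n y).symm⟩
  · rintro ⟨y, hy⟩
    refine ⟨y, ?_⟩
    have : Einv n (PushoutI.of false y) = Einv n (E n u) := by rw [hy]
    rw [Einv_of_false, Einv_E] at this
    exact this

end PathSplit


namespace Amalg
open Monoid Monoid.PushoutI Monoid.CoprodI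

variable {H : Type*} [Group H] {G : Bool → Type*} [∀ i, Group (G i)]
  (φ : ∀ i, H →* G i)

/-- value of a letter -/
def lval (l : Σ i, G i) : PushoutI φ := PushoutI.of l.1 l.2

/-- product of a list of letters -/
def lprod (L : List (Σ i, G i)) : PushoutI φ := (L.map (lval φ)).prod

@[simp] lemma lprod_nil : lprod φ [] = 1 := rfl
@[simp] lemma lprod_cons (l : Σ i, G i) (L : List (Σ i, G i)) :
    lprod φ (l :: L) = lval φ l * lprod φ L := by simp [lprod]
lemma lprod_append (L1 L2 : List (Σ i, G i)) :
    lprod φ (L1 ++ L2) = lprod φ L1 * lprod φ L2 := by simp [lprod]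
@[simp] lemma lval_mk (i : Bool) (g : G i) : lval φ ⟨i, g⟩ = PushoutI.of i g := rfl

/-- A list of letters is reduced: adjacent letters lie in different factors, and no letter
is in the image of the base group. -/
def Alt (L : List (Σ i, G i)) : Prop :=
  L.Chain' (fun a b => a.1 ≠ b.1) ∧ ∀ l ∈ L, l.2 ∉ (φ l.1).range

lemma Alt.nil : Alt φ ([] : List (Σ i, G i)) := ⟨List.isChain_nil, by simp⟩

lemma Alt.tail {l L} (h : Alt φ (l :: L)) : Alt φ L :=
  ⟨h.1.tail, fun x hx => h.2 x (List.mem_cons_of_mem _ hx)⟩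

lemma Alt.append {L1 L2} (h1 : Alt φ L1) (h2 : Alt φ L2)
    (hj : ∀ x ∈ L1.getLast?, ∀ y ∈ L2.head?, x.1 ≠ y.1) : Alt φ (L1 ++ L2) := by
  refine ⟨List.isChain_append.2 ⟨h1.1, h2.1, hj⟩, ?_⟩
  intro l hl
  rcases List.mem_append.1 hl with h | h
  · exact h1.2 l h
  · exact h2.2 l h

/-- The key normal-form input: a nonempty reduced word does not represent an element
of the base group. -/
theorem lprod_not_mem_base (hφ : ∀ i, Function.Injective (φ i)) {L : List (Σ i, G i)}
    (hL : Alt φ L) (hne : L ≠ []) : lprod φ L ∉ (PushoutI.base φ).range := by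
  intro hmem
  have hone : ∀ l ∈ L, Sigma.snd l ≠ 1 := by
    intro l hl h1
    exact hL.2 l hl (h1 ▸ one_mem _)
  let w : Word G := ⟨L, hone, hL.1⟩
  have hred : Reduced φ w := fun g hg => hL.2 g hg
  have hprod : PushoutI.ofCoprodI (φ := φ) w.prod = lprod φ L := by
    show PushoutI.ofCoprodI (List.prod (L.map fun l => CoprodI.of l.snd)) = lprod φ L
    rw [map_list_prod, lprod, List.map_map]
    congr 1
  have hempty := hred.eq_empty_of_mem_range hφ (by rw [hprod]; exact hmem)
  have : L = [] := congrArg Word.toList hempty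
  exact hne this

/-- One element in the base group's image absorbs into letters. -/
lemma of_base_eq (i : Bool) (h : H) :
    PushoutI.of (φ := φ) i (φ i h) = PushoutI.base φ h := PushoutI.of_apply_eq_base φ i h

/-- Prepending a letter to a reduced expression. -/
theorem prepLetter (i : Bool) (g : G i) {L : List (Σ i, G i)} (hL : Alt φ L) :
    ∃ (h' : H) (L' : List (Σ i, G i)), Alt φ L' ∧
      PushoutI.of i g * lprod φ L = PushoutI.base φ h' * lprod φ L' ∧
      L'.length ≤ L.length + 1 ∧
      (∀ l₀ ∈ L.head?, l₀.1 = i → L'.length ≤ L.length) := by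
  classical
  match L, hL with
  | [], _ =>
    by_cases hg : g ∈ (φ i).range
    · obtain ⟨h, rfl⟩ := hg
      exact ⟨h, [], Alt.nil φ, by simp [of_base_eq], by simp, by simp⟩
    · exact ⟨1, [⟨i, g⟩], ⟨List.isChain_singleton _, by simpa using hg⟩, by simp, by simp, by simp⟩
  | ⟨j, g'⟩ :: T, hL =>
    by_cases hij : i = j
    · subst hij
      by_cases hg : g * g' ∈ (φ i).range
      · obtain ⟨h, hh⟩ := hg
        refine ⟨h, T, hL.tail φ, ?_, by simp only [List.length_cons]; omega, by simp⟩
        rw [lprod_cons]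
        simp only [lval_mk]
        rw [← mul_assoc, ← map_mul, ← hh, of_base_eq]
      · refine ⟨1, ⟨i, g * g'⟩ :: T, ?_, ?_, by simp, by simp⟩
        · refine ⟨?_, ?_⟩
          · rcases T with _ | ⟨t, T⟩
            · exact List.isChain_singleton _
            · exact List.IsChain.cons_cons (List.isChain_cons_cons.1 hL.1).1 (hL.1.tail)
          · intro l hl
            rcases List.mem_cons.1 hl with rfl | hmem
            · simpa using hg
            · exact hL.2 l (List.mem_cons_of_mem _ hmem)
        · rw [lprod_cons, lprod_cons]
          simp [lval_mk, map_mul, mul_assoc]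
    · by_cases hg : g ∈ (φ i).range
      · obtain ⟨h, rfl⟩ := hg
        refine ⟨h, ⟨j, g'⟩ :: T, hL, by rw [of_base_eq], by simp, ?_⟩
        intro l₀ hl₀ hfst
        simp only [List.head?_cons, Option.mem_def, Option.some.injEq] at hl₀
        subst hl₀
        exact absurd hfst.symm hij
      · refine ⟨1, ⟨i, g⟩ :: ⟨j, g'⟩ :: T, ?_, by simp, by simp, ?_⟩
        · refine ⟨List.IsChain.cons_cons (by simpa using hij) hL.1, ?_⟩
          intro l hl
          rcases List.mem_cons.1 hl with rfl | hmem
          · simpa using hg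
          · exact hL.2 l hmem
        · intro l₀ hl₀ hfst
          simp only [List.head?_cons, Option.mem_def, Option.some.injEq] at hl₀
          subst hl₀
          exact absurd hfst.symm hij

/-- Every element of the pushout has a reduced expression. -/
theorem exists_expr (x : PushoutI φ) :
    ∃ (h : H) (L : List (Σ i, G i)), Alt φ L ∧ x = PushoutI.base φ h * lprod φ L := by
  have key : ∀ x : PushoutI φ, ∀ y : PushoutI φ,
      (∃ h L, Alt φ L ∧ y = PushoutI.base φ h * lprod φ L) →
      (∃ h L, Alt φ L ∧ x * y = PushoutI.base φ h * lprod φ L) := by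
    intro x
    induction x using PushoutI.induction_on with
    | of i g =>
      rintro y ⟨h, L, hL, rfl⟩
      obtain ⟨h', L', hL', heq, -, -⟩ := prepLetter φ i (g * φ i h) hL
      refine ⟨h', L', hL', ?_⟩
      rw [← mul_assoc, ← heq, map_mul, of_base_eq]
    | base h =>
      rintro y ⟨h', L, hL, rfl⟩
      exact ⟨h * h', L, hL, by simp [mul_assoc]⟩
    | mul x₁ x₂ ih₁ ih₂ =>
      rintro y hy
      rw [mul_assoc]
      exact ih₁ _ (ih₂ _ hy)
  have h1 : ∃ h L, Alt φ L ∧ (1 : PushoutI φ) = PushoutI.base φ h * lprod φ L :=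
    ⟨1, [], Alt.nil φ, by simp⟩
  simpa using key x 1 h1


section Inv

/-- Inverse of a letter. -/
def iv (l : Σ i, G i) : Σ i, G i := ⟨l.1, l.2⁻¹⟩

@[simp] lemma iv_fst (l : Σ i, G i) : (iv l).1 = l.1 := rfl

/-- Inverse of a word of letters. -/
def invL (L : List (Σ i, G i)) : List (Σ i, G i) := (L.map iv).reverse

@[simp] lemma invL_nil : invL ([] : List (Σ i, G i)) = [] := rfl

lemma invL_cons (l : Σ i, G i) (L : List (Σ i, G i)) :
    invL (l :: L) = invL L ++ [iv l] := by simp [invL]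

@[simp] lemma invL_length (L : List (Σ i, G i)) : (invL L).length = L.length := by simp [invL]

lemma lprod_invL (L : List (Σ i, G i)) : lprod φ (invL L) = (lprod φ L)⁻¹ := by
  induction L with
  | nil => simp
  | cons l L ih =>
    have hl : lval φ (iv l) = (lval φ l)⁻¹ := by
      show PushoutI.of l.1 l.2⁻¹ = (PushoutI.of l.1 l.2)⁻¹
      rw [map_inv]
    rw [invL_cons, lprod_append, ih, lprod_cons, lprod_cons, lprod_nil, mul_inv_rev, hl, mul_one]

lemma notin_inv {i : Bool} {g : G i} (h : g ∉ (φ i).range) : g⁻¹ ∉ (φ i).range :=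
  fun hm => h (inv_mem_iff.1 hm)

lemma Alt.inv {L : List (Σ i, G i)} (h : Alt φ L) : Alt φ (invL L) := by
  constructor
  · show List.IsChain _ ((L.map iv).reverse)
    rw [List.isChain_reverse]
    refine (List.isChain_map iv).2 ?_
    exact h.1.imp fun _ _ hab => hab.symm
  · intro l hl
    simp only [invL, List.mem_reverse, List.mem_map] at hl
    obtain ⟨l', hl', rfl⟩ := hl
    exact fun hr => h.2 l' hl' (inv_mem_iff.1 hr)

lemma head?_invL (L : List (Σ i, G i)) : (invL L).head? = L.getLast?.map iv := by
  simp [invL]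

lemma getLast?_invL (L : List (Σ i, G i)) : (invL L).getLast? = L.head?.map iv := by
  simp [invL]


lemma invL_append (A B : List (Σ i, G i)) : invL (A ++ B) = invL B ++ invL A := by
  simp [invL]

lemma Alt.split {L1 L2 : List (Σ i, G i)} (h : Alt φ (L1 ++ L2)) :
    Alt φ L1 ∧ Alt φ L2 ∧ ∀ x ∈ L1.getLast?, ∀ y ∈ L2.head?, x.1 ≠ y.1 := by
  obtain ⟨hc, hm⟩ := h
  simp only [List.Chain', List.isChain_append] at hc
  exact ⟨⟨hc.1, fun l hl => hm l (by simp [hl])⟩,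
    ⟨hc.2.1, fun l hl => hm l (by simp [hl])⟩, hc.2.2⟩

lemma bne' {x y : Bool} (h : x ≠ y) : x = !y := by cases x <;> cases y <;> simp_all

lemma head_fst_ne {f : Bool} (T' B4 : List (Σ i, G i))
    (hT : ∀ w ∈ T'.getLast?, w.1 ≠ f) (hB : T' = [] → ∀ y ∈ B4.head?, y.1 ≠ f) :
    ∀ y ∈ (invL T' ++ B4).head?, y.1 ≠ f := by
  intro y hy
  rw [List.head?_append] at hy
  rcases hh : T'.getLast? with _ | w
  · have hT'nil : T' = [] := List.getLast?_eq_none_iff.1 hh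
    rw [hT'nil] at hy
    simp only [invL_nil, List.head?_nil, Option.none_or] at hy
    exact hB hT'nil y hy
  · have hsome : (invL T').head? = some (iv w) := by rw [head?_invL, hh]; rfl
    rw [hsome] at hy
    rw [Option.some_or] at hy
    simp only [Option.mem_def, Option.some.injEq] at hy
    subst hy
    exact hT w (by rw [hh]; rfl)

end Inv

section Centralizer

variable (hφ : ∀ i, Function.Injective (φ i))
variable (a : G true) (b : G false)
variable (ha : a ∉ (φ true).range) (hb : b ∉ (φ false).range)

local notation "cc" => PushoutI.of (φ := φ) true a * PushoutI.of (φ := φ) false b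

lemma conj_eq {x : PushoutI φ} (hcomm : x * cc = cc * x) :
    (PushoutI.of true a)⁻¹ * x * PushoutI.of true a =
      PushoutI.of false b * x * (PushoutI.of false b)⁻¹ := by
  have h1 : (PushoutI.of true a)⁻¹ * (x * (PushoutI.of true a * PushoutI.of false b)) *
      (PushoutI.of false b)⁻¹ =
      (PushoutI.of true a)⁻¹ * (PushoutI.of true a * PushoutI.of false b * x) *
      (PushoutI.of false b)⁻¹ := by rw [hcomm]
  calc (PushoutI.of true a)⁻¹ * x * PushoutI.of true a
      = (PushoutI.of true a)⁻¹ * (x * (PushoutI.of true a * PushoutI.of false b)) *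
        (PushoutI.of false b)⁻¹ := by group
    _ = (PushoutI.of true a)⁻¹ * (PushoutI.of true a * PushoutI.of false b * x) *
        (PushoutI.of false b)⁻¹ := h1
    _ = PushoutI.of false b * x * (PushoutI.of false b)⁻¹ := by group

include hφ ha hb in
/-- No single reduced letter commutes with `cc`. -/
lemma singleLetter {i : Bool} {g : G i} (hgr : g ∉ (φ i).range)
    (hcomm : PushoutI.of i g * cc = cc * PushoutI.of i g) : False := by
  have hkey := conj_eq φ a b (x := PushoutI.of i g) hcomm
  have h1mem : (1 : PushoutI φ) ∈ (PushoutI.base φ).range := one_mem _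
  cases i with
  | true =>
    by_cases hy : a⁻¹ * g * a ∈ (φ true).range
    · obtain ⟨r, hr⟩ := hy
      have hR : lprod φ [⟨false, b⟩, ⟨true, g⟩, ⟨false, b⁻¹⟩] ∈ (PushoutI.base φ).range := by
        refine ⟨r, ?_⟩
        rw [← of_base_eq φ true r, hr]
        simp only [lprod_cons, lprod_nil, lval_mk, map_mul, map_inv, mul_one]
        exact hkey
      have hAlt : Alt φ [⟨false, b⟩, ⟨true, g⟩, ⟨false, b⁻¹⟩] := by
        refine ⟨by simp [List.Chain'], ?_⟩
        simp only [List.forall_mem_cons]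
        exact ⟨hb, hgr, notin_inv φ hb, by simp⟩
      exact lprod_not_mem_base φ hφ hAlt (by simp) hR
    · have e1 : lprod φ [⟨true, (a⁻¹ * g * a)⁻¹⟩, ⟨false, b⟩, ⟨true, g⟩, ⟨false, b⁻¹⟩]
          = ((PushoutI.of true a)⁻¹ * PushoutI.of true g * PushoutI.of true a)⁻¹ *
            (PushoutI.of false b * PushoutI.of true g * (PushoutI.of false b)⁻¹) := by
        simp only [lprod_cons, lprod_nil, lval_mk, map_mul, map_inv, mul_one]
        group
      have hW : lprod φ [⟨true, (a⁻¹ * g * a)⁻¹⟩, ⟨false, b⟩, ⟨true, g⟩, ⟨false, b⁻¹⟩] = 1 := by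
        rw [e1, ← hkey, inv_mul_cancel]
      have hAlt : Alt φ [⟨true, (a⁻¹ * g * a)⁻¹⟩, ⟨false, b⟩, ⟨true, g⟩, ⟨false, b⁻¹⟩] := by
        refine ⟨by simp [List.Chain'], ?_⟩
        simp only [List.forall_mem_cons]
        exact ⟨notin_inv φ hy, hb, hgr, notin_inv φ hb, by simp⟩
      exact lprod_not_mem_base φ hφ hAlt (by simp) (hW ▸ h1mem)
  | false =>
    by_cases hy : b * g * b⁻¹ ∈ (φ false).range
    · obtain ⟨r, hr⟩ := hy
      have hR : lprod φ [⟨true, a⁻¹⟩, ⟨false, g⟩, ⟨true, a⟩] ∈ (PushoutI.base φ).range := by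
        refine ⟨r, ?_⟩
        rw [← of_base_eq φ false r, hr]
        simp only [lprod_cons, lprod_nil, lval_mk, map_mul, map_inv, mul_one]
        exact hkey.symm
      have hAlt : Alt φ [⟨true, a⁻¹⟩, ⟨false, g⟩, ⟨true, a⟩] := by
        refine ⟨by simp [List.Chain'], ?_⟩
        simp only [List.forall_mem_cons]
        exact ⟨notin_inv φ ha, hgr, ha, by simp⟩
      exact lprod_not_mem_base φ hφ hAlt (by simp) hR
    · have e1 : lprod φ [⟨false, (b * g * b⁻¹)⁻¹⟩, ⟨true, a⁻¹⟩, ⟨false, g⟩, ⟨true, a⟩]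
          = (PushoutI.of false b * PushoutI.of false g * (PushoutI.of false b)⁻¹)⁻¹ *
            ((PushoutI.of true a)⁻¹ * PushoutI.of false g * PushoutI.of true a) := by
        simp only [lprod_cons, lprod_nil, lval_mk, map_mul, map_inv, mul_one]
        group
      have hW : lprod φ [⟨false, (b * g * b⁻¹)⁻¹⟩, ⟨true, a⁻¹⟩, ⟨false, g⟩, ⟨true, a⟩] = 1 := by
        rw [e1, hkey, inv_mul_cancel]
      have hAlt : Alt φ [⟨false, (b * g * b⁻¹)⁻¹⟩, ⟨true, a⁻¹⟩, ⟨false, g⟩, ⟨true, a⟩] := by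
        refine ⟨by simp [List.Chain'], ?_⟩
        simp only [List.forall_mem_cons]
        exact ⟨notin_inv φ hy, notin_inv φ ha, hgr, ha, by simp⟩
      exact lprod_not_mem_base φ hφ hAlt (by simp) (hW ▸ h1mem)

lemma rotB {g₁ : G false} {T2 : List (Σ i, G i)} (hT2 : Alt φ T2) (hne : T2 ≠ [])
    (hhead : ∀ l ∈ T2.head?, l.1 = true) (hbz : b * g₁ ∈ (φ false).range) :
    ∃ h' L', Alt φ L' ∧ L'.length ≤ T2.length ∧
      cc * lprod φ (⟨false, g₁⟩ :: T2) = PushoutI.base φ h' * lprod φ L' := by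
  obtain ⟨r, hr⟩ := hbz
  have key : cc * lprod φ (⟨false, g₁⟩ :: T2) =
      PushoutI.of true (a * φ true r) * lprod φ T2 :=
    calc cc * lprod φ (⟨false, g₁⟩ :: T2)
        = PushoutI.of true a * (PushoutI.of false b * PushoutI.of false g₁) * lprod φ T2 := by
          rw [lprod_cons]; simp only [lval_mk]; group
      _ = PushoutI.of true a * PushoutI.of false (b * g₁) * lprod φ T2 := by rw [map_mul]
      _ = PushoutI.of true a * PushoutI.base φ r * lprod φ T2 := by rw [← hr, of_base_eq]
      _ = PushoutI.of true (a * φ true r) * lprod φ T2 := by rw [map_mul, of_base_eq]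
  obtain ⟨h', L', hL', heq, hlen, hmerge⟩ := prepLetter φ true (a * φ true r) hT2
  rcases hh : T2.head? with _ | l₀
  · exact absurd (List.head?_eq_none_iff.1 hh) hne
  · exact ⟨h', L', hL', hmerge l₀ (by rw [hh]; rfl) (hhead l₀ (by rw [hh]; rfl)),
      by rw [key, heq]⟩

lemma rotA {g₁ : G true} {T2 : List (Σ i, G i)} (hT2 : Alt φ T2) (hne : T2 ≠ [])
    (hhead : ∀ l ∈ T2.head?, l.1 = false) (haz : a⁻¹ * g₁ ∈ (φ true).range) :
    ∃ h' L', Alt φ L' ∧ L'.length ≤ T2.length ∧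
      (cc)⁻¹ * lprod φ (⟨true, g₁⟩ :: T2) = PushoutI.base φ h' * lprod φ L' := by
  obtain ⟨r, hr⟩ := haz
  have key : (cc)⁻¹ * lprod φ (⟨true, g₁⟩ :: T2) =
      PushoutI.of false (b⁻¹ * φ false r) * lprod φ T2 :=
    calc (cc)⁻¹ * lprod φ (⟨true, g₁⟩ :: T2)
        = (PushoutI.of false b)⁻¹ * ((PushoutI.of true a)⁻¹ * PushoutI.of true g₁) *
            lprod φ T2 := by rw [lprod_cons]; simp only [lval_mk]; group
      _ = (PushoutI.of false b)⁻¹ * (PushoutI.of true a⁻¹ * PushoutI.of true g₁) *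
            lprod φ T2 := by rw [map_inv]
      _ = (PushoutI.of false b)⁻¹ * PushoutI.of true (a⁻¹ * g₁) * lprod φ T2 := by rw [map_mul]
      _ = (PushoutI.of false b)⁻¹ * PushoutI.base φ r * lprod φ T2 := by rw [← hr, of_base_eq]
      _ = PushoutI.of false b⁻¹ * PushoutI.base φ r * lprod φ T2 := by rw [map_inv]
      _ = PushoutI.of false (b⁻¹ * φ false r) * lprod φ T2 := by rw [map_mul, of_base_eq]
  obtain ⟨h', L', hL', heq, hlen, hmerge⟩ := prepLetter φ false (b⁻¹ * φ false r) hT2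
  rcases hh : T2.head? with _ | l₀
  · exact absurd (List.head?_eq_none_iff.1 hh) hne
  · exact ⟨h', L', hL', hmerge l₀ (by rw [hh]; rfl) (hhead l₀ (by rw [hh]; rfl)),
      by rw [key, heq]⟩


include hφ ha hb in
theorem commute_mem_zpowers
    (hbase : ∀ h : H, PushoutI.base φ h * cc = cc * PushoutI.base φ h → h = 1) :
    ∀ x : PushoutI φ, x * cc = cc * x → x ∈ Subgroup.zpowers cc := by
  classical
  suffices key : ∀ n : ℕ, ∀ x : PushoutI φ,
      (∃ h L, Alt φ L ∧ L.length ≤ n ∧ x = PushoutI.base φ h * lprod φ L) →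
      x * cc = cc * x → x ∈ Subgroup.zpowers cc by
    intro x hcomm
    obtain ⟨h, L, hL, hx⟩ := exists_expr φ x
    exact key L.length x ⟨h, L, hL, le_rfl, hx⟩ hcomm
  intro n
  induction n using Nat.strong_induction_on with
  | _ n IH =>
  rintro x ⟨h, L, hL, hlen, rfl⟩ hcomm
  rcases L with _ | ⟨⟨i₁, g₁⟩, T⟩
  · have h1 : h = 1 := hbase h (by simpa using hcomm)
    rw [h1]
    simpa using Subgroup.one_mem _
  · -- fold the base head into the first letter
    obtain ⟨g₁', hg₁r, hAlt2, hxeq⟩ : ∃ g₁' : G i₁, g₁' ∉ (φ i₁).range ∧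
        Alt φ (⟨i₁, g₁'⟩ :: T) ∧
        PushoutI.base φ h * lprod φ (⟨i₁, g₁⟩ :: T) = lprod φ (⟨i₁, g₁'⟩ :: T) := by
      refine ⟨φ i₁ h * g₁, ?_, ?_, ?_⟩
      · rintro ⟨r, hr⟩
        exact hL.2 ⟨i₁, g₁⟩ (by simp)
          ⟨h⁻¹ * r, by rw [map_mul, map_inv, hr]; group⟩
      · refine ⟨List.IsChain.cons hL.1.tail (List.isChain_cons.1 hL.1).1, ?_⟩
        intro l hl
        rcases List.mem_cons.1 hl with rfl | hmem
        · rintro ⟨r, hr⟩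
          exact hL.2 ⟨i₁, g₁⟩ (by simp)
            ⟨h⁻¹ * r, by rw [map_mul, map_inv, hr]; group⟩
        · exact hL.2 l (List.mem_cons_of_mem _ hmem)
      · rw [lprod_cons, lprod_cons, lval_mk, lval_mk, map_mul, of_base_eq, mul_assoc]
    rw [hxeq] at hcomm ⊢

    rcases List.eq_nil_or_concat T with rfl | ⟨T', zk, hTeq⟩
    · -- single letter case : contradiction
      exact (singleLetter φ hφ a b ha hb hg₁r (by simpa using hcomm)).elim
    rw [List.concat_eq_append] at hTeq
    subst hTeq
    obtain ⟨ik, gk⟩ := zk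
    -- basic structural facts
    have hsplit := Alt.split φ (L1 := ⟨i₁,g₁'⟩ :: T') (L2 := [⟨ik,gk⟩])
      (by rw [List.cons_append]; exact hAlt2)
    have hFront : Alt φ (⟨i₁,g₁'⟩ :: T') := hsplit.1
    have hgkr : gk ∉ (φ ik).range := hsplit.2.1.2 ⟨ik,gk⟩ (by simp)
    have hJ : ∀ w ∈ (⟨i₁,g₁'⟩ :: T').getLast?, w.1 ≠ ik := by
      intro w hw
      exact hsplit.2.2 w hw ⟨ik,gk⟩ (by simp)
    have hJT' : ∀ w ∈ T'.getLast?, w.1 ≠ ik := fun w hw => hJ w (List.mem_getLast?_cons hw)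
    have hT : Alt φ (T' ++ [⟨ik,gk⟩]) := hAlt2.tail φ
    have hT' : Alt φ T' := (Alt.split φ hT).1
    have hH0 := (List.isChain_cons.1 hAlt2.1).1
    have hH : ∀ y ∈ (T' ++ [⟨ik,gk⟩] : List ((i : Bool) × G i)).head?, y.1 ≠ i₁ := fun y hy => (hH0 y hy).symm
    have hHT' : ∀ y ∈ T'.head?, y.1 ≠ i₁ := fun y hy =>
      hH y (List.mem_head?_append_of_mem_head? hy)
    have hTne : (T' ++ [⟨ik,gk⟩] : List ((i : Bool) × G i)) ≠ [] := by simp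
    have hheadT : ∀ l ∈ (T' ++ [⟨ik,gk⟩] : List ((i : Bool) × G i)).head?, l.1 = !i₁ := fun l hl => bne' (hH l hl)
    have hlast2 : (⟨i₁,g₁'⟩ :: (T' ++ [⟨ik,gk⟩])).getLast? = some ⟨ik,gk⟩ := by
      rw [← List.cons_append, List.getLast?_concat]
    -- the inverse word
    have hMeq : invL (⟨i₁,g₁'⟩ :: (T' ++ [⟨ik,gk⟩])) =
        ⟨ik, gk⁻¹⟩ :: (invL T' ++ [⟨i₁, g₁'⁻¹⟩]) := by
      rw [invL_cons, invL_append]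
      simp [invL, iv]
    have hxinv : (lprod φ (⟨i₁,g₁'⟩ :: (T' ++ [⟨ik,gk⟩])))⁻¹ =
        lprod φ (⟨ik,gk⁻¹⟩ :: (invL T' ++ [⟨i₁,g₁'⁻¹⟩])) := by
      rw [← lprod_invL, hMeq]
    have hAltM : Alt φ (⟨ik,gk⁻¹⟩ :: (invL T' ++ [⟨i₁,g₁'⁻¹⟩])) := by
      rw [← hMeq]; exact hAlt2.inv φ
    have hT2' : Alt φ (invL T' ++ [⟨i₁,g₁'⁻¹⟩]) := hAltM.tail φ
    have hT2'ne : (invL T' ++ [⟨i₁,g₁'⁻¹⟩] : List ((i : Bool) × G i)) ≠ [] := by simp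
    have hheadM : ∀ l ∈ (invL T' ++ [⟨i₁,g₁'⁻¹⟩] : List ((i : Bool) × G i)).head?, l.1 = !ik := by
      intro l hl
      exact bne' (((List.isChain_cons.1 hAltM.1).1 l hl).symm)
    have hJ2 : ∀ w ∈ (invL T').getLast?, w.1 ≠ i₁ := by
      intro w hw
      rw [getLast?_invL] at hw
      rcases hh : T'.head? with _ | w'
      · rw [hh] at hw; simp at hw
      · rw [hh] at hw
        simp only [Option.map_some, Option.mem_def, Option.some.injEq] at hw
        subst hw
        exact hHT' w' (by rw [hh]; rfl)
    have hlen2 : T'.length + 2 ≤ n := by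
      simp only [List.length_cons, List.length_append, List.length_singleton] at hlen
      omega
    have hcx : Commute (lprod φ (⟨i₁,g₁'⟩ :: (T' ++ [⟨ik,gk⟩]))) (cc) := hcomm
    have hccmem : (cc) ∈ Subgroup.zpowers (cc) := Subgroup.mem_zpowers _
    cases i₁ <;> cases ik
    · -- branch
      by_cases hbz : b * g₁' ∈ (φ false).range
      · obtain ⟨h', L', hL', hlen', heq⟩ := rotB φ a b hT hTne
          (fun l hl => by simpa using hheadT l hl) hbz
        have hy : (PushoutI.of true a * PushoutI.of false b) * lprod φ (⟨false,g₁'⟩ :: (T' ++ [⟨false,gk⟩])) ∈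
            Subgroup.zpowers (PushoutI.of true a * PushoutI.of false b) := by
          refine IH (T'.length + 1) (by omega) _ ⟨h', L', hL', by simpa using hlen', heq⟩ ?_
          exact Commute.mul_left (Commute.refl _) hcx
        have hxe : lprod φ (⟨false,g₁'⟩ :: (T' ++ [⟨false,gk⟩])) =
            (PushoutI.of true a * PushoutI.of false b)⁻¹ *
            ((PushoutI.of true a * PushoutI.of false b) * lprod φ (⟨false,g₁'⟩ :: (T' ++ [⟨false,gk⟩]))) := by group
        rw [hxe]
        exact Subgroup.mul_mem _ (Subgroup.inv_mem _ hccmem) hy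
      · by_cases hbk : b * gk⁻¹ ∈ (φ false).range
        · obtain ⟨h', L', hL', hlen', heq⟩ := rotB φ a b hT2' hT2'ne
            (fun l hl => by simpa using hheadM l hl) hbk
          have hy : (PushoutI.of true a * PushoutI.of false b) * (lprod φ (⟨false,g₁'⟩ :: (T' ++ [⟨false,gk⟩])))⁻¹ ∈
              Subgroup.zpowers (PushoutI.of true a * PushoutI.of false b) := by
            refine IH (T'.length + 1) (by omega) _
              ⟨h', L', hL', by simpa using hlen', by rw [hxinv]; exact heq⟩ ?_
            exact Commute.mul_left (Commute.refl _) hcx.inv_left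
          have hxe : (lprod φ (⟨false,g₁'⟩ :: (T' ++ [⟨false,gk⟩])))⁻¹ =
              (PushoutI.of true a * PushoutI.of false b)⁻¹ *
              ((PushoutI.of true a * PushoutI.of false b) * (lprod φ (⟨false,g₁'⟩ :: (T' ++ [⟨false,gk⟩])))⁻¹) := by group
          refine (Subgroup.inv_mem_iff _).1 ?_
          rw [hxe]
          exact Subgroup.mul_mem _ (Subgroup.inv_mem _ hccmem) hy
        · -- contradiction case
          have hT'ne : T' ≠ [] := by
            intro h0
            subst h0
            exact (hJ ⟨false, g₁'⟩ (by simp)) rfl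
          have hE : Alt φ [(⟨false, g₁'⁻¹ * b⁻¹⟩ : (i : Bool) × G i), ⟨true, a⁻¹⟩] := by
            refine ⟨by simp [List.Chain'], ?_⟩
            simp only [List.forall_mem_cons]
            refine ⟨?_, notin_inv φ ha, by simp⟩
            rw [← mul_inv_rev]
            exact notin_inv φ hbz
          have hB2 : Alt φ [(⟨true, a⟩ : (i : Bool) × G i), ⟨false, b * gk⁻¹⟩] := by
            refine ⟨by simp [List.Chain'], ?_⟩
            simp only [List.forall_mem_cons]
            exact ⟨ha, hbk, by simp⟩
          have hB34 : Alt φ (invL T' ++ [(⟨false, g₁'⁻¹ * b⁻¹⟩ : (i : Bool) × G i), ⟨true, a⁻¹⟩]) := by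
            refine Alt.append φ (hT'.inv φ) hE ?_
            intro w hw y hy
            have h1 := hJ2 w hw
            have hy' : ⟨false, g₁'⁻¹ * b⁻¹⟩ = y := by simpa using hy
            subst hy'
            exact h1
          have hB234 : Alt φ ([(⟨true, a⟩ : (i : Bool) × G i), ⟨false, b * gk⁻¹⟩] ++ (invL T' ++ [(⟨false, g₁'⁻¹ * b⁻¹⟩ : (i : Bool) × G i), ⟨true, a⁻¹⟩])) := by
            refine Alt.append φ hB2 hB34 ?_
            intro w hw y hy
            have hw' : ⟨false, b * gk⁻¹⟩ = w := by simpa using hw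
            subst hw'
            have h2 := head_fst_ne (f := false) T' _ hJT' (fun h0 => absurd h0 hT'ne) y hy
            exact fun hc => h2 hc.symm
          have hW : Alt φ ((⟨false,g₁'⟩ :: (T' ++ [⟨false,gk⟩])) ++ ([(⟨true, a⟩ : (i : Bool) × G i), ⟨false, b * gk⁻¹⟩] ++ (invL T' ++ [(⟨false, g₁'⁻¹ * b⁻¹⟩ : (i : Bool) × G i), ⟨true, a⁻¹⟩]))) := by
            refine Alt.append φ hAlt2 hB234 ?_
            intro w hw y hy
            rw [hlast2] at hw
            have hw' : ⟨false, gk⟩ = w := by simpa using hw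
            subst hw'
            have hy' : ⟨true, a⟩ = y := by simpa using hy
            subst hy'
            simp
          have hprodW : lprod φ ((⟨false,g₁'⟩ :: (T' ++ [⟨false,gk⟩])) ++ ([(⟨true, a⟩ : (i : Bool) × G i), ⟨false, b * gk⁻¹⟩] ++ (invL T' ++ [(⟨false, g₁'⁻¹ * b⁻¹⟩ : (i : Bool) × G i), ⟨true, a⁻¹⟩]))) =
              lprod φ (⟨false,g₁'⟩ :: (T' ++ [⟨false,gk⟩])) * (PushoutI.of true a * PushoutI.of false b) *
              (lprod φ (⟨false,g₁'⟩ :: (T' ++ [⟨false,gk⟩])))⁻¹ * (PushoutI.of true a * PushoutI.of false b)⁻¹ := by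
            simp only [lprod_append, lprod_cons, lprod_nil, lval_mk, map_mul, map_inv,
              lprod_invL, mul_one]
            group
          have hW1 : lprod φ ((⟨false,g₁'⟩ :: (T' ++ [⟨false,gk⟩])) ++ ([(⟨true, a⟩ : (i : Bool) × G i), ⟨false, b * gk⁻¹⟩] ++ (invL T' ++ [(⟨false, g₁'⁻¹ * b⁻¹⟩ : (i : Bool) × G i), ⟨true, a⁻¹⟩]))) = 1 := by
            rw [hprodW, hcomm]
            group
          exact ((lprod_not_mem_base φ hφ hW (by simp))
            (by rw [hW1]; exact one_mem _)).elim
    · -- branch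
      by_cases hbz : b * g₁' ∈ (φ false).range
      · obtain ⟨h', L', hL', hlen', heq⟩ := rotB φ a b hT hTne
          (fun l hl => by simpa using hheadT l hl) hbz
        have hy : (PushoutI.of true a * PushoutI.of false b) * lprod φ (⟨false,g₁'⟩ :: (T' ++ [⟨true,gk⟩])) ∈
            Subgroup.zpowers (PushoutI.of true a * PushoutI.of false b) := by
          refine IH (T'.length + 1) (by omega) _ ⟨h', L', hL', by simpa using hlen', heq⟩ ?_
          exact Commute.mul_left (Commute.refl _) hcx
        have hxe : lprod φ (⟨false,g₁'⟩ :: (T' ++ [⟨true,gk⟩])) =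
            (PushoutI.of true a * PushoutI.of false b)⁻¹ *
            ((PushoutI.of true a * PushoutI.of false b) * lprod φ (⟨false,g₁'⟩ :: (T' ++ [⟨true,gk⟩]))) := by group
        rw [hxe]
        exact Subgroup.mul_mem _ (Subgroup.inv_mem _ hccmem) hy
      · by_cases hka : gk * a ∈ (φ true).range
        · have haz' : a⁻¹ * gk⁻¹ ∈ (φ true).range := by
            have h2 := inv_mem hka
            rwa [mul_inv_rev] at h2
          obtain ⟨h', L', hL', hlen', heq⟩ := rotA φ a b hT2' hT2'ne
            (fun l hl => by simpa using hheadM l hl) haz'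
          have hy : (PushoutI.of true a * PushoutI.of false b)⁻¹ * (lprod φ (⟨false,g₁'⟩ :: (T' ++ [⟨true,gk⟩])))⁻¹ ∈
              Subgroup.zpowers (PushoutI.of true a * PushoutI.of false b) := by
            refine IH (T'.length + 1) (by omega) _
              ⟨h', L', hL', by simpa using hlen', by rw [hxinv]; exact heq⟩ ?_
            exact Commute.mul_left ((Commute.refl _).inv_left) hcx.inv_left
          have hxe : (lprod φ (⟨false,g₁'⟩ :: (T' ++ [⟨true,gk⟩])))⁻¹ =
              (PushoutI.of true a * PushoutI.of false b) *
              ((PushoutI.of true a * PushoutI.of false b)⁻¹ * (lprod φ (⟨false,g₁'⟩ :: (T' ++ [⟨true,gk⟩])))⁻¹) := by group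
          refine (Subgroup.inv_mem_iff _).1 ?_
          rw [hxe]
          exact Subgroup.mul_mem _ hccmem hy
        · -- contradiction case
          have hE : Alt φ [(⟨false, g₁'⁻¹ * b⁻¹⟩ : (i : Bool) × G i), ⟨true, a⁻¹⟩] := by
            refine ⟨by simp [List.Chain'], ?_⟩
            simp only [List.forall_mem_cons]
            refine ⟨?_, notin_inv φ ha, by simp⟩
            rw [← mul_inv_rev]
            exact notin_inv φ hbz
          have hB2 : Alt φ [(⟨true, gk * a⟩ : (i : Bool) × G i), ⟨false, b⟩, ⟨true, gk⁻¹⟩] := by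
            refine ⟨by simp [List.Chain'], ?_⟩
            simp only [List.forall_mem_cons]
            exact ⟨hka, hb, notin_inv φ hgkr, by simp⟩
          have hB34 : Alt φ (invL T' ++ [(⟨false, g₁'⁻¹ * b⁻¹⟩ : (i : Bool) × G i), ⟨true, a⁻¹⟩]) := by
            refine Alt.append φ (hT'.inv φ) hE ?_
            intro w hw y hy
            have h1 := hJ2 w hw
            have hy' : ⟨false, g₁'⁻¹ * b⁻¹⟩ = y := by simpa using hy
            subst hy'
            exact h1
          have hB234 : Alt φ ([(⟨true, gk * a⟩ : (i : Bool) × G i), ⟨false, b⟩, ⟨true, gk⁻¹⟩] ++ (invL T' ++ [(⟨false, g₁'⁻¹ * b⁻¹⟩ : (i : Bool) × G i), ⟨true, a⁻¹⟩])) := by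
            refine Alt.append φ hB2 hB34 ?_
            intro w hw y hy
            have hw' : ⟨true, gk⁻¹⟩ = w := by simpa using hw
            subst hw'
            have h2 := head_fst_ne (f := true) T' _ hJT' (fun _ y hy => by
              have hy' : ⟨false, g₁'⁻¹ * b⁻¹⟩ = y := by simpa using hy
              subst hy'
              simp) y hy
            exact fun hc => h2 hc.symm
          have hW : Alt φ ((⟨false,g₁'⟩ :: T') ++ ([(⟨true, gk * a⟩ : (i : Bool) × G i), ⟨false, b⟩, ⟨true, gk⁻¹⟩] ++ (invL T' ++ [(⟨false, g₁'⁻¹ * b⁻¹⟩ : (i : Bool) × G i), ⟨true, a⁻¹⟩]))) := by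
            refine Alt.append φ hFront hB234 ?_
            intro w hw y hy
            have hy' : ⟨true, gk * a⟩ = y := by simpa using hy
            subst hy'
            exact hJ w hw
          have hprodW : lprod φ ((⟨false,g₁'⟩ :: T') ++ ([(⟨true, gk * a⟩ : (i : Bool) × G i), ⟨false, b⟩, ⟨true, gk⁻¹⟩] ++ (invL T' ++ [(⟨false, g₁'⁻¹ * b⁻¹⟩ : (i : Bool) × G i), ⟨true, a⁻¹⟩]))) =
              lprod φ (⟨false,g₁'⟩ :: (T' ++ [⟨true,gk⟩])) * (PushoutI.of true a * PushoutI.of false b) *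
              (lprod φ (⟨false,g₁'⟩ :: (T' ++ [⟨true,gk⟩])))⁻¹ * (PushoutI.of true a * PushoutI.of false b)⁻¹ := by
            simp only [lprod_append, lprod_cons, lprod_nil, lval_mk, map_mul, map_inv,
              lprod_invL, mul_one]
            group
          have hW1 : lprod φ ((⟨false,g₁'⟩ :: T') ++ ([(⟨true, gk * a⟩ : (i : Bool) × G i), ⟨false, b⟩, ⟨true, gk⁻¹⟩] ++ (invL T' ++ [(⟨false, g₁'⁻¹ * b⁻¹⟩ : (i : Bool) × G i), ⟨true, a⁻¹⟩]))) = 1 := by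
            rw [hprodW, hcomm]
            group
          exact ((lprod_not_mem_base φ hφ hW (by simp))
            (by rw [hW1]; exact one_mem _)).elim
    · -- branch
      by_cases haz : a⁻¹ * g₁' ∈ (φ true).range
      · obtain ⟨h', L', hL', hlen', heq⟩ := rotA φ a b hT hTne
          (fun l hl => by simpa using hheadT l hl) haz
        have hy : (PushoutI.of true a * PushoutI.of false b)⁻¹ * lprod φ (⟨true,g₁'⟩ :: (T' ++ [⟨false,gk⟩])) ∈
            Subgroup.zpowers (PushoutI.of true a * PushoutI.of false b) := by
          refine IH (T'.length + 1) (by omega) _ ⟨h', L', hL', by simpa using hlen', heq⟩ ?_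
          exact Commute.mul_left ((Commute.refl _).inv_left) hcx
        have hxe : lprod φ (⟨true,g₁'⟩ :: (T' ++ [⟨false,gk⟩])) =
            (PushoutI.of true a * PushoutI.of false b) *
            ((PushoutI.of true a * PushoutI.of false b)⁻¹ * lprod φ (⟨true,g₁'⟩ :: (T' ++ [⟨false,gk⟩]))) := by group
        rw [hxe]
        exact Subgroup.mul_mem _ hccmem hy
      · by_cases hbk : b * gk⁻¹ ∈ (φ false).range
        · obtain ⟨h', L', hL', hlen', heq⟩ := rotB φ a b hT2' hT2'ne
            (fun l hl => by simpa using hheadM l hl) hbk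
          have hy : (PushoutI.of true a * PushoutI.of false b) * (lprod φ (⟨true,g₁'⟩ :: (T' ++ [⟨false,gk⟩])))⁻¹ ∈
              Subgroup.zpowers (PushoutI.of true a * PushoutI.of false b) := by
            refine IH (T'.length + 1) (by omega) _
              ⟨h', L', hL', by simpa using hlen', by rw [hxinv]; exact heq⟩ ?_
            exact Commute.mul_left (Commute.refl _) hcx.inv_left
          have hxe : (lprod φ (⟨true,g₁'⟩ :: (T' ++ [⟨false,gk⟩])))⁻¹ =
              (PushoutI.of true a * PushoutI.of false b)⁻¹ *
              ((PushoutI.of true a * PushoutI.of false b) * (lprod φ (⟨true,g₁'⟩ :: (T' ++ [⟨false,gk⟩])))⁻¹) := by group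
          refine (Subgroup.inv_mem_iff _).1 ?_
          rw [hxe]
          exact Subgroup.mul_mem _ (Subgroup.inv_mem _ hccmem) hy
        · -- contradiction case
          have hE : Alt φ [(⟨true, g₁'⁻¹⟩ : (i : Bool) × G i), ⟨false, b⁻¹⟩, ⟨true, a⁻¹⟩] := by
            refine ⟨by simp [List.Chain'], ?_⟩
            simp only [List.forall_mem_cons]
            exact ⟨notin_inv φ hg₁r, notin_inv φ hb, notin_inv φ ha, by simp⟩
          have hB2 : Alt φ [(⟨true, a⟩ : (i : Bool) × G i), ⟨false, b * gk⁻¹⟩] := by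
            refine ⟨by simp [List.Chain'], ?_⟩
            simp only [List.forall_mem_cons]
            exact ⟨ha, hbk, by simp⟩
          have hB34 : Alt φ (invL T' ++ [(⟨true, g₁'⁻¹⟩ : (i : Bool) × G i), ⟨false, b⁻¹⟩, ⟨true, a⁻¹⟩]) := by
            refine Alt.append φ (hT'.inv φ) hE ?_
            intro w hw y hy
            have h1 := hJ2 w hw
            have hy' : ⟨true, g₁'⁻¹⟩ = y := by simpa using hy
            subst hy'
            exact h1
          have hB234 : Alt φ ([(⟨true, a⟩ : (i : Bool) × G i), ⟨false, b * gk⁻¹⟩] ++ (invL T' ++ [(⟨true, g₁'⁻¹⟩ : (i : Bool) × G i), ⟨false, b⁻¹⟩, ⟨true, a⁻¹⟩])) := by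
            refine Alt.append φ hB2 hB34 ?_
            intro w hw y hy
            have hw' : ⟨false, b * gk⁻¹⟩ = w := by simpa using hw
            subst hw'
            have h2 := head_fst_ne (f := false) T' _ hJT' (fun _ y hy => by
              have hy' : ⟨true, g₁'⁻¹⟩ = y := by simpa using hy
              subst hy'
              simp) y hy
            exact fun hc => h2 hc.symm
          have hW : Alt φ ((⟨true,g₁'⟩ :: (T' ++ [⟨false,gk⟩])) ++ ([(⟨true, a⟩ : (i : Bool) × G i), ⟨false, b * gk⁻¹⟩] ++ (invL T' ++ [(⟨true, g₁'⁻¹⟩ : (i : Bool) × G i), ⟨false, b⁻¹⟩, ⟨true, a⁻¹⟩]))) := by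
            refine Alt.append φ hAlt2 hB234 ?_
            intro w hw y hy
            rw [hlast2] at hw
            have hw' : ⟨false, gk⟩ = w := by simpa using hw
            subst hw'
            have hy' : ⟨true, a⟩ = y := by simpa using hy
            subst hy'
            simp
          have hprodW : lprod φ ((⟨true,g₁'⟩ :: (T' ++ [⟨false,gk⟩])) ++ ([(⟨true, a⟩ : (i : Bool) × G i), ⟨false, b * gk⁻¹⟩] ++ (invL T' ++ [(⟨true, g₁'⁻¹⟩ : (i : Bool) × G i), ⟨false, b⁻¹⟩, ⟨true, a⁻¹⟩]))) =
              lprod φ (⟨true,g₁'⟩ :: (T' ++ [⟨false,gk⟩])) * (PushoutI.of true a * PushoutI.of false b) *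
              (lprod φ (⟨true,g₁'⟩ :: (T' ++ [⟨false,gk⟩])))⁻¹ * (PushoutI.of true a * PushoutI.of false b)⁻¹ := by
            simp only [lprod_append, lprod_cons, lprod_nil, lval_mk, map_mul, map_inv,
              lprod_invL, mul_one]
            group
          have hW1 : lprod φ ((⟨true,g₁'⟩ :: (T' ++ [⟨false,gk⟩])) ++ ([(⟨true, a⟩ : (i : Bool) × G i), ⟨false, b * gk⁻¹⟩] ++ (invL T' ++ [(⟨true, g₁'⁻¹⟩ : (i : Bool) × G i), ⟨false, b⁻¹⟩, ⟨true, a⁻¹⟩]))) = 1 := by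
            rw [hprodW, hcomm]
            group
          exact ((lprod_not_mem_base φ hφ hW (by simp))
            (by rw [hW1]; exact one_mem _)).elim
    · -- branch
      by_cases haz : a⁻¹ * g₁' ∈ (φ true).range
      · obtain ⟨h', L', hL', hlen', heq⟩ := rotA φ a b hT hTne
          (fun l hl => by simpa using hheadT l hl) haz
        have hy : (PushoutI.of true a * PushoutI.of false b)⁻¹ * lprod φ (⟨true,g₁'⟩ :: (T' ++ [⟨true,gk⟩])) ∈
            Subgroup.zpowers (PushoutI.of true a * PushoutI.of false b) := by
          refine IH (T'.length + 1) (by omega) _ ⟨h', L', hL', by simpa using hlen', heq⟩ ?_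
          exact Commute.mul_left ((Commute.refl _).inv_left) hcx
        have hxe : lprod φ (⟨true,g₁'⟩ :: (T' ++ [⟨true,gk⟩])) =
            (PushoutI.of true a * PushoutI.of false b) *
            ((PushoutI.of true a * PushoutI.of false b)⁻¹ * lprod φ (⟨true,g₁'⟩ :: (T' ++ [⟨true,gk⟩]))) := by group
        rw [hxe]
        exact Subgroup.mul_mem _ hccmem hy
      · by_cases hka : gk * a ∈ (φ true).range
        · have haz' : a⁻¹ * gk⁻¹ ∈ (φ true).range := by
            have h2 := inv_mem hka
            rwa [mul_inv_rev] at h2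
          obtain ⟨h', L', hL', hlen', heq⟩ := rotA φ a b hT2' hT2'ne
            (fun l hl => by simpa using hheadM l hl) haz'
          have hy : (PushoutI.of true a * PushoutI.of false b)⁻¹ * (lprod φ (⟨true,g₁'⟩ :: (T' ++ [⟨true,gk⟩])))⁻¹ ∈
              Subgroup.zpowers (PushoutI.of true a * PushoutI.of false b) := by
            refine IH (T'.length + 1) (by omega) _
              ⟨h', L', hL', by simpa using hlen', by rw [hxinv]; exact heq⟩ ?_
            exact Commute.mul_left ((Commute.refl _).inv_left) hcx.inv_left
          have hxe : (lprod φ (⟨true,g₁'⟩ :: (T' ++ [⟨true,gk⟩])))⁻¹ =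
              (PushoutI.of true a * PushoutI.of false b) *
              ((PushoutI.of true a * PushoutI.of false b)⁻¹ * (lprod φ (⟨true,g₁'⟩ :: (T' ++ [⟨true,gk⟩])))⁻¹) := by group
          refine (Subgroup.inv_mem_iff _).1 ?_
          rw [hxe]
          exact Subgroup.mul_mem _ hccmem hy
        · -- contradiction case
          have hT'ne : T' ≠ [] := by
            intro h0
            subst h0
            exact (hJ ⟨true, g₁'⟩ (by simp)) rfl
          have hE : Alt φ [(⟨true, g₁'⁻¹⟩ : (i : Bool) × G i), ⟨false, b⁻¹⟩, ⟨true, a⁻¹⟩] := by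
            refine ⟨by simp [List.Chain'], ?_⟩
            simp only [List.forall_mem_cons]
            exact ⟨notin_inv φ hg₁r, notin_inv φ hb, notin_inv φ ha, by simp⟩
          have hB2 : Alt φ [(⟨true, gk * a⟩ : (i : Bool) × G i), ⟨false, b⟩, ⟨true, gk⁻¹⟩] := by
            refine ⟨by simp [List.Chain'], ?_⟩
            simp only [List.forall_mem_cons]
            exact ⟨hka, hb, notin_inv φ hgkr, by simp⟩
          have hB34 : Alt φ (invL T' ++ [(⟨true, g₁'⁻¹⟩ : (i : Bool) × G i), ⟨false, b⁻¹⟩, ⟨true, a⁻¹⟩]) := by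
            refine Alt.append φ (hT'.inv φ) hE ?_
            intro w hw y hy
            have h1 := hJ2 w hw
            have hy' : ⟨true, g₁'⁻¹⟩ = y := by simpa using hy
            subst hy'
            exact h1
          have hB234 : Alt φ ([(⟨true, gk * a⟩ : (i : Bool) × G i), ⟨false, b⟩, ⟨true, gk⁻¹⟩] ++ (invL T' ++ [(⟨true, g₁'⁻¹⟩ : (i : Bool) × G i), ⟨false, b⁻¹⟩, ⟨true, a⁻¹⟩])) := by
            refine Alt.append φ hB2 hB34 ?_
            intro w hw y hy
            have hw' : ⟨true, gk⁻¹⟩ = w := by simpa using hw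
            subst hw'
            have h2 := head_fst_ne (f := true) T' _ hJT' (fun h0 => absurd h0 hT'ne) y hy
            exact fun hc => h2 hc.symm
          have hW : Alt φ ((⟨true,g₁'⟩ :: T') ++ ([(⟨true, gk * a⟩ : (i : Bool) × G i), ⟨false, b⟩, ⟨true, gk⁻¹⟩] ++ (invL T' ++ [(⟨true, g₁'⁻¹⟩ : (i : Bool) × G i), ⟨false, b⁻¹⟩, ⟨true, a⁻¹⟩]))) := by
            refine Alt.append φ hFront hB234 ?_
            intro w hw y hy
            have hy' : ⟨true, gk * a⟩ = y := by simpa using hy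
            subst hy'
            exact hJ w hw
          have hprodW : lprod φ ((⟨true,g₁'⟩ :: T') ++ ([(⟨true, gk * a⟩ : (i : Bool) × G i), ⟨false, b⟩, ⟨true, gk⁻¹⟩] ++ (invL T' ++ [(⟨true, g₁'⁻¹⟩ : (i : Bool) × G i), ⟨false, b⁻¹⟩, ⟨true, a⁻¹⟩]))) =
              lprod φ (⟨true,g₁'⟩ :: (T' ++ [⟨true,gk⟩])) * (PushoutI.of true a * PushoutI.of false b) *
              (lprod φ (⟨true,g₁'⟩ :: (T' ++ [⟨true,gk⟩])))⁻¹ * (PushoutI.of true a * PushoutI.of false b)⁻¹ := by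
            simp only [lprod_append, lprod_cons, lprod_nil, lval_mk, map_mul, map_inv,
              lprod_invL, mul_one]
            group
          have hW1 : lprod φ ((⟨true,g₁'⟩ :: T') ++ ([(⟨true, gk * a⟩ : (i : Bool) × G i), ⟨false, b⟩, ⟨true, gk⁻¹⟩] ++ (invL T' ++ [(⟨true, g₁'⁻¹⟩ : (i : Bool) × G i), ⟨false, b⁻¹⟩, ⟨true, a⁻¹⟩]))) = 1 := by
            rw [hprodW, hcomm]
            group
          exact ((lprod_not_mem_base φ hφ hW (by simp))
            (by rw [hW1]; exact one_mem _)).elim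


end Centralizer

end Amalg


namespace PathCent
open PathBasics PathSplit Amalg Monoid Monoid.PushoutI

/-- The reversal automorphism of `PathGroup m`. -/
def revHom (m : ℕ) : PathGroup m →* PathGroup m :=
  pathHom (fun i => pathGen m ⟨m - 1 - (i : ℕ), by omega⟩)
    (by
      intro i j hij
      refine (pathGen_comm ?_).symm
      simp only
      omega)

@[simp] lemma revHom_gen (m : ℕ) (i : Fin m) :
    revHom m (pathGen m i) = pathGen m ⟨m - 1 - (i : ℕ), by omega⟩ := by
  rw [revHom, pathHom_gen]

lemma revHom_revHom (m : ℕ) (x : PathGroup m) : revHom m (revHom m x) = x := by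
  have hcomp : (revHom m).comp (revHom m) = MonoidHom.id _ := by
    apply pathHom_ext
    intro i
    show revHom m (revHom m (pathGen m i)) = pathGen m i
    rw [revHom_gen, revHom_gen]
    have he : (⟨m - 1 - (m - 1 - (i : ℕ)), by omega⟩ : Fin m) = i := by
      apply Fin.ext
      simp only
      omega
    rw [he]
  simpa using congrFun (congrArg DFunLike.coe hcomp) x

lemma rev_incl (n : ℕ) (y : PathGroup (n+1)) :
    revHom (n+2) (incl (n+1) y) = shif (n+1) (revHom (n+1) y) := by
  have hcomp : (revHom (n+2)).comp (incl (n+1)) = (shif (n+1)).comp (revHom (n+1)) := by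
    apply pathHom_ext
    intro j
    show revHom (n+2) (incl (n+1) (pathGen (n+1) j)) = shif (n+1) (revHom (n+1) (pathGen (n+1) j))
    rw [incl_gen, revHom_gen, revHom_gen, shif_gen]
    have he : (⟨n + 2 - 1 - ((j.castSucc : Fin (n+2)) : ℕ), by omega⟩ : Fin (n+2)) =
        (⟨n + 1 - 1 - (j : ℕ), by omega⟩ : Fin (n+1)).succ := by
      apply Fin.ext
      simp only [Fin.val_succ, Fin.coe_castSucc]
      omega
    rw [he]
  simpa using congrFun (congrArg DFunLike.coe hcomp) y

/-- Key inductive fact: if `u` lies in the parabolic `⟨g_1, …⟩` and its conjugate by `g_0`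
does too, then `u` is a power of `g_1`. -/
theorem F1' : ∀ n : ℕ, ∀ u : PathGroup (n+2), u ∈ (shif (n+1)).range →
    (pathGen (n+2) 0)⁻¹ * u * pathGen (n+2) 0 ∈ (shif (n+1)).range →
    u ∈ Subgroup.zpowers (pathGen (n+2) ⟨1, by omega⟩) := by
  intro n
  induction n with
  | zero =>
    intro u hu _
    obtain ⟨y, rfl⟩ := hu
    obtain ⟨t, ht⟩ := Subgroup.mem_zpowers_iff.1 (pathGroup_one_cyclic y)
    refine Subgroup.mem_zpowers_iff.2 ⟨t, ?_⟩
    have he : ((0 : Fin 1)).succ = (⟨1, by omega⟩ : Fin 2) := by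
      apply Fin.ext
      simp
    rw [← ht, map_zpow, shif_gen, he]
  | succ n ih =>
    intro u hu hconj
    have hφ := raagφ_inj (n+1)
    have ha0 : pathGen (n+2) 0 ∉ (raagφ (n+1) true).range := by
      rw [raagφ_true]
      exact gen_zero_not_mem_shif_range (n+1)
    have hE0 : E n (pathGen (n+3) 0) = PushoutI.of true (pathGen (n+2) 0) := by
      rw [E_gen_lt n 0 (by simp)]
      have he : (⟨((0 : Fin (n+3)) : ℕ), by simp⟩ : Fin (n+2)) = 0 := by
        apply Fin.ext
        simp
      rw [he]
    have hEu : E n u ∈ (PushoutI.of (φ := raagφ (n+1)) false).range :=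
      (mem_shif_range_iff n u).1 hu
    have hEconj : (PushoutI.of true (pathGen (n+2) 0))⁻¹ * E n u *
        PushoutI.of true (pathGen (n+2) 0) ∈
        (PushoutI.of (φ := raagφ (n+1)) false).range := by
      rw [← hE0, ← map_inv, ← map_mul, ← map_mul]
      exact (mem_shif_range_iff n _).1 hconj
    obtain ⟨y, hy⟩ := hEu
    have hEu_base : ∃ w, PushoutI.base (raagφ (n+1)) w = E n u := by
      by_cases hyr : y ∈ (raagφ (n+1) false).range
      · obtain ⟨w, rfl⟩ := hyr
        exact ⟨w, by rw [← hy, PushoutI.of_apply_eq_base]⟩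
      · exfalso
        obtain ⟨y', hy'⟩ := hEconj
        have hprod3 : lprod (raagφ (n+1)) [⟨true, (pathGen (n+2) 0)⁻¹⟩, ⟨false, y⟩,
            ⟨true, pathGen (n+2) 0⟩] =
            (PushoutI.of true (pathGen (n+2) 0))⁻¹ * E n u *
            PushoutI.of true (pathGen (n+2) 0) := by
          simp only [lprod_cons, lprod_nil, lval_mk, map_inv, mul_one, hy]
          group
        by_cases hy'r : y' ∈ (raagφ (n+1) false).range
        · obtain ⟨w', hw'⟩ := hy'r
          have hAlt3 : Alt (raagφ (n+1)) [⟨true, (pathGen (n+2) 0)⁻¹⟩, ⟨false, y⟩,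
              ⟨true, pathGen (n+2) 0⟩] := by
            refine ⟨by simp [List.Chain'], ?_⟩
            simp only [List.forall_mem_cons]
            exact ⟨notin_inv _ ha0, hyr, ha0, by simp⟩
          refine lprod_not_mem_base (raagφ (n+1)) hφ hAlt3 (by simp) ?_
          exact ⟨w', by rw [hprod3, ← hy', ← hw', PushoutI.of_apply_eq_base]⟩
        · have hAlt4 : Alt (raagφ (n+1)) [⟨false, y'⁻¹⟩, ⟨true, (pathGen (n+2) 0)⁻¹⟩,
              ⟨false, y⟩, ⟨true, pathGen (n+2) 0⟩] := by
            refine ⟨by simp [List.Chain'], ?_⟩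
            simp only [List.forall_mem_cons]
            exact ⟨notin_inv _ hy'r, notin_inv _ ha0, hyr, ha0, by simp⟩
          have hW4 : lprod (raagφ (n+1)) [⟨false, y'⁻¹⟩, ⟨true, (pathGen (n+2) 0)⁻¹⟩,
              ⟨false, y⟩, ⟨true, pathGen (n+2) 0⟩] = 1 := by
            have e4 : lprod (raagφ (n+1)) [⟨false, y'⁻¹⟩, ⟨true, (pathGen (n+2) 0)⁻¹⟩,
                ⟨false, y⟩, ⟨true, pathGen (n+2) 0⟩] =
                (PushoutI.of false y')⁻¹ *
                ((PushoutI.of true (pathGen (n+2) 0))⁻¹ * E n u *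
                  PushoutI.of true (pathGen (n+2) 0)) := by
              simp only [lprod_cons, lprod_nil, lval_mk, map_inv, mul_one, hy]
              group
            rw [e4, ← hy', inv_mul_cancel]
          refine lprod_not_mem_base (raagφ (n+1)) hφ hAlt4 (by simp) ?_
          rw [hW4]
          exact one_mem _
    obtain ⟨w, hw⟩ := hEu_base
    have hconj_true : (PushoutI.of true (pathGen (n+2) 0))⁻¹ * E n u *
        PushoutI.of true (pathGen (n+2) 0) ∈
        (PushoutI.of (φ := raagφ (n+1)) true).range := by
      refine ⟨(pathGen (n+2) 0)⁻¹ * (raagφ (n+1) true w) * pathGen (n+2) 0, ?_⟩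
      rw [map_mul, map_mul, map_inv, PushoutI.of_apply_eq_base, hw]
    have hmem_base : (PushoutI.of true (pathGen (n+2) 0))⁻¹ * E n u *
        PushoutI.of true (pathGen (n+2) 0) ∈ (PushoutI.base (raagφ (n+1))).range := by
      have hinf := PushoutI.inf_of_range_eq_base_range hφ (show (true : Bool) ≠ false by simp)
      rw [← hinf]
      exact Subgroup.mem_inf.2 ⟨hconj_true, hEconj⟩
    obtain ⟨w', hw'⟩ := hmem_base
    have hA : (pathGen (n+2) 0)⁻¹ * (shif (n+1) w) * pathGen (n+2) 0 = shif (n+1) w' := by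
      have h1 : PushoutI.of (φ := raagφ (n+1)) true
          ((pathGen (n+2) 0)⁻¹ * (shif (n+1) w) * pathGen (n+2) 0) =
          PushoutI.of (φ := raagφ (n+1)) true (shif (n+1) w') := by
        rw [map_mul, map_mul, map_inv]
        rw [show shif (n+1) w = raagφ (n+1) true w from rfl,
          show shif (n+1) w' = raagφ (n+1) true w' from rfl,
          PushoutI.of_apply_eq_base, PushoutI.of_apply_eq_base, hw, hw']
      have h2 := congrArg (Einv n) h1
      rw [Einv_of_true, Einv_of_true] at h2
      exact incl_injective (n+2) h2
    have hih := ih (shif (n+1) w) ⟨w, rfl⟩ ⟨w', hA.symm⟩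
    obtain ⟨t, ht⟩ := Subgroup.mem_zpowers_iff.1 hih
    have hEgen1 : E n (pathGen (n+3) ⟨1, by omega⟩) =
        PushoutI.of true (pathGen (n+2) ⟨1, by omega⟩) := by
      rw [E_gen_lt n _ (by simp)]
    have hEu2 : E n u = E n ((pathGen (n+3) ⟨1, by omega⟩) ^ t) := by
      rw [map_zpow, hEgen1, ← map_zpow, ht]
      refine (?_ : PushoutI.of true (shif (n+1) w) = E n u).symm
      rw [show shif (n+1) w = raagφ (n+1) true w from rfl, PushoutI.of_apply_eq_base, hw]
    exact Subgroup.mem_zpowers_iff.2 ⟨t, (E_inj n hEu2).symm⟩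

/-- Mirror image of `F1'` via the reversal automorphism. -/
theorem F1'' (n : ℕ) (u : PathGroup (n+2)) (hu : u ∈ (incl (n+1)).range)
    (hconj : pathGen (n+2) (Fin.last (n+1)) * u * (pathGen (n+2) (Fin.last (n+1)))⁻¹ ∈
      (incl (n+1)).range) :
    u ∈ Subgroup.zpowers (pathGen (n+2) ⟨n, by omega⟩) := by
  have hlast : revHom (n+2) (pathGen (n+2) (Fin.last (n+1))) = pathGen (n+2) 0 := by
    rw [revHom_gen]
    congr 1
    apply Fin.ext
    simp
  have hv : revHom (n+2) u ∈ (shif (n+1)).range := by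
    obtain ⟨y, rfl⟩ := hu
    exact ⟨revHom (n+1) y, (rev_incl n y).symm⟩
  have hw : revHom (n+2) (pathGen (n+2) (Fin.last (n+1)) * u *
      (pathGen (n+2) (Fin.last (n+1)))⁻¹) =
      pathGen (n+2) 0 * revHom (n+2) u * (pathGen (n+2) 0)⁻¹ := by
    rw [map_mul, map_mul, map_inv, hlast]
  have hwrange : pathGen (n+2) 0 * revHom (n+2) u * (pathGen (n+2) 0)⁻¹ ∈
      (shif (n+1)).range := by
    rw [← hw]
    obtain ⟨y, hy⟩ := hconj
    exact ⟨revHom (n+1) y, by rw [← (rev_incl n y), hy]⟩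
  have hback : (pathGen (n+2) 0)⁻¹ * (pathGen (n+2) 0 * revHom (n+2) u *
      (pathGen (n+2) 0)⁻¹) * pathGen (n+2) 0 = revHom (n+2) u := by group
  have hzp := F1' n (pathGen (n+2) 0 * revHom (n+2) u * (pathGen (n+2) 0)⁻¹) hwrange
    (by rw [hback]; exact hv)
  obtain ⟨t, ht⟩ := Subgroup.mem_zpowers_iff.1 hzp
  have hcz : Commute (pathGen (n+2) 0) ((pathGen (n+2) ⟨1, by omega⟩) ^ t) :=
    (pathGen_comm (by simp)).zpow_right t
  have hveq : revHom (n+2) u = (pathGen (n+2) ⟨1, by omega⟩) ^ t := by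
    rw [← hback, ← ht]
    rw [mul_assoc, ← hcz.eq, ← mul_assoc]
    group
  have hueq : u = (pathGen (n+2) ⟨n, by omega⟩) ^ t := by
    have h1 := congrArg (revHom (n+2)) hveq
    rw [revHom_revHom, map_zpow, revHom_gen] at h1
    have he : (⟨n + 2 - 1 - ((⟨1, by omega⟩ : Fin (n+2)) : ℕ), by omega⟩ : Fin (n+2)) =
        ⟨n, by omega⟩ := by
      apply Fin.ext
      simp only
      omega
    rw [h1, he]
  exact Subgroup.mem_zpowers_iff.2 ⟨t, hueq.symm⟩

end PathCent

namespace PathCent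
open PathBasics PathSplit Amalg Monoid Monoid.PushoutI

lemma gen1_eq_shif_gen0 (n : ℕ) :
    pathGen (n+3) ⟨1, by omega⟩ = shif (n+2) (pathGen (n+2) 0) := by
  rw [shif_gen]
  exact congrArg (pathGen _) (by apply Fin.ext; simp)

lemma genlast_eq_incl (n : ℕ) :
    pathGen (n+3) ⟨n+1, by omega⟩ = incl (n+2) (pathGen (n+2) ⟨n+1, by omega⟩) := by
  rw [incl_gen]
  exact congrArg (pathGen _) (by apply Fin.ext; simp)

/-- No nontrivial element of the base group commutes with `cc`. -/
lemma base_commute (n : ℕ) (h : PathGroup (n+2))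
    (hcomm : PushoutI.base (raagφ (n+2)) h *
        (PushoutI.of true (pathGen (n+3) 0) *
          PushoutI.of false (pathGen (n+3) (Fin.last (n+2)))) =
      (PushoutI.of true (pathGen (n+3) 0) *
        PushoutI.of false (pathGen (n+3) (Fin.last (n+2)))) *
        PushoutI.base (raagφ (n+2)) h) : h = 1 := by
  have hφ := raagφ_inj (n+2)
  have hkey := Amalg.conj_eq (raagφ (n+2)) (pathGen (n+3) 0)
    (pathGen (n+3) (Fin.last (n+2))) (x := PushoutI.base (raagφ (n+2)) h) hcomm
  have hbase_t : PushoutI.base (raagφ (n+2)) h =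
      PushoutI.of (φ := raagφ (n+2)) true (shif (n+2) h) := by
    rw [show shif (n+2) h = raagφ (n+2) true h from rfl, PushoutI.of_apply_eq_base]
  have hbase_f : PushoutI.base (raagφ (n+2)) h =
      PushoutI.of (φ := raagφ (n+2)) false (incl (n+2) h) := by
    rw [show incl (n+2) h = raagφ (n+2) false h from rfl, PushoutI.of_apply_eq_base]
  have hLeq : (PushoutI.of true (pathGen (n+3) 0))⁻¹ * PushoutI.base (raagφ (n+2)) h *
      PushoutI.of true (pathGen (n+3) 0) =
      PushoutI.of (φ := raagφ (n+2)) true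
        ((pathGen (n+3) 0)⁻¹ * shif (n+2) h * pathGen (n+3) 0) := by
    rw [map_mul, map_mul, map_inv, ← hbase_t]
  have hReq : PushoutI.of false (pathGen (n+3) (Fin.last (n+2))) *
      PushoutI.base (raagφ (n+2)) h *
      (PushoutI.of false (pathGen (n+3) (Fin.last (n+2))))⁻¹ =
      PushoutI.of (φ := raagφ (n+2)) false
        (pathGen (n+3) (Fin.last (n+2)) * incl (n+2) h *
          (pathGen (n+3) (Fin.last (n+2)))⁻¹) := by
    rw [map_mul, map_mul, map_inv, ← hbase_f]
  have hmem : (PushoutI.of true (pathGen (n+3) 0))⁻¹ * PushoutI.base (raagφ (n+2)) h *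
      PushoutI.of true (pathGen (n+3) 0) ∈ (PushoutI.base (raagφ (n+2))).range := by
    have hinf := PushoutI.inf_of_range_eq_base_range hφ (show (true : Bool) ≠ false by simp)
    rw [← hinf]
    refine Subgroup.mem_inf.2 ⟨⟨_, hLeq.symm⟩, ?_⟩
    rw [hkey, hReq]
    exact ⟨_, rfl⟩
  obtain ⟨w, hw⟩ := hmem
  -- A side
  have hA : (pathGen (n+3) 0)⁻¹ * shif (n+2) h * pathGen (n+3) 0 = shif (n+2) w := by
    have h1 : PushoutI.of (φ := raagφ (n+2)) true
        ((pathGen (n+3) 0)⁻¹ * shif (n+2) h * pathGen (n+3) 0) =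
        PushoutI.of (φ := raagφ (n+2)) true (shif (n+2) w) := by
      rw [← hLeq, ← hw]
      rw [show shif (n+2) w = raagφ (n+2) true w from rfl, PushoutI.of_apply_eq_base]
    have h2 := congrArg (Einv (n+1)) h1
    rw [Einv_of_true, Einv_of_true] at h2
    exact incl_injective (n+3) h2
  have hAzp := F1' (n+1) (shif (n+2) h) ⟨h, rfl⟩ ⟨w, hA.symm⟩
  obtain ⟨t, ht⟩ := Subgroup.mem_zpowers_iff.1 hAzp
  rw [gen1_eq_shif_gen0 n, ← map_zpow] at ht
  have hht : h = (pathGen (n+2) 0) ^ t := (shif_injective (n+2) ht).symm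
  -- B side
  have hB : pathGen (n+3) (Fin.last (n+2)) * incl (n+2) h *
      (pathGen (n+3) (Fin.last (n+2)))⁻¹ = incl (n+2) w := by
    have h1 : PushoutI.of (φ := raagφ (n+2)) false
        (pathGen (n+3) (Fin.last (n+2)) * incl (n+2) h *
          (pathGen (n+3) (Fin.last (n+2)))⁻¹) =
        PushoutI.of (φ := raagφ (n+2)) false (incl (n+2) w) := by
      rw [← hReq, ← hkey, ← hw]
      rw [show incl (n+2) w = raagφ (n+2) false w from rfl, PushoutI.of_apply_eq_base]
    have h2 := congrArg (Einv (n+1)) h1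
    rw [Einv_of_false, Einv_of_false] at h2
    exact shif_injective (n+3) h2
  have hBzp := F1'' (n+1) (incl (n+2) h) ⟨h, rfl⟩ ⟨w, hB.symm⟩
  obtain ⟨s', hs⟩ := Subgroup.mem_zpowers_iff.1 hBzp
  rw [genlast_eq_incl n, ← map_zpow] at hs
  have hhs : h = (pathGen (n+2) ⟨n+1, by omega⟩) ^ s' := (incl_injective (n+2) hs).symm
  -- combine
  have h0eq : (pathGen (n+2) 0) = pathGen (n+2) ⟨0, by omega⟩ := by
    congr 1
  have heq2 : (pathGen (n+2) ⟨0, by omega⟩) ^ t = (pathGen (n+2) ⟨n+2-1, by omega⟩) ^ s' := by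
    rw [← h0eq, ← hht]
    have he : (⟨n+2-1, by omega⟩ : Fin (n+2)) = ⟨n+1, by omega⟩ := by
      apply Fin.ext
      simp
    rw [he, ← hhs]
  obtain ⟨ht0, -⟩ := powers_eq_zero (by omega) heq2
  rw [hht, ht0, zpow_zero]

end PathCent

/-- In `G = ⟨g_1,…,g_m ∣ [g_i,g_{i+1}]=1⟩` with `m ≥ 4`, the centralizer of `g_1 * g_m` is the
cyclic subgroup generated by `g_1 * g_m`. -/
theorem stmt5 (m : ℕ) (hm : 4 ≤ m) :
    Subgroup.centralizer {pathGen m ⟨0, by omega⟩ * pathGen m ⟨m - 1, by omega⟩} =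
      Subgroup.zpowers (pathGen m ⟨0, by omega⟩ * pathGen m ⟨m - 1, by omega⟩) := by
  open PathBasics PathSplit PathCent Amalg Monoid Monoid.PushoutI in
  obtain ⟨n, rfl⟩ : ∃ n, m = n + 4 := ⟨m - 4, by omega⟩
  have hφ := raagφ_inj (n+2)
  have ha : pathGen (n+3) 0 ∉ (raagφ (n+2) true).range := by
    rw [raagφ_true]
    exact gen_zero_not_mem_shif_range (n+2)
  have hb : pathGen (n+3) (Fin.last (n+2)) ∉ (raagφ (n+2) false).range := by
    rw [raagφ_false]
    exact gen_last_not_mem_incl_range (n+2)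
  have hEc : E (n+1) (pathGen (n+4) ⟨0, by omega⟩ * pathGen (n+4) ⟨n + 4 - 1, by omega⟩) =
      PushoutI.of true (pathGen (n+3) 0) *
        PushoutI.of false (pathGen (n+3) (Fin.last (n+2))) := by
    rw [map_mul]
    rw [E_gen_lt (n+1) _ (by simp), E_gen_last (n+1) _ (by simp)]
    have he1 : (⟨((⟨0, by omega⟩ : Fin (n+4)) : ℕ), by simp⟩ : Fin (n+3)) = 0 := by
      apply Fin.ext
      simp
    have he2 : (⟨((⟨n + 4 - 1, by omega⟩ : Fin (n+4)) : ℕ) - 1, by omega⟩ : Fin (n+3)) =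
        Fin.last (n+2) := by
      apply Fin.ext
      simp
    rw [he1, he2]
  ext x
  constructor
  · intro hx
    have hcomm : (pathGen (n+4) ⟨0, by omega⟩ * pathGen (n+4) ⟨n + 4 - 1, by omega⟩) * x =
        x * (pathGen (n+4) ⟨0, by omega⟩ * pathGen (n+4) ⟨n + 4 - 1, by omega⟩) :=
      Subgroup.mem_centralizer_iff.1 hx _ rfl
    have hcomm2 : E (n+1) x *
        (PushoutI.of true (pathGen (n+3) 0) *
          PushoutI.of false (pathGen (n+3) (Fin.last (n+2)))) =
        (PushoutI.of true (pathGen (n+3) 0) *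
          PushoutI.of false (pathGen (n+3) (Fin.last (n+2)))) * E (n+1) x := by
      rw [← hEc, ← map_mul, ← map_mul, hcomm]
    have hzp := Amalg.commute_mem_zpowers (raagφ (n+2)) hφ
      (pathGen (n+3) 0) (pathGen (n+3) (Fin.last (n+2))) ha hb
      (base_commute n) (E (n+1) x) hcomm2
    obtain ⟨t, ht⟩ := Subgroup.mem_zpowers_iff.1 hzp
    rw [← hEc, ← map_zpow] at ht
    exact Subgroup.mem_zpowers_iff.2 ⟨t, E_inj (n+1) ht⟩
  · intro hx
    obtain ⟨t, ht⟩ := Subgroup.mem_zpowers_iff.1 hx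
    rw [Subgroup.mem_centralizer_iff]
    rintro g hg
    rw [Set.mem_singleton_iff] at hg
    subst hg
    rw [← ht]
    exact ((Commute.refl _).zpow_right t).eq
end

section
/- Let V be a finite-dimensional complex vector space, let (f_k) be a sequence of linear endomorphisms of V converging to a linear endomorphism f, and let Λ ⊆ ℂ be a closed subset. For an endomorphism g, let E(g,Λ) denote the sum of the generalized eigenspaces of g for eigenvalues lying in Λ. Then dim E(f,Λ) ≥ limsup_{k→∞} dim E(f_k,Λ). -/
open Filter Polynomial Module

section helpers

variable {V : Type*} [NormedAddCommGroup V] [NormedSpace ℂ V] [FiniteDimensional ℂ V]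

lemma aux_tendsto_apply_seq {g : ℕ → V →ₗ[ℂ] V} {G : V →ₗ[ℂ] V}
    (h : ∀ x, Tendsto (fun k => g k x) atTop (nhds (G x)))
    {y : ℕ → V} {z : V} (hy : Tendsto y atTop (nhds z)) :
    Tendsto (fun k => g k (y k)) atTop (nhds (G z)) := by
  classical
  set b := Module.finBasis ℂ V with hb
  have hrepr : ∀ i, Tendsto (fun k => b.repr (y k) i) atTop (nhds (b.repr z i)) := by
    intro i
    have hc : Continuous fun v : V => b.repr v i :=
      LinearMap.continuous_of_finiteDimensional (b.coord i)
    exact (hc.tendsto z).comp hy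
  have key : ∀ (w : V) (F : V →ₗ[ℂ] V), F w = ∑ i, b.repr w i • F (b i) := by
    intro w F
    conv_lhs => rw [← b.sum_repr w]
    rw [map_sum]
    simp [map_smul]
  have h1 : Tendsto (fun k => ∑ i, b.repr (y k) i • g k (b i)) atTop
      (nhds (∑ i, b.repr z i • G (b i))) :=
    tendsto_finset_sum _ fun i _ => (hrepr i).smul (h (b i))
  convert h1 using 1
  · funext k; exact key (y k) (g k)
  · exact congrArg nhds (key z G)

lemma aux_tendsto_pow {g : ℕ → V →ₗ[ℂ] V} {G : V →ₗ[ℂ] V}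
    (h : ∀ x, Tendsto (fun k => g k x) atTop (nhds (G x))) (i : ℕ) (x : V) :
    Tendsto (fun k => (g k ^ i) x) atTop (nhds ((G ^ i) x)) := by
  induction i with
  | zero => simp only [pow_zero, Module.End.one_apply]; exact tendsto_const_nhds
  | succ n ih =>
      have hs : ∀ (F : V →ₗ[ℂ] V), (F ^ (n+1)) x = F ((F ^ n) x) := by
        intro F; rw [pow_succ']; rfl
      simp only [hs]
      exact aux_tendsto_apply_seq h ih

lemma aux_tendsto_aeval {g : ℕ → V →ₗ[ℂ] V} {G : V →ₗ[ℂ] V}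
    (h : ∀ x, Tendsto (fun k => g k x) atTop (nhds (G x)))
    {m : ℕ} {p : ℕ → ℂ[X]} {q : ℂ[X]} (hdeg : ∀ k, (p k).natDegree < m)
    (hqdeg : q.natDegree < m)
    (hcoeff : ∀ i, Tendsto (fun k => (p k).coeff i) atTop (nhds (q.coeff i))) (x : V) :
    Tendsto (fun k => Polynomial.aeval (g k) (p k) x) atTop
      (nhds (Polynomial.aeval G q x)) := by
  have hk : ∀ k, Polynomial.aeval (g k) (p k) x
      = ∑ i ∈ Finset.range m, (p k).coeff i • ((g k ^ i) x) := by
    intro k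
    rw [aeval_eq_sum_range' (hdeg k)]
    simp [LinearMap.sum_apply, LinearMap.smul_apply]
  have hq : Polynomial.aeval G q x = ∑ i ∈ Finset.range m, q.coeff i • ((G ^ i) x) := by
    rw [aeval_eq_sum_range' hqdeg]
    simp [LinearMap.sum_apply, LinearMap.smul_apply]
  simp only [hk, hq]
  exact tendsto_finset_sum _ fun i _ => (hcoeff i).smul (aux_tendsto_pow h i x)

lemma aux_rank_semicont {A : ℕ → V →ₗ[ℂ] V} {B : V →ₗ[ℂ] V}
    (h : ∀ x, Tendsto (fun k => A k x) atTop (nhds (B x))) :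
    ∀ᶠ k in atTop,
      finrank ℂ (LinearMap.range B) ≤ finrank ℂ (LinearMap.range (A k)) := by
  classical
  set r := finrank ℂ (LinearMap.range B) with hr
  set bas := Module.finBasis ℂ (LinearMap.range B)
  have hx : ∀ i : Fin r, ∃ v : V, B v = (bas i : V) := fun i => (bas i).2
  choose v hv using hx
  have hli : LinearIndependent ℂ (fun i => B (v i)) := by
    have : (fun i => B (v i)) = fun i => ((bas i : LinearMap.range B) : V) := by
      funext i; rw [hv i]
    rw [this]
    exact bas.linearIndependent.map' (LinearMap.range B).subtype
      (Submodule.ker_subtype _)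
  have htend : Tendsto (fun k => fun i : Fin r => A k (v i)) atTop
      (nhds (fun i => B (v i))) := tendsto_pi_nhds.2 fun i => h (v i)
  have hopen : IsOpen { f : Fin r → V | LinearIndependent ℂ f } :=
    isOpen_setOf_linearIndependent
  filter_upwards [htend.eventually (hopen.mem_nhds hli)] with k hk
  have hli' : LinearIndependent ℂ
      (fun i : Fin r => (⟨A k (v i), LinearMap.mem_range_self _ _⟩ :
        LinearMap.range (A k))) := by
    apply LinearIndependent.of_comp (LinearMap.range (A k)).subtype
    exact hk
  simpa using hli'.fintype_card_le_finrank

lemma aux_eigen_bound {g : ℕ → V →ₗ[ℂ] V} {G : V →ₗ[ℂ] V}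
    (h : ∀ x, Tendsto (fun k => g k x) atTop (nhds (G x))) :
    ∃ C : ℝ, 0 ≤ C ∧ ∀ (k : ℕ) (μ : ℂ) (x : V), x ≠ 0 → g k x = μ • x → ‖μ‖ ≤ C := by
  have hpt : ∀ x : V, ∃ C, ∀ k, ‖(LinearMap.toContinuousLinearMap (g k)) x‖ ≤ C := by
    intro x
    have htend : Tendsto (fun k => ‖g k x‖) atTop (nhds ‖G x‖) :=
      (continuous_norm.tendsto _).comp (h x)
    obtain ⟨C, hC⟩ := htend.bddAbove_range
    exact ⟨C, fun k => hC ⟨k, rfl⟩⟩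
  obtain ⟨C', hC'⟩ := banach_steinhaus hpt
  refine ⟨max C' 0, le_max_right _ _, ?_⟩
  intro k μ x hx hgx
  have h1 : ‖μ‖ * ‖x‖ ≤ C' * ‖x‖ := by
    have hb := (LinearMap.toContinuousLinearMap (g k)).le_opNorm x
    rw [LinearMap.coe_toContinuousLinearMap', hgx, norm_smul] at hb
    exact hb.trans (mul_le_mul_of_nonneg_right (hC' k) (norm_nonneg x))
  have hx0 : 0 < ‖x‖ := norm_pos_iff.2 hx
  exact (le_of_mul_le_mul_right h1 hx0).trans (le_max_left _ _)

end helpers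

section polyhelpers

lemma aux_coeff_bound (s : Multiset ℂ) :
    ∀ i : ℕ, ‖((s.map (fun r => X - C r)).prod).coeff i‖
      ≤ (s.map (fun r => 1 + ‖r‖)).prod := by
  induction s using Multiset.induction with
  | empty =>
      intro i
      simp only [Multiset.map_zero, Multiset.prod_zero]
      rcases Nat.eq_zero_or_pos i with h | h
      · simp [h]
      · rw [Polynomial.coeff_one, if_neg (by omega)]
        simp
  | cons a s ih =>
      have hP0 : 0 ≤ (s.map (fun r => 1 + ‖r‖)).prod := by
        apply Multiset.prod_nonneg
        intro x hx
        obtain ⟨r, -, rfl⟩ := Multiset.mem_map.1 hx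
        positivity
      intro i
      rw [Multiset.map_cons, Multiset.prod_cons, Multiset.map_cons, Multiset.prod_cons]
      set q := ((s.map (fun r => X - C r)).prod)
      have hexp : ((X - C a) * q).coeff i = (X * q).coeff i - a * q.coeff i := by
        rw [sub_mul, Polynomial.coeff_sub]
        simp [Polynomial.coeff_C_mul]
      rcases Nat.eq_zero_or_pos i with h | h
      · subst h
        rw [hexp, Polynomial.coeff_X_mul_zero, zero_sub, norm_neg, norm_mul]
        calc ‖a‖ * ‖q.coeff 0‖ ≤ ‖a‖ * (s.map (fun r => 1 + ‖r‖)).prod := by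
              apply mul_le_mul_of_nonneg_left (ih 0) (norm_nonneg a)
          _ ≤ (1 + ‖a‖) * (s.map (fun r => 1 + ‖r‖)).prod := by
              apply mul_le_mul_of_nonneg_right _ hP0
              linarith
      · obtain ⟨j, rfl⟩ := Nat.exists_eq_add_of_lt h
        rw [zero_add] at *
        rw [hexp, Polynomial.coeff_X_mul]
        calc ‖q.coeff j - a * q.coeff (j+1)‖
            ≤ ‖q.coeff j‖ + ‖a‖ * ‖q.coeff (j+1)‖ := by
              refine (norm_sub_le _ _).trans ?_
              rw [norm_mul]
          _ ≤ (s.map (fun r => 1 + ‖r‖)).prod + ‖a‖ * (s.map (fun r => 1 + ‖r‖)).prod := by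
              gcongr
              · exact ih j
              · exact ih (j+1)
          _ = (1 + ‖a‖) * (s.map (fun r => 1 + ‖r‖)).prod := by ring

lemma aux_pow_le_prod (s : Multiset ℝ) (d : ℝ) (hd : 0 ≤ d) (h : ∀ x ∈ s, d ≤ x) :
    d ^ Multiset.card s ≤ s.prod := by
  induction s using Multiset.induction with
  | empty => simp
  | cons a s ih =>
      rw [Multiset.prod_cons, Multiset.card_cons, pow_succ']
      have ha : d ≤ a := h a (Multiset.mem_cons_self a s)
      have hrest : d ^ Multiset.card s ≤ s.prod :=
        ih (fun x hx => h x (Multiset.mem_cons_of_mem hx))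
      have h1 : (0:ℝ) ≤ d ^ Multiset.card s := pow_nonneg hd _
      calc d * d ^ Multiset.card s ≤ a * d ^ Multiset.card s :=
            mul_le_mul_of_nonneg_right ha h1
        _ ≤ a * s.prod := mul_le_mul_of_nonneg_left hrest (le_trans hd ha)

lemma aux_prod_le_pow (s : Multiset ℝ) (c : ℝ) (h0 : ∀ x ∈ s, 0 ≤ x)
    (h : ∀ x ∈ s, x ≤ c) : s.prod ≤ c ^ Multiset.card s := by
  induction s using Multiset.induction with
  | empty => simp
  | cons a s ih =>
      rw [Multiset.prod_cons, Multiset.card_cons, pow_succ']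
      have ha : a ≤ c := h a (Multiset.mem_cons_self a s)
      have ha0 : 0 ≤ a := h0 a (Multiset.mem_cons_self a s)
      have hp0 : 0 ≤ s.prod :=
        Multiset.prod_nonneg (fun x hx => h0 x (Multiset.mem_cons_of_mem hx))
      have hrest : s.prod ≤ c ^ Multiset.card s :=
        ih (fun x hx => h0 x (Multiset.mem_cons_of_mem hx))
          (fun x hx => h x (Multiset.mem_cons_of_mem hx))
      calc a * s.prod ≤ c * s.prod := mul_le_mul_of_nonneg_right ha hp0
        _ ≤ c * c ^ Multiset.card s :=
            mul_le_mul_of_nonneg_left hrest (le_trans ha0 ha)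

lemma aux_norm_multiset_prod (s : Multiset ℂ) :
    ‖s.prod‖ = (s.map (fun x => ‖x‖)).prod := by
  induction s using Multiset.induction with
  | empty => simp
  | cons a s ih => simp [Multiset.prod_cons, norm_mul, ih]

lemma aux_eval_lb {p : ℂ[X]} (hm : p.Monic) {Λ : Set ℂ}
    (hroots : ∀ r ∈ p.roots, r ∈ Λ) {z : ℂ} :
    Metric.infDist z Λ ^ p.natDegree ≤ ‖p.eval z‖ := by
  have hd0 : 0 ≤ Metric.infDist z Λ := Metric.infDist_nonneg
  have hsplit := (IsAlgClosed.splits p).eq_prod_roots_of_monic hm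
  have hcard : p.roots.card = p.natDegree := splits_iff_card_roots.1 (IsAlgClosed.splits p)
  rw [← hcard]
  conv_rhs => rw [hsplit]
  rw [Polynomial.eval_multiset_prod, Multiset.map_map]
  rw [aux_norm_multiset_prod, Multiset.map_map]
  have hcard2 : Multiset.card p.roots
      = Multiset.card (p.roots.map (fun r => ‖Polynomial.eval z (X - C r)‖)) := by
    rw [Multiset.card_map]
  rw [hcard2]
  apply aux_pow_le_prod _ _ hd0
  intro x hx
  obtain ⟨r, hr, rfl⟩ := Multiset.mem_map.1 hx
  simp only [Function.comp_apply, Polynomial.eval_sub, Polynomial.eval_X, Polynomial.eval_C]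
  have hle : Metric.infDist z Λ ≤ dist z r := Metric.infDist_le_dist_of_mem (hroots r hr)
  rwa [Complex.dist_eq] at hle

end polyhelpers

section ker
variable {V : Type*} [AddCommGroup V] [Module ℂ V]

lemma aux_ker_single (F : V →ₗ[ℂ] V) (μ : ℂ) (e : ℕ) :
    LinearMap.ker (aeval F ((X - C μ) ^ e)) ≤ Module.End.maxGenEigenspace F μ := by
  intro x hx
  rw [LinearMap.mem_ker] at hx
  rw [Module.End.mem_maxGenEigenspace]
  refine ⟨e, ?_⟩
  have heq : aeval F ((X - C μ) ^ e) = (F - μ • (1 : Module.End ℂ V)) ^ e := by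
    rw [map_pow, map_sub, aeval_X, aeval_C, Module.algebraMap_end_eq_smul_id]
    rfl
  rwa [heq] at hx

lemma aux_ker_prod (F : V →ₗ[ℂ] V) (s : Finset ℂ) (e : ℂ → ℕ) :
    LinearMap.ker (aeval F (∏ μ ∈ s, (X - C μ) ^ e μ))
      ≤ ⨆ μ ∈ s, Module.End.maxGenEigenspace F μ := by
  classical
  induction s using Finset.induction with
  | empty =>
      simp only [Finset.prod_empty, map_one]
      intro x hx
      rw [LinearMap.mem_ker, Module.End.one_apply] at hx
      simp [hx]
  | @insert a s ha ih =>
      rw [Finset.prod_insert ha]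
      have hcop : IsCoprime ((X - C a) ^ e a) (∏ μ ∈ s, (X - C μ) ^ e μ) := by
        apply IsCoprime.pow_left
        apply IsCoprime.prod_right
        intro μ hμ
        exact (isCoprime_X_sub_C_of_isUnit_sub
          (sub_ne_zero.2 (fun h : a = μ => ha (h ▸ hμ))).isUnit).pow_right
      rw [← Polynomial.sup_ker_aeval_eq_ker_aeval_mul_of_coprime F hcop]
      apply sup_le
      · exact le_trans (aux_ker_single F a (e a))
          (le_iSup₂_of_le a (Finset.mem_insert_self a s) le_rfl)
      · refine le_trans ih ?_
        apply iSup₂_le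
        intro μ hμ
        exact le_iSup₂_of_le μ (Finset.mem_insert_of_mem hμ) le_rfl

lemma aux_aeval_restrict (F : V →ₗ[ℂ] V) (E' : Submodule ℂ V)
    (hmaps : ∀ x ∈ E', F x ∈ E') (p : ℂ[X]) (x : E') :
    aeval F p (x : V) = ((aeval (F.restrict hmaps) p x : E') : V) := by
  induction p using Polynomial.induction_on' with
  | add p q hp hq => simp [map_add, hp, hq]
  | monomial n a =>
      have hpow : ∀ y : E', ((F.restrict hmaps ^ n) y : V) = (F ^ n) (y : V) := by
        intro y
        rw [Module.End.pow_restrict]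
        simp [LinearMap.restrict_apply]
      simp only [aeval_monomial, Module.End.mul_apply, LinearMap.smul_apply]
      rw [Module.algebraMap_end_eq_smul_id, Module.algebraMap_end_eq_smul_id]
      simp [hpow]

end ker

lemma aux_root_eigenvector {W : Type*} [AddCommGroup W] [Module ℂ W]
    [FiniteDimensional ℂ W] (R : Module.End ℂ W) {r : ℂ}
    (hr : R.charpoly.IsRoot r) : ∃ v : W, v ≠ 0 ∧ R v = r • v := by
  classical
  set b := Module.finBasis ℂ W with hb
  set M := LinearMap.toMatrix b b R with hM
  have hch : M.charpoly = R.charpoly := LinearMap.charpoly_toMatrix R b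
  have heval : Polynomial.eval r M.charpoly = 0 := by rw [hch]; exact hr
  have hdet : LinearMap.det (r • (1 : Module.End ℂ W) - R) = 0 := by
    have h1 : Polynomial.eval r M.charpoly
        = Matrix.det ((Matrix.charmatrix M).map (Polynomial.evalRingHom r)) := by
      rw [Matrix.charpoly]
      exact RingHom.map_det (Polynomial.evalRingHom r) (Matrix.charmatrix M)
    have h2 : (Matrix.charmatrix M).map (Polynomial.evalRingHom r)
        = r • (1 : Matrix _ _ ℂ) - M := by
      ext i j
      rw [Matrix.map_apply, Matrix.charmatrix_apply]
      simp only [coe_evalRingHom, eval_sub, eval_C, Matrix.sub_apply, Matrix.smul_apply,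
        Matrix.one_apply, smul_eq_mul]
      by_cases h : i = j <;>
        simp [h, Matrix.diagonal_apply_eq, Matrix.diagonal_apply_ne]
    have h3 : LinearMap.toMatrix b b (r • (1 : Module.End ℂ W) - R)
        = r • (1 : Matrix _ _ ℂ) - M := by
      rw [map_sub, LinearEquiv.map_smul, LinearMap.toMatrix_one]
    rw [h1, h2, ← h3, LinearMap.det_toMatrix] at heval
    exact heval
  have hker := LinearMap.bot_lt_ker_of_det_eq_zero hdet
  obtain ⟨v, hv, hvne⟩ := (Submodule.ne_bot_iff _).1 (bot_lt_iff_ne_bot.1 hker)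
  refine ⟨v, hvne, ?_⟩
  rw [LinearMap.mem_ker, LinearMap.sub_apply, LinearMap.smul_apply, Module.End.one_apply,
    sub_eq_zero] at hv
  exact hv.symm

/-- Upper semicontinuity of generalized-eigenspace multiplicity: if endomorphisms `f k` of a
finite-dimensional complex vector space converge to `f`, and `Λ ⊆ ℂ` is closed, then
`dim E(f,Λ) ≥ limsup_k dim E(f k, Λ)`, where `E(g,Λ)` is the sum of the generalized
eigenspaces of `g` for eigenvalues in `Λ`. -/
theorem stmt9 (V : Type*) [NormedAddCommGroup V] [NormedSpace ℂ V] [FiniteDimensional ℂ V]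
    (f : ℕ → V →ₗ[ℂ] V) (flim : V →ₗ[ℂ] V)
    (hconv : ∀ x : V, Tendsto (fun k => f k x) atTop (nhds (flim x)))
    (Λ : Set ℂ) (hΛ : IsClosed Λ) :
    Filter.limsup
        (fun k => Module.finrank ℂ
          (⨆ μ ∈ Λ, Module.End.maxGenEigenspace (f k) μ : Submodule ℂ V)) atTop
      ≤ Module.finrank ℂ (⨆ μ ∈ Λ, Module.End.maxGenEigenspace flim μ : Submodule ℂ V) := by
  classical
  set n := Module.finrank ℂ V with hn
  set d : ℕ → ℕ := fun k => Module.finrank ℂ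
    (⨆ μ ∈ Λ, Module.End.maxGenEigenspace (f k) μ : Submodule ℂ V) with hd
  set m := limsup d atTop with hm
  have hdle : ∀ k, d k ≤ n := fun k => Submodule.finrank_le _
  have hmem : ∀ᶠ k in atTop, d k ≤ m := by
    have hmm : m ∈ {a : ℕ | ∀ᶠ k in atTop, d k ≤ a} := by
      rw [hm, limsup_eq]
      exact Nat.sInf_mem ⟨n, Eventually.of_forall hdle⟩
    exact hmm
  have hfreq : ∃ᶠ k in atTop, d k = m := by
    have h2 : ∃ᶠ k in atTop, m ≤ d k := by
      by_contra hc
      rw [not_frequently] at hc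
      simp only [not_le] at hc
      obtain ⟨k0, hk0⟩ := hc.exists
      have hev : ∀ᶠ k in atTop, d k ≤ m - 1 := hc.mono fun k hk => by omega
      have hle : m ≤ m - 1 := by
        conv_lhs => rw [hm, limsup_eq]
        exact Nat.sInf_le hev
      omega
    exact (h2.and_eventually hmem).mono fun k hk => le_antisymm hk.2 hk.1
  rcases Nat.eq_zero_or_pos m with h0 | hmpos
  · rw [h0]; exact Nat.zero_le _
  obtain ⟨φ, hφ, hdφ⟩ := extraction_of_frequently_atTop hfreq
  have hconv1 : ∀ x, Tendsto (fun j => f (φ j) x) atTop (nhds (flim x)) :=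
    fun x => (hconv x).comp hφ.tendsto_atTop
  obtain ⟨Cb, hCb0, hCb⟩ := aux_eigen_bound hconv1
  set E : ℕ → Submodule ℂ V := fun j =>
    ⨆ μ ∈ Λ, Module.End.maxGenEigenspace (f (φ j)) μ with hE
  have hErank : ∀ j, Module.finrank ℂ (E j) = m := fun j => hdφ j
  have hmapsto : ∀ j, ∀ x ∈ E j, f (φ j) x ∈ E j := by
    intro j
    have hmap : Submodule.map (f (φ j)) (E j) ≤ E j := by
      rw [hE]
      simp only [Submodule.map_iSup]
      apply iSup_mono
      intro μ
      apply iSup_mono'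
      intro hμ
      refine ⟨hμ, ?_⟩
      rw [Submodule.map_le_iff_le_comap]
      intro x hx
      exact Submodule.mem_comap.2
        (Module.End.mapsTo_maxGenEigenspace_of_comm (Commute.refl _) μ hx)
    intro x hx
    exact hmap ⟨x, hx, rfl⟩
  set p : ℕ → ℂ[X] := fun j =>
    LinearMap.charpoly ((f (φ j)).restrict (hmapsto j)) with hp
  have hpmonic : ∀ j, (p j).Monic := fun j => LinearMap.charpoly_monic _
  have hpdeg : ∀ j, (p j).natDegree = m := by
    intro j
    rw [hp]
    rw [LinearMap.charpoly_natDegree]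
    exact hErank j
  have hroots : ∀ j, ∀ r ∈ (p j).roots, r ∈ Λ ∧ ‖r‖ ≤ Cb := by
    intro j r hr
    have hisroot : (p j).IsRoot r := isRoot_of_mem_roots hr
    obtain ⟨v, hvne0, hv1⟩ :=
      aux_root_eigenvector ((f (φ j)).restrict (hmapsto j)) hisroot
    have hvV : f (φ j) (v : V) = r • (v : V) := by
      have hcoe := congrArg (Subtype.val) hv1
      simpa [LinearMap.restrict_apply] using hcoe
    have hvne : (v : V) ≠ 0 := fun hc => hvne0 (Subtype.ext hc)
    constructor
    · by_contra hrΛ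
      have hmem1 : (v : V) ∈ Module.End.maxGenEigenspace (f (φ j)) r := by
        rw [Module.End.mem_maxGenEigenspace]
        refine ⟨1, ?_⟩
        simp [pow_one, LinearMap.sub_apply, hvV, LinearMap.smul_apply]
      have hmem2 : (v : V) ∈ ⨆ ν ≠ r, Module.End.maxGenEigenspace (f (φ j)) ν := by
        have hle : E j ≤ ⨆ ν ≠ r, Module.End.maxGenEigenspace (f (φ j)) ν := by
          apply iSup₂_le
          intro ν hν
          exact le_iSup₂_of_le ν (fun hh : ν = r => hrΛ (hh ▸ hν)) le_rfl
        exact hle v.2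
      have hdisj := (Module.End.independent_maxGenEigenspace (f (φ j))) r
      have hbot : (v : V) = 0 :=
        (Submodule.disjoint_def.1 hdisj) (v : V) hmem1 hmem2
      exact hvne hbot
    · exact hCb j r (v : V) hvne hvV
  have hΛne : Λ.Nonempty := by
    have hdpos : 0 < (p 0).degree := by
      rw [← Polynomial.natDegree_pos_iff_degree_pos, hpdeg]
      omega
    obtain ⟨r, hr⟩ := IsAlgClosed.exists_root (p 0) (ne_of_gt hdpos)
    exact ⟨r, (hroots 0 r (Polynomial.mem_roots'.2 ⟨(hpmonic 0).ne_zero, hr⟩)).1⟩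
  have hcoeffb : ∀ j i, ‖(p j).coeff i‖ ≤ (1 + Cb) ^ m := by
    intro j i
    have hsplit := (IsAlgClosed.splits (p j)).eq_prod_roots_of_monic (hpmonic j)
    have h1 : ‖(p j).coeff i‖ ≤ ((p j).roots.map (fun r => 1 + ‖r‖)).prod := by
      conv_lhs => rw [hsplit]
      exact aux_coeff_bound _ i
    refine h1.trans ?_
    have hcard : Multiset.card ((p j).roots.map (fun r => 1 + ‖r‖)) = m := by
      rw [Multiset.card_map, splits_iff_card_roots.1 (IsAlgClosed.splits (p j)), hpdeg]
    rw [← hcard]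
    apply aux_prod_le_pow
    · intro x hx
      obtain ⟨r, hr, rfl⟩ := Multiset.mem_map.1 hx
      positivity
    · intro x hx
      obtain ⟨r, hr, rfl⟩ := Multiset.mem_map.1 hx
      have := (hroots j r hr).2
      linarith
  set c : ℕ → (Fin (m+1) → ℂ) := fun j i => (p j).coeff i with hcdef
  have hcball : ∀ j, c j ∈ Metric.closedBall (0 : Fin (m+1) → ℂ) ((1 + Cb) ^ m) := by
    intro j
    rw [Metric.mem_closedBall, dist_zero_right]
    refine (pi_norm_le_iff_of_nonneg (by positivity)).2 ?_
    intro i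
    exact hcoeffb j i
  obtain ⟨clim, -, ψ, hψ, hcl⟩ :=
    tendsto_subseq_of_bounded Metric.isBounded_closedBall hcball
  have hcoord : ∀ i : Fin (m+1),
      Tendsto (fun j => (p (ψ j)).coeff i) atTop (nhds (clim i)) :=
    fun i => (tendsto_pi_nhds.1 hcl) i
  have hlast : clim ⟨m, Nat.lt_succ_self m⟩ = 1 := by
    have hconst : (fun j => (p (ψ j)).coeff ((⟨m, Nat.lt_succ_self m⟩ : Fin (m+1)) : ℕ))
        = fun _ => (1 : ℂ) := by
      funext j
      have hcn := (hpmonic (ψ j)).coeff_natDegree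
      rw [hpdeg] at hcn
      exact hcn
    have ht := hcoord ⟨m, Nat.lt_succ_self m⟩
    rw [hconst] at ht
    exact (tendsto_nhds_unique ht tendsto_const_nhds)
  set cl : ℕ → ℂ := fun i => if h : i < m + 1 then clim ⟨i, h⟩ else 0 with hcl2
  set q : ℂ[X] := ∑ i ∈ Finset.range (m+1), C (cl i) * X ^ i with hq
  have hqcoeff : ∀ i, q.coeff i = cl i := by
    intro i
    rw [hq, finset_sum_coeff]
    simp only [coeff_C_mul, coeff_X_pow, mul_ite, mul_one, mul_zero]
    rw [Finset.sum_ite_eq (Finset.range (m+1)) i (fun j => cl j)]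
    by_cases h : i < m + 1
    · rw [if_pos (Finset.mem_range.2 h)]
    · rw [if_neg (fun hc => h (Finset.mem_range.1 hc))]
      rw [hcl2]
      simp [h]
  have hqdeg : q.natDegree ≤ m := by
    rw [hq]
    apply Polynomial.natDegree_sum_le_of_forall_le
    intro i hi
    refine (Polynomial.natDegree_C_mul_le _ _).trans ?_
    rw [Polynomial.natDegree_X_pow]
    exact Nat.lt_succ_iff.1 (Finset.mem_range.1 hi)
  have hqm : q.Monic := by
    apply Polynomial.monic_of_natDegree_le_of_coeff_eq_one m hqdeg
    rw [hqcoeff, hcl2]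
    simp only [Nat.lt_succ_self m, dif_pos]
    exact hlast
  have hcl' : ∀ i : ℕ, Tendsto (fun j => (p (ψ j)).coeff i) atTop (nhds (q.coeff i)) := by
    intro i
    by_cases h : i < m + 1
    · rw [hqcoeff, hcl2]
      simp only [dif_pos h]
      exact hcoord ⟨i, h⟩
    · have hz : (fun j => (p (ψ j)).coeff i) = fun _ => (0 : ℂ) := by
        funext j
        exact Polynomial.coeff_eq_zero_of_natDegree_lt (by rw [hpdeg]; omega)
      rw [hqcoeff, hcl2, hz]
      simp only [dif_neg h]
      exact tendsto_const_nhds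
  have hqroots : ∀ z ∈ q.roots, z ∈ Λ := by
    intro z hz
    by_contra hzΛ
    have hδ : 0 < Metric.infDist z Λ := (hΛ.notMem_iff_infDist_pos hΛne).1 hzΛ
    have hlb : ∀ j, Metric.infDist z Λ ^ m ≤ ‖(p (ψ j)).eval z‖ := by
      intro j
      have hb := aux_eval_lb (hpmonic (ψ j)) (fun r hr => (hroots (ψ j) r hr).1) (z := z)
      rwa [hpdeg] at hb
    have hev : Tendsto (fun j => (p (ψ j)).eval z) atTop (nhds (q.eval z)) := by
      have hj : ∀ j, (p (ψ j)).eval z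
          = ∑ i ∈ Finset.range (m+1), (p (ψ j)).coeff i * z ^ i :=
        fun j => Polynomial.eval_eq_sum_range' (by rw [hpdeg]; omega) z
      have hqe : q.eval z = ∑ i ∈ Finset.range (m+1), q.coeff i * z ^ i :=
        Polynomial.eval_eq_sum_range' (Nat.lt_succ_of_le hqdeg) z
      simp only [hj, hqe]
      exact tendsto_finset_sum _ fun i _ => (hcl' i).mul tendsto_const_nhds
    have hq0 : q.eval z = 0 := (Polynomial.mem_roots'.1 hz).2
    have hge : Metric.infDist z Λ ^ m ≤ ‖q.eval z‖ :=
      ge_of_tendsto ((continuous_norm.tendsto _).comp hev) (Eventually.of_forall hlb)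
    rw [hq0, norm_zero] at hge
    exact absurd hge (not_le.2 (pow_pos hδ m))
  have hconv2 : ∀ x, Tendsto (fun j => f (φ (ψ j)) x) atTop (nhds (flim x)) :=
    fun x => (hconv1 x).comp hψ.tendsto_atTop
  set A : ℕ → V →ₗ[ℂ] V := fun j => aeval (f (φ (ψ j))) (p (ψ j)) with hA
  set B : V →ₗ[ℂ] V := aeval flim q with hB
  have hAconv : ∀ x, Tendsto (fun j => A j x) atTop (nhds (B x)) := by
    intro x
    exact aux_tendsto_aeval hconv2 (m := m + 1) (p := fun j => p (ψ j))
      (fun j => by rw [hpdeg]; omega) (Nat.lt_succ_of_le hqdeg) hcl' x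
  have hkerA : ∀ j, m ≤ Module.finrank ℂ (LinearMap.ker (A j)) := by
    intro j
    have hEker : E (ψ j) ≤ LinearMap.ker (A j) := by
      intro x hx
      rw [LinearMap.mem_ker]
      have hres := aux_aeval_restrict (f (φ (ψ j))) (E (ψ j)) (hmapsto (ψ j))
        (p (ψ j)) ⟨x, hx⟩
      rw [hA]
      simp only
      rw [hres, hp]
      rw [LinearMap.aeval_self_charpoly]
      simp
    calc m = Module.finrank ℂ (E (ψ j)) := (hErank (ψ j)).symm
      _ ≤ _ := Submodule.finrank_mono hEker
  obtain ⟨j0, hj0⟩ := (aux_rank_semicont hAconv).exists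
  have e1 := LinearMap.finrank_range_add_finrank_ker (A j0)
  have e2 := LinearMap.finrank_range_add_finrank_ker B
  have hkerB : m ≤ Module.finrank ℂ (LinearMap.ker B) := by
    have h1 := hkerA j0
    omega
  have hfinal : LinearMap.ker B ≤ ⨆ μ ∈ Λ, Module.End.maxGenEigenspace flim μ := by
    have hsplit := (IsAlgClosed.splits q).eq_prod_roots_of_monic hqm
    have hprod : q = ∏ μ ∈ q.roots.toFinset, (X - C μ) ^ (q.roots.count μ) := by
      conv_lhs => rw [hsplit]
      rw [Finset.prod_multiset_map_count]
    calc LinearMap.ker B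
        = LinearMap.ker (aeval flim
            (∏ μ ∈ q.roots.toFinset, (X - C μ) ^ (q.roots.count μ))) := by
          rw [hB, ← hprod]
      _ ≤ ⨆ μ ∈ q.roots.toFinset, Module.End.maxGenEigenspace flim μ :=
          aux_ker_prod flim _ _
      _ ≤ ⨆ μ ∈ Λ, Module.End.maxGenEigenspace flim μ := by
          apply iSup₂_le
          intro μ hμ
          exact le_iSup₂_of_le μ (hqroots μ (Multiset.mem_toFinset.1 hμ)) le_rfl
  calc m ≤ Module.finrank ℂ (LinearMap.ker B) := hkerB
    _ ≤ _ := Submodule.finrank_mono hfinal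
end

section
/- Let l ≥ 2 and let Δ ∈ ℤ[x,x⁻¹,y,y⁻¹] be a Laurent polynomial of the form Δ = ε·y^a + f_1(y)·x + f_2(y)·x² + ⋯ + f_{l−2}(y)·x^{l−2} + x^{l−1}, where ε ∈ {1,−1}, a ∈ ℤ, and f_i ∈ ℤ[y,y⁻¹]. Suppose moreover there exist ε' ∈ {1,−1}, δ ∈ {1,−1}, b, c, d ∈ ℤ, and g_i ∈ ℤ[x,x⁻¹] such that δ·x^c·y^d·Δ = ε'·x^b + g_1(x)·y + ⋯ + g_{l−2}(x)·y^{l−2} + y^{l−1}. Then the Laurent polynomial (x−1)(y−1)Δ has strictly more than 4 nonzero monomials. -/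
noncomputable section

/-- The ring `ℤ[x,x⁻¹,y,y⁻¹]` of Laurent polynomials in two variables, as the monoid algebra
of `ℤ × ℤ` over `ℤ`.  The monomial `x^c · y^d` is `single (c, d) 1`. -/
abbrev Laurent2 := AddMonoidAlgebra ℤ (ℤ × ℤ)

/-- The monomial `r · x^c · y^d` in `ℤ[x,x⁻¹,y,y⁻¹]`. -/
def mono (c d r : ℤ) : Laurent2 := AddMonoidAlgebra.single (c, d) r

/-- Multiplying by a monomial shifts coefficients. -/
lemma mono_mul_apply (x y r u v : ℤ) (W : Laurent2) :
    (mono x y r * W).coeff (u, v) = r * W.coeff (u - x, v - y) := by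
  have h : (-(x, y) + (u, v) : ℤ × ℤ) = (u - x, v - y) := by
    simp [Prod.ext_iff]; constructor <;> ring
  rw [mono, AddMonoidAlgebra.coeff_single_mul_apply, h]

/-- The middle sum in the `x`-form vanishes at extreme `x`-exponents. -/
lemma midsum_x (l : ℕ) (hl : 2 ≤ l) (H : ℕ → Laurent2)
    (hH : ∀ i, ∀ p ∈ (H i).coeff.support, p.1 = 0) (u v : ℤ)
    (hp : u ≤ 0 ∨ (l : ℤ) - 1 ≤ u) :
    (∑ i ∈ Finset.Icc 1 (l - 2), H i * mono (i : ℤ) 0 1).coeff (u, v) = 0 := by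
  rw [AddMonoidAlgebra.coeff_sum, Finsupp.finset_sum_apply]
  apply Finset.sum_eq_zero
  intro i hi
  simp only [Finset.mem_Icc] at hi
  rw [mono, AddMonoidAlgebra.coeff_mul_single_apply, mul_one]
  by_contra hne
  have h0 := hH i _ (Finsupp.mem_support_iff.2 hne)
  simp [Prod.ext_iff] at h0
  omega

/-- The middle sum in the `y`-form vanishes at extreme `y`-exponents. -/
lemma midsum_y (l : ℕ) (hl : 2 ≤ l) (H : ℕ → Laurent2)
    (hH : ∀ i, ∀ p ∈ (H i).coeff.support, p.2 = 0) (u v : ℤ)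
    (hp : v ≤ 0 ∨ (l : ℤ) - 1 ≤ v) :
    (∑ i ∈ Finset.Icc 1 (l - 2), H i * mono 0 (i : ℤ) 1).coeff (u, v) = 0 := by
  rw [AddMonoidAlgebra.coeff_sum, Finsupp.finset_sum_apply]
  apply Finset.sum_eq_zero
  intro i hi
  simp only [Finset.mem_Icc] at hi
  rw [mono, AddMonoidAlgebra.coeff_mul_single_apply, mul_one]
  by_contra hne
  have h0 := hH i _ (Finsupp.mem_support_iff.2 hne)
  simp [Prod.ext_iff] at h0
  omega

/-- Coefficients of `(x-1)(y-1)·W`. -/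
lemma expand_apply (W : Laurent2) (u v : ℤ) :
    ((mono 1 0 1 - 1) * (mono 0 1 1 - 1) * W).coeff (u, v)
      = W.coeff (u - 1, v - 1) - W.coeff (u - 1, v) - W.coeff (u, v - 1) + W.coeff (u, v) := by
  have h11 : mono 1 0 1 * mono 0 1 1 = mono 1 1 1 := by
    simp [mono, AddMonoidAlgebra.single_mul_single]
  have hE : (mono 1 0 1 - 1) * (mono 0 1 1 - 1) * W
      = mono 1 1 1 * W - mono 1 0 1 * W - mono 0 1 1 * W + W := by
    rw [← h11]; ring
  rw [hE, AddMonoidAlgebra.coeff_add, AddMonoidAlgebra.coeff_sub, AddMonoidAlgebra.coeff_sub, Finsupp.add_apply, Finsupp.sub_apply, Finsupp.sub_apply,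
    mono_mul_apply, mono_mul_apply, mono_mul_apply]
  norm_num

/-- If `Δ ∈ ℤ[x,x⁻¹,y,y⁻¹]` has the form
`Δ = ε·y^a + f_1(y)·x + ⋯ + f_{l-2}(y)·x^{l-2} + x^{l-1}` with `ε = ±1`, and some unit
monomial multiple `δ·x^c·y^d·Δ` has the symmetric form
`ε'·x^b + g_1(x)·y + ⋯ + g_{l-2}(x)·y^{l-2} + y^{l-1}` with `ε' = ±1`, where `l ≥ 2`,
then `(x-1)(y-1)Δ` has strictly more than 4 nonzero monomials. -/
theorem stmt14 (l : ℕ) (hl : 2 ≤ l) (ε ε' δ : ℤ)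
    (hε : ε = 1 ∨ ε = -1) (hε' : ε' = 1 ∨ ε' = -1) (hδ : δ = 1 ∨ δ = -1)
    (a b c d : ℤ) (F G : ℕ → Laurent2)
    (hF : ∀ (i : ℕ), ∀ p ∈ (F i).coeff.support, p.1 = 0)
    (hG : ∀ (i : ℕ), ∀ p ∈ (G i).coeff.support, p.2 = 0)
    (Δ : Laurent2)
    (hΔ : Δ = mono 0 a ε + (∑ i ∈ Finset.Icc 1 (l - 2), F i * mono (i : ℤ) 0 1) +
      mono ((l : ℤ) - 1) 0 1)
    (hΔ' : mono c d δ * Δ = mono b 0 ε' +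
      (∑ i ∈ Finset.Icc 1 (l - 2), G i * mono 0 (i : ℤ) 1) + mono 0 ((l : ℤ) - 1) 1) :
    4 < (((mono 1 0 1 - 1) * (mono 0 1 1 - 1) * Δ).coeff.support).card := by
  set P : Laurent2 := (mono 1 0 1 - 1) * (mono 0 1 1 - 1) * Δ with hP
  -- values of Δ at extreme x-exponents
  have hΔval : ∀ u v : ℤ, (u ≤ 0 ∨ (l : ℤ) - 1 ≤ u) →
      Δ.coeff (u, v) = (if ((0 : ℤ), a) = (u, v) then ε else 0)
        + (if (((l : ℤ) - 1 : ℤ), (0 : ℤ)) = (u, v) then 1 else 0) := by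
    intro u v hu
    rw [hΔ, AddMonoidAlgebra.coeff_add, AddMonoidAlgebra.coeff_add, Finsupp.add_apply, Finsupp.add_apply, midsum_x l hl F hF u v hu, add_zero,
      mono, mono, AddMonoidAlgebra.coeff_single, AddMonoidAlgebra.coeff_single, Finsupp.single_apply, Finsupp.single_apply]
  have hΔzero : ∀ u v : ℤ, (u ≤ 0 ∨ (l : ℤ) - 1 ≤ u) →
      ¬(u = 0 ∧ v = a) → ¬(u = (l : ℤ) - 1 ∧ v = 0) → Δ.coeff (u, v) = 0 := by
    intro u v hu h1 h2
    rw [hΔval u v hu, if_neg, if_neg, add_zero]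
    · simp [Prod.ext_iff]; tauto
    · simp [Prod.ext_iff]; tauto
  have hΔa : Δ.coeff ((0 : ℤ), a) = ε := by
    rw [hΔval 0 a (Or.inl le_rfl), if_pos rfl, if_neg, add_zero]
    simp [Prod.ext_iff]; omega
  have hΔl : Δ.coeff (((l : ℤ) - 1 : ℤ), (0 : ℤ)) = 1 := by
    rw [hΔval _ _ (Or.inr le_rfl), if_pos rfl, if_neg, zero_add]
    simp [Prod.ext_iff]; omega
  -- the four corner coefficients of P
  have hP1 : P.coeff ((0 : ℤ), a) = ε := by
    rw [hP, expand_apply, hΔa,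
      hΔzero (0 - 1) (a - 1) (by omega) (by omega) (by omega),
      hΔzero (0 - 1) a (by omega) (by omega) (by omega),
      hΔzero 0 (a - 1) (by omega) (by omega) (by omega)]
    ring
  have hP2 : P.coeff ((0 : ℤ), a + 1) = -ε := by
    rw [hP, expand_apply]
    have e1 : ((0 : ℤ) - 1, a + 1 - 1) = ((0 : ℤ) - 1, a) := by norm_num
    rw [e1, hΔzero (0 - 1) a (by omega) (by omega) (by omega),
      hΔzero (0 - 1) (a + 1) (by omega) (by omega) (by omega)]
    have e2 : ((0 : ℤ), a + 1 - 1) = ((0 : ℤ), a) := by norm_num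
    rw [e2, hΔa, hΔzero 0 (a + 1) (by omega) (by omega) (by omega)]
    ring
  have hP3 : P.coeff (((l : ℤ)), (1 : ℤ)) = 1 := by
    rw [hP, expand_apply]
    have e1 : ((l : ℤ) - 1, (1 : ℤ) - 1) = (((l : ℤ) - 1 : ℤ), (0 : ℤ)) := by norm_num
    rw [e1, hΔl,
      hΔzero ((l : ℤ) - 1) 1 (by omega) (by omega) (by omega),
      hΔzero (l : ℤ) (1 - 1) (by omega) (by omega) (by omega),
      hΔzero (l : ℤ) 1 (by omega) (by omega) (by omega)]
    ring
  have hP4 : P.coeff (((l : ℤ)), (0 : ℤ)) = -1 := by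
    rw [hP, expand_apply]
    have e1 : ((l : ℤ) - 1, (0 : ℤ)) = (((l : ℤ) - 1 : ℤ), (0 : ℤ)) := rfl
    rw [hΔzero ((l : ℤ) - 1) (0 - 1) (by omega) (by omega) (by omega), e1, hΔl,
      hΔzero (l : ℤ) (0 - 1) (by omega) (by omega) (by omega),
      hΔzero (l : ℤ) 0 (by omega) (by omega) (by omega)]
    ring
  -- the shifted polynomial and its coefficients at extreme y-exponents
  set Δ' : Laurent2 := mono c d δ * Δ with hΔ'def
  have hΔ'zero : ∀ u v : ℤ, (l : ℤ) - 1 ≤ v → ¬(u = 0 ∧ v = (l : ℤ) - 1) → Δ'.coeff (u, v) = 0 := by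
    intro u v hv huv
    rw [hΔ', AddMonoidAlgebra.coeff_add, AddMonoidAlgebra.coeff_add, Finsupp.add_apply, Finsupp.add_apply, midsum_y l hl G hG u v (Or.inr hv), add_zero,
      mono, mono, AddMonoidAlgebra.coeff_single, AddMonoidAlgebra.coeff_single, Finsupp.single_apply, Finsupp.single_apply, if_neg, if_neg]
    · ring
    · simp [Prod.ext_iff]; omega
    · simp [Prod.ext_iff]; omega
  have hΔ'l : Δ'.coeff ((0 : ℤ), ((l : ℤ) - 1 : ℤ)) = 1 := by
    rw [hΔ', AddMonoidAlgebra.coeff_add, AddMonoidAlgebra.coeff_add, Finsupp.add_apply, Finsupp.add_apply,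
      midsum_y l hl G hG 0 ((l : ℤ) - 1) (Or.inr le_rfl), add_zero,
      mono, mono, AddMonoidAlgebra.coeff_single, AddMonoidAlgebra.coeff_single, Finsupp.single_apply, Finsupp.single_apply, if_neg, if_pos rfl]
    · ring
    · simp [Prod.ext_iff]; omega
  -- Q = monomial multiple of P
  have hQ : mono c d δ * P = (mono 1 0 1 - 1) * (mono 0 1 1 - 1) * Δ' := by
    rw [hP, hΔ'def]; ring
  have hQ1 : (mono c d δ * P).coeff ((1 : ℤ), (l : ℤ)) = 1 := by
    rw [hQ, expand_apply]
    have e1 : ((1 : ℤ) - 1, (l : ℤ) - 1) = ((0 : ℤ), ((l : ℤ) - 1 : ℤ)) := by norm_num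
    rw [e1, hΔ'l,
      hΔ'zero (1 - 1) (l : ℤ) (by omega) (by omega),
      hΔ'zero 1 ((l : ℤ) - 1) (by omega) (by omega),
      hΔ'zero 1 (l : ℤ) (by omega) (by omega)]
    ring
  have hQ2 : (mono c d δ * P).coeff ((0 : ℤ), (l : ℤ)) = -1 := by
    rw [hQ, expand_apply]
    have e1 : ((0 : ℤ), (l : ℤ) - 1) = ((0 : ℤ), ((l : ℤ) - 1 : ℤ)) := rfl
    rw [hΔ'zero (0 - 1) ((l : ℤ) - 1) (by omega) (by omega),
      hΔ'zero (0 - 1) (l : ℤ) (by omega) (by omega), e1, hΔ'l,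
      hΔ'zero 0 (l : ℤ) (by omega) (by omega)]
    ring
  have hQP1 : δ * P.coeff ((1 : ℤ) - c, (l : ℤ) - d) = 1 := by
    rw [← mono_mul_apply c d δ 1 (l : ℤ) P, hQ1]
  have hQP2 : δ * P.coeff ((0 : ℤ) - c, (l : ℤ) - d) = -1 := by
    rw [← mono_mul_apply c d δ 0 (l : ℤ) P, hQ2]
  have hs1 : ((1 : ℤ) - c, (l : ℤ) - d) ∈ P.coeff.support := by
    rw [Finsupp.mem_support_iff]
    intro h0; rw [h0, mul_zero] at hQP1; omega
  have hs2 : ((0 : ℤ) - c, (l : ℤ) - d) ∈ P.coeff.support := by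
    rw [Finsupp.mem_support_iff]
    intro h0; rw [h0, mul_zero] at hQP2; omega
  -- the combinatorial argument
  by_contra hcon
  push_neg at hcon
  set S : Finset (ℤ × ℤ) :=
    {((0 : ℤ), a), ((0 : ℤ), a + 1), (((l : ℤ)), (0 : ℤ)), (((l : ℤ)), (1 : ℤ))} with hS
  have hεne : ε ≠ 0 := by rcases hε with h | h <;> omega
  have hsub : S ⊆ P.coeff.support := by
    intro p hp
    rw [Finsupp.mem_support_iff]
    simp only [hS, Finset.mem_insert, Finset.mem_singleton] at hp
    rcases hp with rfl | rfl | rfl | rfl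
    · rw [hP1]; exact hεne
    · rw [hP2]; simpa using hεne
    · rw [hP4]; omega
    · rw [hP3]; omega
  have hScard : S.card = 4 := by
    rw [hS]
    rw [Finset.card_insert_of_notMem (by intro h; simp [Prod.ext_iff] at h <;> omega),
      Finset.card_insert_of_notMem (by intro h; simp [Prod.ext_iff] at h <;> omega),
      Finset.card_insert_of_notMem (by intro h; simp [Prod.ext_iff] at h <;> omega),
      Finset.card_singleton]
  have heq : S = P.coeff.support :=
    Finset.eq_of_subset_of_card_le hsub (by omega)
  rw [← heq] at hs1 hs2
  simp only [hS, Finset.mem_insert, Finset.mem_singleton, Prod.ext_iff] at hs1 hs2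
  omega

end
end
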